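/- arXiv:1405.2214 — 10 statements merged into one kernel-verified Lean document; each statement's English description precedes it below -/
import Mathlib

section
/- Let Φ be a positive trace-preserving linear map on n×n complex matrices, and let P be an orthogonal projection on ℂⁿ. Then Φ(P·M·P) ⊆ P·M·P (i.e. Φ maps matrices supported in the range of P to matrices supported in the range of P) if and only if P ≤ Φ*(P), where Φ* is the adjoint of Φ with respect to the trace inner product. -/
open Matrix
open scoped ComplexOrder

section Aux
variable {n : ℕ}

private lemma trace_vecMulVec_mul (v w : Fin n → ℂ) (X : Matrix (Fin n) (Fin n) ℂ) :
    (vecMulVec v w * X).trace = w ⬝ᵥ (X *ᵥ v) := by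
  simp only [trace, diag_apply, mul_apply, vecMulVec_apply, dotProduct, mulVec]
  rw [Finset.sum_comm]
  refine Finset.sum_congr rfl fun j _ => ?_
  rw [Finset.mul_sum]
  exact Finset.sum_congr rfl fun i _ => by ring

private lemma quad_eq_trace (v : Fin n → ℂ) (X : Matrix (Fin n) (Fin n) ℂ) :
    star v ⬝ᵥ X *ᵥ v = (vecMulVec v (star v) * X).trace :=
  (trace_vecMulVec_mul v (star v) X).symm

private lemma vecMulVec_star_self_posSemidef (v : Fin n → ℂ) :
    (vecMulVec v (star v)).PosSemidef := by
  refine Matrix.PosSemidef.of_dotProduct_mulVec_nonneg ?_ ?_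
  · ext i j
    simp only [conjTranspose_apply, vecMulVec_apply, Pi.star_apply, star_mul', star_star]
    ring
  · intro x
    have he : star x ⬝ᵥ (vecMulVec v (star v) *ᵥ x) = star (star v ⬝ᵥ x) * (star v ⬝ᵥ x) := by
      simp only [dotProduct, mulVec, vecMulVec_apply, Pi.star_apply, star_sum, star_mul',
        star_star]
      rw [Finset.sum_mul]
      refine Finset.sum_congr rfl fun i _ => ?_
      rw [Finset.mul_sum, Finset.mul_sum]
      refine Finset.sum_congr rfl fun j _ => by ring
    rw [he]
    exact star_mul_self_nonneg _

private lemma psd_trace_nonneg {A : Matrix (Fin n) (Fin n) ℂ} (hA : A.PosSemidef) :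
    0 ≤ A.trace := by
  rw [trace]
  refine Finset.sum_nonneg fun i _ => ?_
  have := hA.dotProduct_mulVec_nonneg (Pi.single i 1)
  simpa [dotProduct, mulVec_single, Pi.single_apply, Finset.sum_ite_eq'] using this

private lemma posSemidef_iff_eq_transpose_mul_self {A : Matrix (Fin n) (Fin n) ℂ} :
    A.PosSemidef ↔ ∃ B : Matrix (Fin n) (Fin n) ℂ, A = Bᴴ * B := by
  constructor
  · intro hA
    open scoped MatrixOrder in
    exact CStarAlgebra.nonneg_iff_eq_star_mul_self.mp hA.nonneg
  · rintro ⟨B, rfl⟩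
    exact posSemidef_conjTranspose_mul_self B

private lemma psd_trace_eq_zero {A : Matrix (Fin n) (Fin n) ℂ} (hA : A.PosSemidef)
    (h : A.trace = 0) : A = 0 := by
  obtain ⟨B, rfl⟩ := posSemidef_iff_eq_transpose_mul_self.mp hA
  suffices hB : B = 0 by simp [hB]
  have htr : ∑ i, ∑ j, star (B j i) * B j i = 0 := by
    simpa [trace, diag_apply, mul_apply, conjTranspose_apply] using h
  have h1 : ∀ i ∈ Finset.univ, (0:ℂ) ≤ ∑ j, star (B j i) * B j i := fun i _ =>
    Finset.sum_nonneg fun j _ => star_mul_self_nonneg _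
  ext j i
  have h2 := (Finset.sum_eq_zero_iff_of_nonneg h1).mp htr i (Finset.mem_univ i)
  have h3 : ∀ j ∈ Finset.univ, (0:ℂ) ≤ star (B j i) * B j i := fun j _ =>
    star_mul_self_nonneg _
  have h4 := (Finset.sum_eq_zero_iff_of_nonneg h3).mp h2 j (Finset.mem_univ j)
  rcases mul_eq_zero.mp h4 with h5 | h5
  · simpa using congrArg star h5
  · exact h5

private lemma trace_mul_psd_nonneg {A B : Matrix (Fin n) (Fin n) ℂ}
    (hA : A.PosSemidef) (hB : B.PosSemidef) : 0 ≤ (A * B).trace := by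
  obtain ⟨C, rfl⟩ := posSemidef_iff_eq_transpose_mul_self.mp hA
  have : (Cᴴ * C * B).trace = (C * B * Cᴴ).trace := by
    rw [trace_mul_cycle, trace_mul_cycle]
  rw [this]
  exact psd_trace_nonneg (hB.mul_mul_conjTranspose_same C)

private lemma psd_mul_eq_zero {A P : Matrix (Fin n) (Fin n) ℂ} (hA : A.PosSemidef)
    (hP : P.IsHermitian) (h : P * A * P = 0) : A * P = 0 ∧ P * A = 0 := by
  obtain ⟨S, hS, hSh⟩ : ∃ S : Matrix (Fin n) (Fin n) ℂ, S * S = A ∧ S.IsHermitian := by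
    open scoped MatrixOrder in
    exact ⟨CFC.sqrt A, CFC.sqrt_mul_sqrt_self A hA.nonneg, (CFC.sqrt_nonneg A).isSelfAdjoint⟩
  have h1 : (S * P)ᴴ * (S * P) = 0 := by
    rw [conjTranspose_mul, hSh.eq, hP.eq]
    calc P * S * (S * P) = P * (S * S) * P := by
          simp only [mul_assoc]
      _ = 0 := by rw [hS, h]
  have h2 : S * P = 0 := conjTranspose_mul_self_eq_zero.mp h1
  have hAP : A * P = 0 := by
    rw [← hS, mul_assoc, h2, mul_zero]
  refine ⟨hAP, ?_⟩
  have : (A * P)ᴴ = P * A := by rw [conjTranspose_mul, hA.isHermitian.eq, hP.eq]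
  rw [← this, hAP, conjTranspose_zero]

private lemma eq_zero_of_forall_trace {X : Matrix (Fin n) (Fin n) ℂ}
    (h : ∀ ρ : Matrix (Fin n) (Fin n) ℂ, (ρ * X).trace = 0) : X = 0 := by
  ext i j
  have := h (vecMulVec (Pi.single j 1) (Pi.single i 1))
  rw [trace_vecMulVec_mul] at this
  simpa [dotProduct, mulVec_single, Pi.single_apply, Finset.sum_ite_eq'] using this

private lemma herm_of_quad {X : Matrix (Fin n) (Fin n) ℂ}
    (h : ∀ v : Fin n → ℂ, star (star v ⬝ᵥ X *ᵥ v) = star v ⬝ᵥ X *ᵥ v) : X.IsHermitian := by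
  rw [Matrix.isHermitian_iff_isSymmetric]
  rw [LinearMap.isSymmetric_iff_inner_map_self_real]
  intro v
  obtain ⟨w, rfl⟩ := (WithLp.equiv 2 (Fin n → ℂ)).symm.surjective v
  rw [WithLp.equiv_symm_apply, Matrix.toEuclideanLin_toLp, EuclideanSpace.inner_toLp_toLp,
    Matrix.toLin'_apply]
  have h2 := h w
  simp only [dotProduct, Pi.star_apply, star_sum, star_mul', star_star] at h2 ⊢
  simp only [mul_comm (w _) (star _)]
  calc (starRingEnd ℂ) (∑ x, star ((X *ᵥ w) x) * w x)
      = ∑ x, star (w x) * (X *ᵥ w) x := by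
        rw [map_sum]
        refine Finset.sum_congr rfl fun x _ => ?_
        rw [← RCLike.star_def, star_mul', star_star, mul_comm]
    _ = ∑ x, w x * star ((X *ᵥ w) x) := h2.symm
    _ = ∑ x, star ((X *ᵥ w) x) * w x := Finset.sum_congr rfl fun x _ => mul_comm _ _

private lemma four_smul_vecMulVec (u w : Fin n → ℂ) :
    (4:ℂ) • vecMulVec u (star w) =
      vecMulVec (u + w) (star (u + w))
        + Complex.I • vecMulVec (u + Complex.I • w) (star (u + Complex.I • w))
        - vecMulVec (u - w) (star (u - w))
        - Complex.I • vecMulVec (u - Complex.I • w) (star (u - Complex.I • w)) := by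
  ext i j
  simp only [Matrix.smul_apply, Matrix.sub_apply, Matrix.add_apply, vecMulVec_apply,
    Pi.star_apply, Pi.add_apply, Pi.sub_apply, Pi.smul_apply, smul_eq_mul, star_add,
    star_sub, star_mul', Complex.star_def, Complex.conj_I]
  ring_nf
  simp only [Complex.I_sq]
  ring

private lemma linmap_zero_of_vecMulVec
    (L : Matrix (Fin n) (Fin n) ℂ →ₗ[ℂ] Matrix (Fin n) (Fin n) ℂ)
    (h : ∀ v, L (vecMulVec v (star v)) = 0) (ρ : Matrix (Fin n) (Fin n) ℂ) : L ρ = 0 := by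
  have huw : ∀ u w : Fin n → ℂ, L (vecMulVec u (star w)) = 0 := by
    intro u w
    have h4 : L ((4:ℂ) • vecMulVec u (star w)) = 0 := by
      rw [four_smul_vecMulVec, map_sub, map_sub, map_add, _root_.map_smul, _root_.map_smul,
        h, h, h, h]
      simp
    rw [_root_.map_smul, smul_eq_zero] at h4
    rcases h4 with h4 | h4
    · norm_num at h4
    · exact h4
  have hstd : ∀ i j : Fin n, L (single i j (1:ℂ)) = 0 := by
    intro i j
    rw [single_eq_single_vecMulVec_single]
    have hs : (Pi.single j 1 : Fin n → ℂ) = star (Pi.single j (1:ℂ)) := by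
      ext k
      simp [Pi.single_apply, apply_ite (star : ℂ → ℂ)]
    rw [hs]
    exact huw _ _
  have hsb : ∀ (i j : Fin n) (c : ℂ), single i j c = c • single i j (1:ℂ) := by
    intro i j c
    rw [smul_single, smul_eq_mul, mul_one]
  conv_lhs => rw [matrix_eq_sum_single ρ]
  rw [map_sum]
  refine Finset.sum_eq_zero fun i _ => ?_
  rw [map_sum]
  refine Finset.sum_eq_zero fun j _ => ?_
  rw [hsb, _root_.map_smul, hstd, smul_zero]

end Aux

/-- For a positive trace-preserving map `Φ` on n×n matrices and an orthogonal
projection `P`, `Φ` maps matrices supported in the range of `P` to matrices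
supported in the range of `P` iff `P ≤ Φ*(P)`. -/
theorem stmt1 {n : ℕ}
    (Φ Ψ : Matrix (Fin n) (Fin n) ℂ →ₗ[ℂ] Matrix (Fin n) (Fin n) ℂ)
    (hpos : ∀ ρ, ρ.PosSemidef → (Φ ρ).PosSemidef)
    (htr : ∀ ρ, (Φ ρ).trace = ρ.trace)
    (hadj : ∀ ρ X : Matrix (Fin n) (Fin n) ℂ, (Φ ρ * X).trace = (ρ * Ψ X).trace)
    (P : Matrix (Fin n) (Fin n) ℂ) (hP : P.IsHermitian) (hP2 : P * P = P) :
    (∀ ρ : Matrix (Fin n) (Fin n) ℂ,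
        Φ (P * ρ * P) = P * Φ (P * ρ * P) * P) ↔ (Ψ P - P).PosSemidef := by
  obtain ⟨Q, hQdef⟩ : ∃ Q : Matrix (Fin n) (Fin n) ℂ, Q = 1 - P := ⟨1 - P, rfl⟩
  have hQ : Q.IsHermitian := by
    rw [hQdef]; exact Matrix.isHermitian_one.sub hP
  have hPQ : P * Q = 0 := by simp [hQdef, mul_sub, hP2]
  have hQP : Q * P = 0 := by simp [hQdef, sub_mul, hP2]
  have hQ2 : Q * Q = Q := by
    simp [hQdef, sub_mul, mul_sub, hP2]
  have hPpsd : P.PosSemidef := posSemidef_iff_eq_transpose_mul_self.mpr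
    ⟨P, by rw [hP.eq, hP2]⟩
  have hQpsd : Q.PosSemidef := posSemidef_iff_eq_transpose_mul_self.mpr
    ⟨Q, by rw [hQ.eq, hQ2]⟩
  have hΨ1 : Ψ (1 : Matrix (Fin n) (Fin n) ℂ) = 1 := by
    have : Ψ (1 : Matrix (Fin n) (Fin n) ℂ) - 1 = 0 := by
      apply eq_zero_of_forall_trace
      intro ρ
      rw [mul_sub, trace_sub, ← hadj, mul_one, mul_one, htr, sub_self]
    exact sub_eq_zero.mp this
  have hΨpos : ∀ X : Matrix (Fin n) (Fin n) ℂ, X.PosSemidef → (Ψ X).PosSemidef := by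
    intro X hX
    have key : ∀ v : Fin n → ℂ, 0 ≤ star v ⬝ᵥ (Ψ X) *ᵥ v := by
      intro v
      rw [quad_eq_trace, ← hadj]
      exact trace_mul_psd_nonneg (hpos _ (vecMulVec_star_self_posSemidef v)) hX
    refine PosSemidef.of_dotProduct_mulVec_nonneg (herm_of_quad fun v => ?_) key
    exact (IsSelfAdjoint.of_nonneg (key v))
  constructor
  · intro h
    -- forward direction
    have key : P * Ψ Q * P = 0 := by
      apply eq_zero_of_forall_trace
      intro ρ
      have e1 : ρ * (P * Ψ Q * P) = ρ * P * Ψ Q * P := by simp only [mul_assoc]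
      rw [e1, trace_mul_comm (ρ * P * Ψ Q) P, ← mul_assoc, ← mul_assoc, ← hadj, h ρ,
        mul_assoc, mul_assoc, hPQ]
      simp [mul_assoc]
    have hΨQpsd := hΨpos Q hQpsd
    obtain ⟨hAP0, hPA0⟩ := psd_mul_eq_zero hΨQpsd hP key
    have hΨP : Ψ P = 1 - Ψ Q := by
      have hPQ1 : P = 1 - Q := by simp [hQdef]
      rw [hPQ1, map_sub, hΨ1]
    have e2 : Ψ P - P = Q - Ψ Q := by
      rw [hΨP, hQdef]; abel
    have e1 : Q * Ψ P * Q = Q - Ψ Q := by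
      have hq1 : Q * Ψ Q = Ψ Q := by
        nth_rewrite 1 [hQdef]
        rw [sub_mul, one_mul, hPA0, sub_zero]
      have hq2 : Ψ Q * Q = Ψ Q := by
        nth_rewrite 2 [hQdef]
        rw [mul_sub, mul_one, hAP0, sub_zero]
      rw [hΨP, mul_sub, mul_one, sub_mul, hQ2, hq1, hq2]
    rw [e2, ← e1]
    have := (hΨpos P hPpsd).mul_mul_conjTranspose_same Q
    rwa [hQ.eq] at this
  · intro hps
    -- reverse direction
    have hΨQ : Ψ Q = 1 - Ψ P := by
      rw [hQdef, map_sub, hΨ1]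
    have hpsdcase : ∀ ρ : Matrix (Fin n) (Fin n) ℂ, ρ.PosSemidef →
        Φ (P * ρ * P) = P * Φ (P * ρ * P) * P := by
      intro ρ hρ
      obtain ⟨σ, hσdef⟩ : ∃ σ : Matrix (Fin n) (Fin n) ℂ, σ = P * ρ * P := ⟨P * ρ * P, rfl⟩
      rw [← hσdef]
      have hσpsd : σ.PosSemidef := by
        rw [hσdef]
        have := hρ.mul_mul_conjTranspose_same P
        rwa [hP.eq] at this
      have hσP : σ * P = σ := by rw [hσdef, mul_assoc, hP2]
      have h1 : (Φ σ * Q).trace = -(σ * (Ψ P - P)).trace := by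
        rw [hadj, hΨQ, mul_sub, mul_sub, mul_one, trace_sub, trace_sub, hσP]
        ring
      have h2 : 0 ≤ (Φ σ * Q).trace := trace_mul_psd_nonneg (hpos σ hσpsd) hQpsd
      have h3 : 0 ≤ (σ * (Ψ P - P)).trace := trace_mul_psd_nonneg hσpsd hps
      have h4 : (Φ σ * Q).trace = 0 := le_antisymm (by rw [h1]; exact neg_nonpos.mpr h3) h2
      have hQΦQpsd : (Q * Φ σ * Q).PosSemidef := by
        have := (hpos σ hσpsd).mul_mul_conjTranspose_same Q
        rwa [hQ.eq] at this
      have htrQ : (Q * Φ σ * Q).trace = 0 := by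
        rw [trace_mul_cycle, hQ2, trace_mul_comm, h4]
      have h5 : Q * Φ σ * Q = 0 := psd_trace_eq_zero hQΦQpsd htrQ
      obtain ⟨hAQ, hQA⟩ := psd_mul_eq_zero (hpos σ hσpsd) hQ h5
      have hP1Q : P = 1 - Q := by simp [hQdef]
      rw [hP1Q, sub_mul, one_mul, hQA, sub_zero, mul_sub, mul_one, hAQ, sub_zero]
    intro ρ
    obtain ⟨cP, hcP⟩ : ∃ cP : Matrix (Fin n) (Fin n) ℂ →ₗ[ℂ] Matrix (Fin n) (Fin n) ℂ,
        cP = (LinearMap.mulRight ℂ P).comp (LinearMap.mulLeft ℂ P) :=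
      ⟨_, rfl⟩
    obtain ⟨L, hL⟩ : ∃ L : Matrix (Fin n) (Fin n) ℂ →ₗ[ℂ] Matrix (Fin n) (Fin n) ℂ,
        L = (Φ.comp cP) - ((cP.comp Φ).comp cP) := ⟨_, rfl⟩
    have hLv : ∀ v : Fin n → ℂ, L (vecMulVec v (star v)) = 0 := by
      intro v
      have hv := hpsdcase (vecMulVec v (star v)) (vecMulVec_star_self_posSemidef v)
      simp only [hL, hcP, LinearMap.sub_apply, LinearMap.comp_apply,
        LinearMap.mulRight_apply, LinearMap.mulLeft_apply]
      rw [← hv, sub_self]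
    have hLρ := linmap_zero_of_vecMulVec L hLv ρ
    simp only [hL, hcP, LinearMap.sub_apply, LinearMap.comp_apply,
      LinearMap.mulRight_apply, LinearMap.mulLeft_apply, sub_eq_zero] at hLρ
    exact hLρ
end

section
/- A positive linear map Φ on n×n complex matrices is irreducible (i.e. the only orthogonal projections P with Φ(PMP) ⊆ PMP for all matrices M are P = 0 and P = I) if and only if it is ergodic, i.e. for every nonzero positive semidefinite matrix ρ and every t > 0, the matrix exp(tΦ)(ρ) is positive definite. -/
open Matrix
open scoped ComplexOrder

attribute [local instance] Matrix.linftyOpNormedAddCommGroup Matrix.linftyOpNormedSpace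

namespace Stmt2Aux

variable {n : ℕ}

abbrev Mat (n : ℕ) := Matrix (Fin n) (Fin n) ℂ

noncomputable def evalCLM (ρ : Mat n) : (Mat n →L[ℂ] Mat n) →L[ℂ] Mat n :=
  LinearMap.toContinuousLinearMap
    { toFun := fun f => f ρ
      map_add' := fun f g => rfl
      map_smul' := fun c f => rfl }

noncomputable def mvCLM (x : Fin n → ℂ) : Mat n →L[ℂ] (Fin n → ℂ) :=
  LinearMap.toContinuousLinearMap
    { toFun := fun M => M *ᵥ x
      map_add' := fun A B => Matrix.add_mulVec A B x
      map_smul' := fun c A => Matrix.smul_mulVec c A x }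

noncomputable def qfCLM (x : Fin n → ℂ) : Mat n →L[ℂ] ℂ :=
  LinearMap.toContinuousLinearMap
    { toFun := fun M => star x ⬝ᵥ M *ᵥ x
      map_add' := fun A B => by
        simp [Matrix.add_mulVec, dotProduct_add]
      map_smul' := fun c A => by
        simp [Matrix.smul_mulVec, dotProduct_smul] }

noncomputable def ctCLM : Mat n →L[ℝ] Mat n :=
  LinearMap.toContinuousLinearMap
    { toFun := fun M => Mᴴ
      map_add' := fun A B => Matrix.conjTranspose_add A B
      map_smul' := fun c A => by
        ext i j
        simp [Matrix.conjTranspose_apply, Complex.real_smul, _root_.map_mul, Complex.conj_ofReal] }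

lemma pow_smul_apply (Φ : Mat n →ₗ[ℂ] Mat n) (t : ℝ) (k : ℕ) (ρ : Mat n) :
    ((t • LinearMap.toContinuousLinearMap Φ) ^ k) ρ = ((t ^ k : ℝ) : ℂ) • (Φ ^ k) ρ := by
  induction k with
  | zero => simp
  | succ k ih =>
    rw [pow_succ', ContinuousLinearMap.mul_apply, ih, pow_succ' Φ, Module.End.mul_apply]
    rw [ContinuousLinearMap.smul_apply, LinearMap.coe_toContinuousLinearMap',
      _root_.map_smul]
    rw [smul_comm, ← smul_one_smul ℂ t (Φ ((Φ ^ k) ρ)), Complex.real_smul, mul_one, smul_smul]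
    push_cast
    ring_nf

lemma hasSum_exp_apply (Φ : Mat n →ₗ[ℂ] Mat n) (t : ℝ) (ρ : Mat n) :
    HasSum (fun k : ℕ => ((t ^ k * ((k.factorial : ℝ))⁻¹ : ℝ) : ℂ) • (Φ ^ k) ρ)
      ((@NormedSpace.exp _ _ _ (@NonUnitalSeminormedRing.toIsTopologicalRing _ ContinuousLinearMap.toNormedRing.toNonUnitalNormedRing.toNonUnitalSeminormedRing) (t • LinearMap.toContinuousLinearMap Φ)) ρ) := by
  have h := @NormedSpace.exp_series_hasSum_exp' ℂ (Mat n →L[ℂ] Mat n) _ _ _ ContinuousLinearMap.toNormedRing ContinuousLinearMap.toNormedAlgebra (@FiniteDimensional.complete ℂ (Mat n →L[ℂ] Mat n) _ _ _ _ _ _ _ _ _) (t • LinearMap.toContinuousLinearMap Φ)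
  have h2 := h.mapL (evalCLM ρ)
  convert h2 using 2 with k
  case e'_6 => rfl
  show _ = evalCLM ρ (((k.factorial : ℂ))⁻¹ • (t • LinearMap.toContinuousLinearMap Φ) ^ k)
  have : evalCLM (n := n) ρ (((k.factorial : ℂ))⁻¹ • (t • LinearMap.toContinuousLinearMap Φ) ^ k)
      = ((k.factorial : ℂ))⁻¹ • (((t • LinearMap.toContinuousLinearMap Φ) ^ k) ρ) := rfl
  rw [this, pow_smul_apply, smul_smul]
  push_cast
  ring_nf


lemma matrix_eq_zero_of_mulVec {A : Mat n} (h : ∀ x, A *ᵥ x = 0) : A = 0 := by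
  ext i j
  have := congrFun (h (Pi.single j 1)) i
  simpa using this

lemma conj_mul_conj (U A B : Mat n) (hUU' : Uᴴ * U = 1) :
    (U * A * Uᴴ) * (U * B * Uᴴ) = U * (A * B) * Uᴴ := by
  simp only [Matrix.mul_assoc]
  rw [← Matrix.mul_assoc Uᴴ U, hUU', Matrix.one_mul]

lemma conj_hermitian (U : Mat n) (d : Fin n → ℝ) :
    (U * Matrix.diagonal (fun i => (d i : ℂ)) * Uᴴ).IsHermitian := by
  refine Matrix.isHermitian_mul_mul_conjTranspose U ?_
  refine Matrix.isHermitian_diagonal_of_self_adjoint _ (funext fun i => ?_)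
  simp [Complex.star_def, Complex.conj_ofReal]

lemma conj_psd (U : Mat n) (d : Fin n → ℝ) (hd : ∀ i, 0 ≤ d i) :
    (U * Matrix.diagonal (fun i => (d i : ℂ)) * Uᴴ).PosSemidef :=
  (Matrix.posSemidef_diagonal_iff.mpr
    (fun i => Complex.zero_le_real.mpr (hd i))).mul_mul_conjTranspose_same U

lemma mulVec_inj (U : Mat n) (hUU' : Uᴴ * U = 1) (w : Fin n → ℂ) :
    U *ᵥ w = 0 ↔ w = 0 := by
  constructor
  · intro h
    have : Uᴴ *ᵥ (U *ᵥ w) = 0 := by rw [h, Matrix.mulVec_zero]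
    rwa [Matrix.mulVec_mulVec, hUU', Matrix.one_mulVec] at this
  · intro h; rw [h, Matrix.mulVec_zero]

lemma exists_support_proj {σ : Mat n} (hσ : σ.PosSemidef) :
    ∃ P : Mat n, P.IsHermitian ∧ P * P = P ∧
      (∀ x, σ *ᵥ x = 0 ↔ P *ᵥ x = 0) ∧
      ∃ e : ℝ, 0 ≤ e ∧ ((e : ℂ) • σ - P).PosSemidef := by
  have hH := hσ.1
  set U : Mat n := (Matrix.IsHermitian.eigenvectorUnitary hH : Mat n) with hUdef
  set μ : Fin n → ℝ := hH.eigenvalues with hμdef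
  have hμ : ∀ i, 0 ≤ μ i := fun i => hσ.eigenvalues_nonneg i
  have hUU : U * Uᴴ = 1 := by
    rw [← Matrix.star_eq_conjTranspose]; exact Unitary.coe_mul_star_self _
  have hUU' : Uᴴ * U = 1 := by
    rw [← Matrix.star_eq_conjTranspose]; exact Unitary.coe_star_mul_self _
  have hspec : σ = U * Matrix.diagonal (fun i => (μ i : ℂ)) * Uᴴ := by
    rw [← Matrix.star_eq_conjTranspose]
    exact hH.spectral_theorem
  set d : Fin n → ℝ := fun i => if μ i = 0 then 0 else 1 with hd
  set P : Mat n := U * Matrix.diagonal (fun i => (d i : ℂ)) * Uᴴ with hP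
  have hd01 : ∀ i, d i = 0 ∨ d i = 1 := by
    intro i; by_cases h : μ i = 0 <;> simp [hd, h]
  refine ⟨P, conj_hermitian U d, ?_, ?_, ?_⟩
  · rw [hP, conj_mul_conj U _ _ hUU', Matrix.diagonal_mul_diagonal]
    have : (fun i => (d i : ℂ) * (d i : ℂ)) = fun i => (d i : ℂ) :=
      funext fun i => by rcases hd01 i with h | h <;> simp [h]
    rw [this]
  · intro x
    have key : ∀ (v : Fin n → ℂ),
        (U * Matrix.diagonal v * Uᴴ) *ᵥ x = 0 ↔ ∀ i, v i * (Uᴴ *ᵥ x) i = 0 := by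
      intro v
      rw [← Matrix.mulVec_mulVec, ← Matrix.mulVec_mulVec, mulVec_inj U hUU']
      constructor
      · intro h i
        have := congrFun h i
        rwa [Matrix.mulVec_diagonal] at this
      · intro h
        funext i
        rw [Matrix.mulVec_diagonal]
        exact h i
    rw [hspec, hP, key, key]
    constructor
    · intro h i
      rcases eq_or_ne (μ i) 0 with h0 | h0
      · have : d i = 0 := by simp [hd, h0]
        rw [this]
        simp
      · have hy : (Uᴴ *ᵥ x) i = 0 := by
          rcases mul_eq_zero.mp (h i) with hc | hc
          · exact absurd (Complex.ofReal_eq_zero.mp hc) h0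
          · exact hc
        simp [hy]
    · intro h i
      rcases eq_or_ne (μ i) 0 with h0 | h0
      · simp [h0]
      · have hdi : d i = 1 := by simp [hd, h0]
        have h1 := h i
        rw [hdi] at h1
        simp only [Complex.ofReal_one, one_mul] at h1
        simp [h1]
  · refine ⟨∑ i, if μ i = 0 then 0 else (μ i)⁻¹, ?_, ?_⟩
    · refine Finset.sum_nonneg fun i _ => ?_
      by_cases h : μ i = 0
      · simp [h]
      · simp [h, inv_nonneg.mpr (hμ i)]
    · set e : ℝ := ∑ i, if μ i = 0 then 0 else (μ i)⁻¹ with he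
      have hee : ∀ i, 0 ≤ e * μ i - d i := by
        intro i
        rcases eq_or_ne (μ i) 0 with h0 | h0
        · simp [hd, h0]
        · have hμi : 0 < μ i := lt_of_le_of_ne (hμ i) (Ne.symm h0)
          have h1 : (μ i)⁻¹ ≤ e := by
            rw [he]
            refine Finset.single_le_sum (f := fun i => if μ i = 0 then 0 else (μ i)⁻¹)
              (fun j _ => ?_) (Finset.mem_univ i) |>.trans_eq' (by simp [h0])
            by_cases h : μ j = 0
            · simp [h]
            · simp [h, inv_nonneg.mpr (hμ j)]
          have : 1 ≤ e * μ i := by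
            calc (1:ℝ) = (μ i)⁻¹ * μ i := (inv_mul_cancel₀ h0).symm
            _ ≤ e * μ i := by gcongr
          simp only [hd, if_neg h0]
          linarith
      have heq : (e : ℂ) • σ - P
          = U * Matrix.diagonal (fun i => ((e * μ i - d i : ℝ) : ℂ)) * Uᴴ := by
        rw [hspec, hP]
        rw [← Matrix.smul_mul, ← Matrix.mul_smul]
        rw [← Matrix.sub_mul, ← Matrix.mul_sub]
        congr 2
        rw [← Matrix.diagonal_smul, Matrix.diagonal_sub]
        congr 1
        funext i
        simp [Complex.real_smul]
      rw [heq]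
      exact conj_psd U _ hee

lemma exists_smul_one_psd {A : Mat n} (hA : A.IsHermitian) :
    ∃ c : ℝ, 0 ≤ c ∧ (((c : ℂ) • 1 - A).PosSemidef ∧ ((c : ℂ) • 1 + A).PosSemidef) := by
  set U : Mat n := (Matrix.IsHermitian.eigenvectorUnitary hA : Mat n) with hUdef
  set ν : Fin n → ℝ := hA.eigenvalues with hνdef
  have hUU : U * Uᴴ = 1 := by
    rw [← Matrix.star_eq_conjTranspose]; exact Unitary.coe_mul_star_self _
  have hspec : A = U * Matrix.diagonal (fun i => (ν i : ℂ)) * Uᴴ := by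
    rw [← Matrix.star_eq_conjTranspose]
    exact hA.spectral_theorem
  set c : ℝ := ∑ i, |ν i| with hc
  have hc0 : 0 ≤ c := Finset.sum_nonneg fun i _ => abs_nonneg _
  have hbound : ∀ i, |ν i| ≤ c := fun i =>
    Finset.single_le_sum (f := fun i => |ν i|) (fun j _ => abs_nonneg _) (Finset.mem_univ i)
  have hone : (1 : Mat n) = U * Matrix.diagonal (fun _ => (1:ℂ)) * Uᴴ := by
    rw [Matrix.diagonal_one, Matrix.mul_one, hUU]
  constructor
  case w => exact c
  refine ⟨hc0, ?_, ?_⟩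
  · have heq : (c : ℂ) • 1 - A
        = U * Matrix.diagonal (fun i => ((c - ν i : ℝ) : ℂ)) * Uᴴ := by
      rw [hspec]
      conv_lhs => rw [hone]
      rw [← Matrix.smul_mul, ← Matrix.mul_smul, ← Matrix.sub_mul, ← Matrix.mul_sub]
      congr 2
      rw [← Matrix.diagonal_smul, Matrix.diagonal_sub]
      congr 1
      funext i
      simp [Complex.real_smul]
    rw [heq]
    exact conj_psd U _ fun i => by have := hbound i; have := abs_le.mp this; linarith
  · have heq : (c : ℂ) • 1 + A
        = U * Matrix.diagonal (fun i => ((c + ν i : ℝ) : ℂ)) * Uᴴ := by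
      rw [hspec]
      conv_lhs => rw [hone]
      rw [← Matrix.smul_mul, ← Matrix.mul_smul, ← Matrix.add_mul, ← Matrix.mul_add]
      congr 2
      rw [← Matrix.diagonal_smul, Matrix.diagonal_add]
      congr 1
      funext i
      simp [Complex.real_smul]
    rw [heq]
    exact conj_psd U _ fun i => by have := hbound i; have := abs_le.mp this; linarith


lemma real_smul_hermitian {A : Mat n} (hA : A.IsHermitian) (c : ℝ) :
    (((c : ℂ)) • A).IsHermitian := by
  show _ᴴ = _
  rw [Matrix.conjTranspose_smul, hA.eq]
  congr 1
  simp [Complex.star_def, Complex.conj_ofReal]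

lemma corner_psd_smul_sub {P M : Mat n} (hP : P.IsHermitian) (hPP : P * P = P)
    (hM : M = P * M * P) {c : ℝ} (h1 : ((c : ℂ) • 1 - M).PosSemidef) :
    ((c : ℂ) • P - M).PosSemidef := by
  have key : (c : ℂ) • P - M = P * ((c : ℂ) • 1 - M) * Pᴴ := by
    rw [hP.eq, Matrix.mul_sub, Matrix.sub_mul, Matrix.mul_smul, Matrix.mul_one,
      Matrix.smul_mul, hPP, ← hM]
  rw [key]
  exact h1.mul_mul_conjTranspose_same P

lemma corner_psd_smul_add {P M : Mat n} (hP : P.IsHermitian) (hPP : P * P = P)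
    (hM : M = P * M * P) {c : ℝ} (h1 : ((c : ℂ) • 1 + M).PosSemidef) :
    ((c : ℂ) • P + M).PosSemidef := by
  have key : (c : ℂ) • P + M = P * ((c : ℂ) • 1 + M) * Pᴴ := by
    rw [hP.eq, Matrix.mul_add, Matrix.add_mul, Matrix.mul_smul, Matrix.mul_one,
      Matrix.smul_mul, hPP, ← hM]
  rw [key]
  exact h1.mul_mul_conjTranspose_same P

lemma corner_idem {P : Mat n} (hPP : P * P = P) (X : Mat n) :
    P * (P * X * P) * P = P * X * P := by
  have h1 : P * (P * X * P) = P * X * P := by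
    rw [← Matrix.mul_assoc, ← Matrix.mul_assoc, hPP]
  have h2 : (P * X * P) * P = P * X * P := by
    rw [Matrix.mul_assoc (P * X) P P, hPP]
  rw [h1, h2]

lemma smulP_add_corner {P A : Mat n} (hPP : P * P = P) (hAc : A = P * A * P) (c : ℂ) :
    c • P + A = P * (c • P + A) * P := by
  rw [Matrix.mul_add, Matrix.add_mul, Matrix.mul_smul, Matrix.smul_mul, hPP, hPP, ← hAc]

lemma herm_corner {P H : Mat n} (hP : P.IsHermitian) (hPP : P * P = P)
    (hH : H.IsHermitian) (hann : ∀ x, P *ᵥ x = 0 → H *ᵥ x = 0) : H = P * H * P := by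
  have h1 : H * (1 - P) = 0 := by
    apply matrix_eq_zero_of_mulVec
    intro x
    rw [← Matrix.mulVec_mulVec]
    apply hann
    rw [Matrix.mulVec_mulVec, Matrix.mul_sub, Matrix.mul_one, hPP, sub_self,
      Matrix.zero_mulVec]
  have hHP : H * P = H := by
    rw [Matrix.mul_sub, Matrix.mul_one] at h1
    exact (sub_eq_zero.mp h1).symm
  have hPH : P * H = H := by
    have h2 := congrArg Matrix.conjTranspose hHP
    rwa [Matrix.conjTranspose_mul, hP.eq, hH.eq] at h2
  rw [hPH, hHP]

lemma pow_psd (Φ : Mat n →ₗ[ℂ] Mat n) (hpos : ∀ ρ, ρ.PosSemidef → (Φ ρ).PosSemidef)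
    (ρ : Mat n) (hρ : ρ.PosSemidef) (k : ℕ) : ((Φ ^ k) ρ).PosSemidef := by
  induction k with
  | zero => simpa using hρ
  | succ k ih =>
    rw [pow_succ', Module.End.mul_apply]
    exact hpos _ ih


noncomputable def cornerDiffCLM (P : Mat n) : Mat n →L[ℂ] Mat n :=
  LinearMap.toContinuousLinearMap
    { toFun := fun M => M - P * M * P
      map_add' := fun A B => by
        show A + B - P * (A + B) * P = (A - P * A * P) + (B - P * B * P)
        rw [Matrix.mul_add, Matrix.add_mul]
        abel
      map_smul' := fun c A => by
        show c • A - P * (c • A) * P = c • (A - P * A * P)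
        rw [Matrix.mul_smul, Matrix.smul_mul, ← smul_sub] }

lemma corner_not_posdef {P σ : Mat n} (hPP : P * P = P) (hP1 : P ≠ 1)
    (hσP : σ = P * σ * P) (hσ : σ.PosDef) : False := by
  have hv : ∃ v, P *ᵥ v ≠ v := by
    by_contra h
    push_neg at h
    apply hP1
    have h2 : P - 1 = 0 := matrix_eq_zero_of_mulVec fun v => by
      rw [Matrix.sub_mulVec, Matrix.one_mulVec, h v, sub_self]
    have := sub_eq_zero.mp h2
    exact this
  obtain ⟨v, hvne⟩ := hv
  set y := v - P *ᵥ v with hy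
  have hy0 : y ≠ 0 := by
    intro h
    rw [hy] at h
    exact hvne (sub_eq_zero.mp h).symm
  have hPy : P *ᵥ y = 0 := by
    rw [hy, Matrix.mulVec_sub, Matrix.mulVec_mulVec, hPP, sub_self]
  have hq := hσ.dotProduct_mulVec_pos hy0
  have hzero : star y ⬝ᵥ σ *ᵥ y = 0 := by
    rw [hσP, ← Matrix.mulVec_mulVec, ← Matrix.mulVec_mulVec, hPy, Matrix.mulVec_zero,
      Matrix.mulVec_zero, dotProduct_zero]
  rw [hzero] at hq
  exact lt_irrefl 0 hq

end Stmt2Aux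

open Stmt2Aux in
/-- A positive linear map on n×n complex matrices is irreducible iff it is
ergodic: `exp(tΦ)(ρ)` is positive definite for every nonzero positive
semidefinite `ρ` and every `t > 0`. -/
theorem stmt2 {n : ℕ}
    (Φ : Matrix (Fin n) (Fin n) ℂ →ₗ[ℂ] Matrix (Fin n) (Fin n) ℂ)
    (hpos : ∀ ρ, ρ.PosSemidef → (Φ ρ).PosSemidef) :
    (∀ P : Matrix (Fin n) (Fin n) ℂ, P.IsHermitian → P * P = P →
        (∀ ρ, Φ (P * ρ * P) = P * Φ (P * ρ * P) * P) → P = 0 ∨ P = 1) ↔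
    (∀ ρ : Matrix (Fin n) (Fin n) ℂ, ρ.PosSemidef → ρ ≠ 0 → ∀ t : ℝ, 0 < t →
        ((@NormedSpace.exp _ _ _ (@NonUnitalSeminormedRing.toIsTopologicalRing _ ContinuousLinearMap.toNormedRing.toNonUnitalNormedRing.toNonUnitalSeminormedRing) (t • LinearMap.toContinuousLinearMap Φ)) ρ).PosDef) := by
  constructor
  · -- irreducible → ergodic
    intro hirr ρ hρ hρ0 t ht
    set σ : Mat n := (@NormedSpace.exp _ _ _ (@NonUnitalSeminormedRing.toIsTopologicalRing _ ContinuousLinearMap.toNormedRing.toNonUnitalNormedRing.toNonUnitalSeminormedRing) (t • LinearMap.toContinuousLinearMap Φ)) ρ with hσdef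
    have hsum : HasSum (fun k : ℕ => ((t ^ k * ((k.factorial : ℝ))⁻¹ : ℝ) : ℂ) • (Φ ^ k) ρ) σ :=
      hasSum_exp_apply Φ t ρ
    have hc : ∀ k : ℕ, 0 < t ^ k * ((k.factorial : ℝ))⁻¹ := fun k =>
      mul_pos (pow_pos ht k) (inv_pos.mpr (by exact_mod_cast Nat.factorial_pos k))
    have hterm : ∀ k, ((Φ ^ k) ρ).PosSemidef := pow_psd Φ hpos ρ hρ
    have hqfre : ∀ k (x : Fin n → ℂ), 0 ≤ (star x ⬝ᵥ ((Φ ^ k) ρ) *ᵥ x).re ∧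
        0 = (star x ⬝ᵥ ((Φ ^ k) ρ) *ᵥ x).im :=
      fun k x => Complex.nonneg_iff.mp ((hterm k).dotProduct_mulVec_nonneg x)
    have hσH : σ.IsHermitian := by
      have h2 := hsum.mapL (ctCLM (n := n))
      have h3 : (fun k => ctCLM (((t ^ k * ((k.factorial : ℝ))⁻¹ : ℝ) : ℂ) • (Φ ^ k) ρ))
          = fun k => ((t ^ k * ((k.factorial : ℝ))⁻¹ : ℝ) : ℂ) • (Φ ^ k) ρ := by
        funext k
        show (((t ^ k * ((k.factorial : ℝ))⁻¹ : ℝ) : ℂ) • (Φ ^ k) ρ)ᴴ = _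
        exact (real_smul_hermitian (hterm k).1 _).eq
      rw [h3] at h2
      exact (hsum.unique h2).symm
    have hre : ∀ x : Fin n → ℂ,
        HasSum (fun k => (t ^ k * ((k.factorial : ℝ))⁻¹) * (star x ⬝ᵥ ((Φ ^ k) ρ) *ᵥ x).re)
          (star x ⬝ᵥ σ *ᵥ x).re := by
      intro x
      have h2 := hsum.mapL (Complex.reCLM.comp ((qfCLM x).restrictScalars ℝ))
      have h3 : (fun k => (Complex.reCLM.comp ((qfCLM x).restrictScalars ℝ))
            (((t ^ k * ((k.factorial : ℝ))⁻¹ : ℝ) : ℂ) • (Φ ^ k) ρ))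
          = fun k => (t ^ k * ((k.factorial : ℝ))⁻¹) * (star x ⬝ᵥ ((Φ ^ k) ρ) *ᵥ x).re := by
        funext k
        show (star x ⬝ᵥ (((t ^ k * ((k.factorial : ℝ))⁻¹ : ℝ) : ℂ) • (Φ ^ k) ρ) *ᵥ x).re = _
        rw [Matrix.smul_mulVec, dotProduct_smul, smul_eq_mul, Complex.re_ofReal_mul]
      rw [h3] at h2
      exact h2
    have him : ∀ x : Fin n → ℂ, (star x ⬝ᵥ σ *ᵥ x).im = 0 := by
      intro x
      have h2 := hsum.mapL (Complex.imCLM.comp ((qfCLM x).restrictScalars ℝ))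
      have h3 : (fun k => (Complex.imCLM.comp ((qfCLM x).restrictScalars ℝ))
            (((t ^ k * ((k.factorial : ℝ))⁻¹ : ℝ) : ℂ) • (Φ ^ k) ρ))
          = fun _ => (0 : ℝ) := by
        funext k
        show (star x ⬝ᵥ (((t ^ k * ((k.factorial : ℝ))⁻¹ : ℝ) : ℂ) • (Φ ^ k) ρ) *ᵥ x).im = _
        rw [Matrix.smul_mulVec, dotProduct_smul, smul_eq_mul, Complex.im_ofReal_mul,
          ← (hqfre k x).2, mul_zero]
      rw [h3] at h2
      exact (h2.unique hasSum_zero)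
    have hσpsd : σ.PosSemidef := by
      refine Matrix.PosSemidef.of_dotProduct_mulVec_nonneg hσH fun x => ?_
      rw [Complex.nonneg_iff]
      exact ⟨(hre x).nonneg fun k => mul_nonneg (hc k).le (hqfre k x).1, (him x).symm⟩
    have hker : ∀ x, σ *ᵥ x = 0 → ∀ k, (Φ ^ k) ρ *ᵥ x = 0 := by
      intro x hx k
      have hq0 : (star x ⬝ᵥ σ *ᵥ x) = 0 := by rw [hx, dotProduct_zero]
      have h2 := hre x
      rw [hq0, Complex.zero_re] at h2
      have hnn : ∀ j, 0 ≤ (t ^ j * ((j.factorial : ℝ))⁻¹) * (star x ⬝ᵥ ((Φ ^ j) ρ) *ᵥ x).re :=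
        fun j => mul_nonneg (hc j).le (hqfre j x).1
      have h3 := (hasSum_zero_iff_of_nonneg hnn).mp h2
      have h4 : (t ^ k * ((k.factorial : ℝ))⁻¹) * (star x ⬝ᵥ ((Φ ^ k) ρ) *ᵥ x).re = 0 :=
        congrFun h3 k
      have h5 : (star x ⬝ᵥ ((Φ ^ k) ρ) *ᵥ x).re = 0 := by
        rcases mul_eq_zero.mp h4 with h | h
        · exact absurd h (hc k).ne'
        · exact h
      have h6 : (star x ⬝ᵥ ((Φ ^ k) ρ) *ᵥ x) = 0 := Complex.ext h5 (hqfre k x).2.symm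
      exact ((hterm k).dotProduct_mulVec_zero_iff x).mp h6
    obtain ⟨P, hPH, hPP, hkerIff, e, he0, heσP⟩ := exists_support_proj hσpsd
    have hσne : σ ≠ 0 := by
      intro h0
      apply hρ0
      apply matrix_eq_zero_of_mulVec
      intro x
      have h1 := hker x (by rw [h0, Matrix.zero_mulVec]) 0
      simpa using h1
    have hPne : P ≠ 0 := by
      intro h0
      exact hσne (matrix_eq_zero_of_mulVec fun x =>
        (hkerIff x).mpr (by rw [h0, Matrix.zero_mulVec]))
    have hPpsd : P.PosSemidef := by
      have h1 : P = Pᴴ * P := by rw [hPH.eq, hPP]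
      rw [h1]
      exact Matrix.posSemidef_conjTranspose_mul_self P
    have hPcorner : P = P * P * P := by rw [hPP, hPP]
    have hΦσ : ∀ x, σ *ᵥ x = 0 → (Φ σ) *ᵥ x = 0 := by
      intro x hx
      have h2 := hsum.mapL ((mvCLM x).comp (LinearMap.toContinuousLinearMap Φ))
      have h3 : (fun k => ((mvCLM x).comp (LinearMap.toContinuousLinearMap Φ))
            (((t ^ k * ((k.factorial : ℝ))⁻¹ : ℝ) : ℂ) • (Φ ^ k) ρ))
          = fun _ => (0 : Fin n → ℂ) := by
        funext k
        show (Φ ((((t ^ k * ((k.factorial : ℝ))⁻¹ : ℝ)) : ℂ) • (Φ ^ k) ρ)) *ᵥ x = 0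
        rw [_root_.map_smul, Matrix.smul_mulVec]
        have h4 : Φ ((Φ ^ k) ρ) = (Φ ^ (k + 1)) ρ := by
          rw [pow_succ', Module.End.mul_apply]
        rw [h4, hker x hx (k + 1), smul_zero]
      rw [h3] at h2
      exact (h2.unique hasSum_zero)
    have hΦcorner : ∀ M : Mat n, M.PosSemidef → M = P * M * P →
        ∀ x, σ *ᵥ x = 0 → (Φ M) *ᵥ x = 0 := by
      intro M hM hMc x hx
      obtain ⟨b, hb0, h1, _⟩ := exists_smul_one_psd hM.1
      have hcPM : ((b : ℂ) • P - M).PosSemidef := corner_psd_smul_sub hPH hPP hMc h1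
      have hΦσx : (Φ σ) *ᵥ x = 0 := hΦσ x hx
      have hPq : star x ⬝ᵥ (Φ P) *ᵥ x = 0 := by
        have hA := (hpos _ heσP).dotProduct_mulVec_nonneg x
        rw [_root_.map_sub, _root_.map_smul, Matrix.sub_mulVec, dotProduct_sub, Matrix.smul_mulVec,
          dotProduct_smul, hΦσx, dotProduct_zero, smul_zero, zero_sub] at hA
        exact le_antisymm (neg_nonneg.mp hA) ((hpos P hPpsd).dotProduct_mulVec_nonneg x)
      have hΦP : (Φ P) *ᵥ x = 0 := ((hpos P hPpsd).dotProduct_mulVec_zero_iff x).mp hPq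
      have hMq : star x ⬝ᵥ (Φ M) *ᵥ x = 0 := by
        have hA := (hpos _ hcPM).dotProduct_mulVec_nonneg x
        rw [_root_.map_sub, _root_.map_smul, Matrix.sub_mulVec, dotProduct_sub, Matrix.smul_mulVec,
          dotProduct_smul, hΦP, dotProduct_zero, smul_zero, zero_sub] at hA
        exact le_antisymm (neg_nonneg.mp hA) ((hpos _ hM).dotProduct_mulVec_nonneg x)
      exact ((hpos _ hM).dotProduct_mulVec_zero_iff x).mp hMq
    have hinv : ∀ M, Φ (P * M * P) = P * Φ (P * M * P) * P := by
      intro M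
      set C : Mat n := P * M * P with hCdef
      have hCc : C = P * C * P := (corner_idem hPP M).symm
      have hCH : Cᴴ = P * Cᴴ * P := by
        have h1 : Cᴴ = P * Mᴴ * P := by
          rw [hCdef]
          simp only [Matrix.conjTranspose_mul, hPH.eq, Matrix.mul_assoc]
        rw [h1]
        exact (corner_idem hPP Mᴴ).symm
      set A : Mat n := (1 / 2 : ℂ) • (C + Cᴴ) with hAdef
      set B : Mat n := (Complex.I / 2) • (Cᴴ - C) with hBdef
      have hAH : A.IsHermitian := by
        show _ᴴ = _
        rw [hAdef, Matrix.conjTranspose_smul, Matrix.conjTranspose_add,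
          Matrix.conjTranspose_conjTranspose, add_comm Cᴴ C]
        congr 1
        simp
      have hBH : B.IsHermitian := by
        show _ᴴ = _
        rw [hBdef, Matrix.conjTranspose_smul, Matrix.conjTranspose_sub,
          Matrix.conjTranspose_conjTranspose]
        have hs : star (Complex.I / 2) = -(Complex.I / 2) := by
          simp [Complex.star_def, neg_div]
        rw [hs, neg_smul, ← smul_neg, neg_sub]
      have hAc : A = P * A * P := by
        rw [hAdef, Matrix.mul_smul, Matrix.smul_mul, Matrix.mul_add, Matrix.add_mul,
          ← hCc, ← hCH]
      have hBc : B = P * B * P := by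
        rw [hBdef, Matrix.mul_smul, Matrix.smul_mul, Matrix.mul_sub, Matrix.sub_mul,
          ← hCc, ← hCH]
      have hCA : C = A + Complex.I • B := by
        rw [hAdef, hBdef, smul_smul]
        have hI : Complex.I * (Complex.I / 2) = -(1 / 2 : ℂ) := by
          rw [mul_div_assoc', Complex.I_mul_I]
          norm_num
        rw [hI]
        module
      -- handle A
      obtain ⟨a, ha0, _, haP⟩ := exists_smul_one_psd hAH
      have h3A : ((a : ℂ) • P + A).PosSemidef := corner_psd_smul_add hPH hPP hAc haP
      have h3Ac : (a : ℂ) • P + A = P * ((a : ℂ) • P + A) * P := smulP_add_corner hPP hAc _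
      have h6A : Φ A = Φ ((a : ℂ) • P + A) - (a : ℂ) • Φ P := by
        simp only [_root_.map_add, _root_.map_smul]
        abel
      have hkerA : ∀ x, P *ᵥ x = 0 → Φ A *ᵥ x = 0 := by
        intro x hx
        have hx' : σ *ᵥ x = 0 := (hkerIff x).mpr hx
        have h4 := hΦcorner _ h3A h3Ac x hx'
        have h5 := hΦcorner P hPpsd hPcorner x hx'
        rw [h6A, Matrix.sub_mulVec, Matrix.smul_mulVec, h4, h5, smul_zero, sub_zero]
      have hAHerm : (Φ A).IsHermitian := by
        rw [h6A]
        exact ((hpos _ h3A).1).sub (real_smul_hermitian (hpos P hPpsd).1 a)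
      have hΦAc : Φ A = P * Φ A * P := herm_corner hPH hPP hAHerm hkerA
      -- handle B
      obtain ⟨b, hb0, _, hbP⟩ := exists_smul_one_psd hBH
      have h3B : ((b : ℂ) • P + B).PosSemidef := corner_psd_smul_add hPH hPP hBc hbP
      have h3Bc : (b : ℂ) • P + B = P * ((b : ℂ) • P + B) * P := smulP_add_corner hPP hBc _
      have h6B : Φ B = Φ ((b : ℂ) • P + B) - (b : ℂ) • Φ P := by
        simp only [_root_.map_add, _root_.map_smul]
        abel
      have hkerB : ∀ x, P *ᵥ x = 0 → Φ B *ᵥ x = 0 := by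
        intro x hx
        have hx' : σ *ᵥ x = 0 := (hkerIff x).mpr hx
        have h4 := hΦcorner _ h3B h3Bc x hx'
        have h5 := hΦcorner P hPpsd hPcorner x hx'
        rw [h6B, Matrix.sub_mulVec, Matrix.smul_mulVec, h4, h5, smul_zero, sub_zero]
      have hBHerm : (Φ B).IsHermitian := by
        rw [h6B]
        exact ((hpos _ h3B).1).sub (real_smul_hermitian (hpos P hPpsd).1 b)
      have hΦBc : Φ B = P * Φ B * P := herm_corner hPH hPP hBHerm hkerB
      -- combine
      have hsplit : Φ C = Φ A + Complex.I • Φ B := by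
        rw [hCA]
        simp only [_root_.map_add, _root_.map_smul]
      rw [hsplit, Matrix.mul_add, Matrix.add_mul, Matrix.mul_smul, Matrix.smul_mul,
        ← hΦAc, ← hΦBc]
    rcases hirr P hPH hPP hinv with hP0 | hP1
    · exact absurd hP0 hPne
    · refine Matrix.PosDef.of_dotProduct_mulVec_pos hσH fun x hx0 => ?_
      have h1 : 0 ≤ star x ⬝ᵥ σ *ᵥ x := hσpsd.dotProduct_mulVec_nonneg x
      refine lt_of_le_of_ne h1 fun h0 => hx0 ?_
      have h2 : σ *ᵥ x = 0 := (hσpsd.dotProduct_mulVec_zero_iff x).mp h0.symm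
      have h3 := (hkerIff x).mp h2
      rw [hP1, Matrix.one_mulVec] at h3
      exact h3
  · -- ergodic → irreducible
    intro herg P hPH hPP hinv
    by_cases hP0 : P = 0
    · exact Or.inl hP0
    right
    have hPpsd : P.PosSemidef := by
      have h1 : P = Pᴴ * P := by rw [hPH.eq, hPP]
      rw [h1]
      exact Matrix.posSemidef_conjTranspose_mul_self P
    have hPD := herg P hPpsd hP0 1 one_pos
    have hsum := hasSum_exp_apply Φ 1 P
    have hcorner : ∀ k, (Φ ^ k) P = P * (Φ ^ k) P * P := by
      intro k
      induction k with
      | zero =>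
        simp only [pow_zero, Module.End.one_apply]
        rw [hPP, hPP]
      | succ k ih =>
        rw [pow_succ', Module.End.mul_apply]
        calc Φ ((Φ ^ k) P) = Φ (P * (Φ ^ k) P * P) := by rw [← ih]
        _ = P * Φ (P * (Φ ^ k) P * P) * P := hinv _
        _ = P * Φ ((Φ ^ k) P) * P := by rw [← ih]
    have hD : (@NormedSpace.exp _ _ _ (@NonUnitalSeminormedRing.toIsTopologicalRing _ ContinuousLinearMap.toNormedRing.toNonUnitalNormedRing.toNonUnitalSeminormedRing) ((1 : ℝ) • LinearMap.toContinuousLinearMap Φ)) P -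
        P * ((@NormedSpace.exp _ _ _ (@NonUnitalSeminormedRing.toIsTopologicalRing _ ContinuousLinearMap.toNormedRing.toNonUnitalNormedRing.toNonUnitalSeminormedRing) ((1 : ℝ) • LinearMap.toContinuousLinearMap Φ)) P) * P = 0 := by
      have h2 := hsum.mapL (cornerDiffCLM P)
      have h3 : (fun k => cornerDiffCLM P
            ((((1 : ℝ) ^ k * ((k.factorial : ℝ))⁻¹ : ℝ) : ℂ) • (Φ ^ k) P))
          = fun _ => (0 : Mat n) := by
        funext k
        show (((((1 : ℝ) ^ k * ((k.factorial : ℝ))⁻¹ : ℝ)) : ℂ) • (Φ ^ k) P) -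
          P * ((((((1 : ℝ) ^ k * ((k.factorial : ℝ))⁻¹ : ℝ)) : ℂ)) • (Φ ^ k) P) * P = 0
        rw [Matrix.mul_smul, Matrix.smul_mul, ← smul_sub, ← hcorner k, sub_self, smul_zero]
      rw [h3] at h2
      exact (hasSum_zero.unique h2).symm
    by_contra hP1
    exact corner_not_posdef hPP hP1 (sub_eq_zero.mp hD) hPD
end

section
/- Let Φ(ρ) = ∑_κ A_κ ρ A_κ* be a completely positive map on n×n complex matrices with Kraus operators (A_κ). Then Φ is irreducible (no nontrivial reducing projection) if and only if for every nonzero φ ∈ ℂⁿ, the set ℂ[A]·φ of all vectors p(A_{κ₁},…,A_{κ_m})φ, where p ranges over all (noncommutative) products A_{κ₁}⋯A_{κ_m} with m ≥ 0, spans ℂⁿ. -/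
open Matrix
open scoped ComplexOrder

private lemma mulVec_ext' {n : ℕ} {M N : Matrix (Fin n) (Fin n) ℂ}
    (h : ∀ x, M *ᵥ x = N *ᵥ x) : M = N :=
  Matrix.toLin'.injective (LinearMap.ext fun x => by simp [Matrix.toLin'_apply, h x])

private lemma sum_mulVec' {n : ℕ} {K : Type*} [Fintype K] (M : K → Matrix (Fin n) (Fin n) ℂ)
    (x : Fin n → ℂ) : (∑ κ, M κ) *ᵥ x = ∑ κ, M κ *ᵥ x := by
  funext i
  simp only [Matrix.mulVec, dotProduct, Matrix.sum_apply, Finset.sum_apply,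
    Finset.sum_mul]
  rw [Finset.sum_comm]

private lemma dot_sum' {n : ℕ} {K : Type*} [Fintype K] (v : Fin n → ℂ) (w : K → Fin n → ℂ) :
    v ⬝ᵥ (∑ κ, w κ) = ∑ κ, v ⬝ᵥ w κ := by
  simp only [dotProduct, Finset.sum_apply, Finset.mul_sum]
  rw [Finset.sum_comm]

private lemma sum_mul_conjTranspose_eq_zero {n : ℕ} {K : Type*} [Fintype K]
    (N : K → Matrix (Fin n) (Fin n) ℂ) (h : ∑ κ, N κ * (N κ)ᴴ = 0) (κ : K) : N κ = 0 := by
  have key : ∀ x : Fin n → ℂ, ∀ κ : K,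
      star x ⬝ᵥ ((N κ * (N κ)ᴴ) *ᵥ x) = star ((N κ)ᴴ *ᵥ x) ⬝ᵥ ((N κ)ᴴ *ᵥ x) := by
    intro x κ
    rw [← Matrix.mulVec_mulVec, Matrix.dotProduct_mulVec, Matrix.star_mulVec,
      Matrix.conjTranspose_conjTranspose]
  have hz : ∀ x : Fin n → ℂ, (N κ)ᴴ *ᵥ x = 0 := by
    intro x
    have hsum : ∑ κ, star x ⬝ᵥ ((N κ * (N κ)ᴴ) *ᵥ x) = 0 := by
      rw [← dot_sum', ← sum_mulVec', h, Matrix.zero_mulVec, dotProduct_zero]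
    have hnn : ∀ κ ∈ Finset.univ, (0:ℂ) ≤ star x ⬝ᵥ ((N κ * (N κ)ᴴ) *ᵥ x) := by
      intro κ _
      rw [key]
      exact dotProduct_star_self_nonneg _
    have := (Finset.sum_eq_zero_iff_of_nonneg hnn).1 hsum κ (Finset.mem_univ κ)
    rw [key] at this
    exact dotProduct_star_self_eq_zero.1 this
  have hNt : (N κ)ᴴ = 0 := mulVec_ext' fun x => by rw [hz x, Matrix.zero_mulVec]
  simpa using congrArg Matrix.conjTranspose hNt

private lemma prod_fix {n : ℕ} {K : Type*} (A : K → Matrix (Fin n) (Fin n) ℂ)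
    {P : Matrix (Fin n) (Fin n) ℂ} (hidem : P * P = P)
    (hAP : ∀ κ, A κ * P = P * (A κ * P)) :
    ∀ l : List K, P * ((l.map A).prod * P) = (l.map A).prod * P := by
  intro l
  induction l with
  | nil => simpa using hidem
  | cons κ l ih =>
    simp only [List.map_cons, List.prod_cons]
    have h1 : A κ * (l.map A).prod * P
        = P * ((A κ * P) * ((l.map A).prod * P)) := by
      conv_lhs => rw [Matrix.mul_assoc, ← ih]
      conv_lhs => rw [← Matrix.mul_assoc (A κ) P, hAP κ, Matrix.mul_assoc]
    rw [h1, ← Matrix.mul_assoc, hidem]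

/-- A completely positive map with Kraus operators `(A κ)` is irreducible iff
for every nonzero `φ`, the set of vectors `A_{κ₁} ⋯ A_{κ_m} φ` (products of
Kraus operators, `m ≥ 0`) spans `ℂⁿ`. -/
theorem stmt5 {n : ℕ} {K : Type*} [Fintype K]
    (A : K → Matrix (Fin n) (Fin n) ℂ)
    (Φ : Matrix (Fin n) (Fin n) ℂ →ₗ[ℂ] Matrix (Fin n) (Fin n) ℂ)
    (hΦ : ∀ ρ, Φ ρ = ∑ κ, A κ * ρ * (A κ)ᴴ) :
    (∀ P : Matrix (Fin n) (Fin n) ℂ, P.IsHermitian → P * P = P →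
        (∀ ρ, Φ (P * ρ * P) = P * Φ (P * ρ * P) * P) → P = 0 ∨ P = 1) ↔
    (∀ φ : Fin n → ℂ, φ ≠ 0 →
        Submodule.span ℂ
          {v : Fin n → ℂ | ∃ l : List K, v = ((l.map A).prod).mulVec φ} = ⊤) := by
  constructor
  · -- irreducible → spanning
    intro hirr φ hφ
    set S : Set (Fin n → ℂ) := {v : Fin n → ℂ | ∃ l : List K, v = ((l.map A).prod).mulVec φ}
      with hS
    set V : Submodule ℂ (Fin n → ℂ) := Submodule.span ℂ S with hV
    let V' : Submodule ℂ (EuclideanSpace ℂ (Fin n)) :=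
      V.comap (WithLp.linearEquiv 2 ℂ (Fin n → ℂ)).toLinearMap
    haveI : CompleteSpace V' := FiniteDimensional.complete ℂ V'
    let p : EuclideanSpace ℂ (Fin n) →L[ℂ] EuclideanSpace ℂ (Fin n) :=
      V'.subtypeL ∘L V'.orthogonalProjectionOnto
    set P : Matrix (Fin n) (Fin n) ℂ :=
      Matrix.toEuclideanLin.symm
        (p : EuclideanSpace ℂ (Fin n) →ₗ[ℂ] EuclideanSpace ℂ (Fin n)) with hPdef
    have hPE : Matrix.toEuclideanLin P
        = (p : EuclideanSpace ℂ (Fin n) →ₗ[ℂ] EuclideanSpace ℂ (Fin n)) := by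
      rw [hPdef]; exact LinearEquiv.apply_symm_apply _ _
    have hP_apply : ∀ x : Fin n → ℂ,
        P *ᵥ x = WithLp.equiv 2 (Fin n → ℂ) (p ((WithLp.equiv 2 (Fin n → ℂ)).symm x)) := by
      intro x
      have h : Matrix.toEuclideanLin P ((WithLp.equiv 2 (Fin n → ℂ)).symm x) =
          (WithLp.equiv 2 (Fin n → ℂ)).symm (P *ᵥ x) := Matrix.toEuclideanLin_apply_piLp_toLp P x
      rw [hPE] at h
      calc P *ᵥ x
          = WithLp.equiv 2 (Fin n → ℂ) ((WithLp.equiv 2 (Fin n → ℂ)).symm (P *ᵥ x)) :=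
            (Equiv.apply_symm_apply _ _).symm
        _ = _ := by rw [← h]; rfl
    have hmemV' : ∀ u : EuclideanSpace ℂ (Fin n),
        u ∈ V' ↔ WithLp.equiv 2 (Fin n → ℂ) u ∈ V := fun u => Iff.rfl
    have hpV' : ∀ u, p u ∈ V' := fun u => by
      simp only [p, ContinuousLinearMap.comp_apply, Submodule.subtypeL_apply]
      exact SetLike.coe_mem _
    have hfixp : ∀ u ∈ V', p u = u := fun u hu => by
      simp only [p, ContinuousLinearMap.comp_apply, Submodule.subtypeL_apply]
      exact (Submodule.starProjection_eq_self_iff (K := V')).2 hu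
    have hmem : ∀ x, P *ᵥ x ∈ V := fun x => by
      rw [hP_apply]; exact (hmemV' _).1 (hpV' _)
    have hfix : ∀ v ∈ V, P *ᵥ v = v := by
      intro v hv
      rw [hP_apply, hfixp _ ((hmemV' _).2 (by rwa [Equiv.apply_symm_apply]))]
      exact Equiv.apply_symm_apply _ _
    have hidem : P * P = P := mulVec_ext' fun x => by
      rw [← Matrix.mulVec_mulVec]; exact hfix _ (hmem x)
    have hherm : P.IsHermitian := Matrix.isHermitian_iff_isSymmetric.2
      (by rw [hPE]; exact V'.starProjection_isSymmetric)
    have hinv : ∀ κ, ∀ v ∈ V, A κ *ᵥ v ∈ V := by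
      intro κ
      have hmap : V.map (A κ).mulVecLin ≤ V := by
        rw [hV, Submodule.map_span, Submodule.span_le]
        rintro _ ⟨v, ⟨l, rfl⟩, rfl⟩
        exact Submodule.subset_span
          ⟨κ :: l, by simp [Matrix.mulVecLin_apply, Matrix.mulVec_mulVec]⟩
      intro v hv
      exact hmap (Submodule.mem_map_of_mem hv)
    have hAP : ∀ κ, A κ * P = P * (A κ * P) := fun κ => mulVec_ext' fun x => by
      rw [← Matrix.mulVec_mulVec, ← Matrix.mulVec_mulVec, ← Matrix.mulVec_mulVec]
      exact (hfix _ (hinv κ _ (hmem x))).symm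
    have hterm : ∀ ρ κ, A κ * (P * ρ * P) * (A κ)ᴴ
        = P * (A κ * (P * ρ * P) * (A κ)ᴴ) * P := by
      intro ρ κ
      have hD : P * (A κ)ᴴ = P * (A κ)ᴴ * P := by
        have h := congrArg Matrix.conjTranspose (hAP κ)
        simpa only [Matrix.conjTranspose_mul, hherm.eq] using h
      conv_lhs => rw [show A κ * (P * ρ * P) * (A κ)ᴴ = (A κ * P) * ρ * (P * (A κ)ᴴ) from by
          simp only [Matrix.mul_assoc], hAP κ, hD]
      simp only [Matrix.mul_assoc]
    have hred : ∀ ρ, Φ (P * ρ * P) = P * Φ (P * ρ * P) * P := by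
      intro ρ
      rw [hΦ, Finset.mul_sum, Finset.sum_mul]
      exact Finset.sum_congr rfl fun κ _ => hterm ρ κ
    rcases hirr P hherm hidem hred with h0 | h1
    · exfalso
      have hφS : φ ∈ S := ⟨[], by simp [Matrix.one_mulVec]⟩
      have := hfix φ (Submodule.subset_span hφS)
      rw [h0, Matrix.zero_mulVec] at this
      exact hφ this.symm
    · rw [Submodule.eq_top_iff']
      intro x
      have := hmem x
      rwa [h1, Matrix.one_mulVec] at this
  · -- spanning → irreducible
    intro hspan P hherm hidem hred
    by_cases hP0 : P = 0
    · exact Or.inl hP0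
    right
    have hx : ∃ x, P *ᵥ x ≠ 0 := by
      by_contra h
      push_neg at h
      exact hP0 (mulVec_ext' fun x => by rw [h x, Matrix.zero_mulVec])
    obtain ⟨x, hφ⟩ := hx
    set φ := P *ᵥ x with hφdef
    have hM : (∑ κ, A κ * P * (A κ)ᴴ) = P * (∑ κ, A κ * P * (A κ)ᴴ) * P := by
      have h := hred 1
      rw [hΦ] at h
      simpa only [mul_one, hidem] using h
    have hB : ∀ κ, (1 - P) * (A κ * P) = 0 := by
      apply sum_mul_conjTranspose_eq_zero (fun κ => (1 - P) * (A κ * P))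
      have h1P : (1 - P)ᴴ = 1 - P := by
        rw [Matrix.conjTranspose_sub, Matrix.conjTranspose_one, hherm.eq]
      have ht : ∀ κ : K, ((1 - P) * (A κ * P)) * ((1 - P) * (A κ * P))ᴴ
          = (1 - P) * (A κ * P * (A κ)ᴴ) * (1 - P) := by
        intro κ
        rw [Matrix.conjTranspose_mul, h1P, Matrix.conjTranspose_mul, hherm.eq]
        simp only [Matrix.mul_assoc]
        rw [← Matrix.mul_assoc P P, hidem]
      have hsum : ∑ κ, ((1 - P) * (A κ * P)) * ((1 - P) * (A κ * P))ᴴ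
          = ∑ κ, (1 - P) * (A κ * P * (A κ)ᴴ) * (1 - P) :=
        Finset.sum_congr rfl fun κ _ => ht κ
      rw [hsum, ← Finset.sum_mul, ← Finset.mul_sum, hM]
      have h0 : (1 - P) * P = 0 := by rw [sub_mul, one_mul, hidem, sub_self]
      simp only [← Matrix.mul_assoc]
      rw [h0]
      simp
    have hAP : ∀ κ, A κ * P = P * (A κ * P) := by
      intro κ
      have h := hB κ
      rwa [sub_mul, one_mul, sub_eq_zero] at h
    have hfixgen := prod_fix A hidem hAP
    let W : Submodule ℂ (Fin n → ℂ) := LinearMap.ker (P.mulVecLin - LinearMap.id)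
    have hWmem : ∀ v, v ∈ W ↔ P *ᵥ v = v := by
      intro v
      rw [LinearMap.mem_ker, LinearMap.sub_apply, LinearMap.id_apply,
        Matrix.mulVecLin_apply, sub_eq_zero]
    have hst : Submodule.span ℂ
        {v : Fin n → ℂ | ∃ l : List K, v = ((l.map A).prod).mulVec φ} ≤ W := by
      rw [Submodule.span_le]
      rintro v ⟨l, rfl⟩
      rw [SetLike.mem_coe, hWmem, hφdef, Matrix.mulVec_mulVec, Matrix.mulVec_mulVec,
        Matrix.mulVec_mulVec, Matrix.mul_assoc P, hfixgen l]
    have htop : (⊤ : Submodule ℂ (Fin n → ℂ)) ≤ W := (hspan φ hφ) ▸ hst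
    exact mulVec_ext' fun v => by
      rw [Matrix.one_mulVec]
      exact (hWmem v).1 (htop trivial)
end

section
/- Let Φ be a positive trace-preserving linear map on n×n complex matrices such that 1 is a simple eigenvalue of Φ. Then the eigenvector for eigenvalue 1 can be normalized to be a state ρ_inv (positive semidefinite with trace 1), and for every state ρ, the Cesàro averages (1/N)∑_{k=0}^{N−1} Φ^k(ρ) converge to ρ_inv as N → ∞. -/
open Matrix
open scoped ComplexOrder

namespace Stmt7Aux

abbrev Mat (n : ℕ) := Matrix (Fin n) (Fin n) ℂ

variable {n : ℕ}

lemma diag_nonneg {M : Matrix (Fin n) (Fin n) ℂ} (hM : M.PosSemidef) (i : Fin n) :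
    0 ≤ M i i := by
  have := hM.dotProduct_mulVec_nonneg (Pi.single i 1)
  simpa [dotProduct, Pi.single_apply, mulVec, apply_ite, Finset.sum_ite_eq'] using this

lemma trace_re_nonneg {M : Matrix (Fin n) (Fin n) ℂ} (hM : M.PosSemidef) :
    0 ≤ M.trace.re := by
  rw [Matrix.trace, Complex.re_sum]
  exact Finset.sum_nonneg fun i _ => (Complex.le_def.mp (diag_nonneg hM i)).1

lemma quad {M : Matrix (Fin n) (Fin n) ℂ} (hM : M.PosSemidef) (i j : Fin n) (c : ℂ) :
    0 ≤ M i i + M i j * c + (starRingEnd ℂ) c * M j i + (starRingEnd ℂ) c * c * M j j := by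
  have := hM.dotProduct_mulVec_nonneg (Pi.single i 1 + Pi.single j c)
  simp only [star_add, ← Pi.single_star, mulVec_add, mulVec_single, dotProduct_add,
    add_dotProduct, single_dotProduct, dotProduct_single, star_one, Pi.smul_apply, Matrix.col_apply,
    op_smul_eq_mul] at this
  convert this using 1
  simp only [Complex.star_def]
  ring

lemma entry_norm_le {M : Matrix (Fin n) (Fin n) ℂ} (hM : M.PosSemidef) (i j : Fin n) :
    ‖M i j‖ ≤ M.trace.re := by
  have htr : M.trace.re = ∑ k, (M k k).re := by rw [Matrix.trace, Complex.re_sum]; rfl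
  have hdre : ∀ k, 0 ≤ (M k k).re := fun k => (Complex.le_def.mp (diag_nonneg hM k)).1
  by_cases hij : i = j
  · subst hij
    have h0 := diag_nonneg hM i
    have : ‖M i i‖ = (M i i).re := by
      have him : (M i i).im = 0 := ((Complex.le_def.mp h0).2).symm
      have hre : M i i = ((M i i).re : ℂ) := by
        apply Complex.ext <;> simp [him]
      rw [hre]
      simp [Real.norm_of_nonneg (hdre i)]
    rw [this, htr]
    exact Finset.single_le_sum (fun k _ => hdre k) (Finset.mem_univ i)
  · by_cases hz : M i j = 0
    · rw [hz, norm_zero, htr]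
      exact Finset.sum_nonneg fun k _ => hdre k
    · set r : ℝ := ‖M i j‖ with hr
      have hrpos : 0 < r := norm_pos_iff.mpr hz
      set c : ℂ := -(starRingEnd ℂ) (M i j) / r with hc
      have key := quad hM i j c
      have hji : M j i = (starRingEnd ℂ) (M i j) := by
        have := hM.1
        rw [Matrix.IsHermitian] at this
        have := congrFun (congrFun this j) i
        simpa [Matrix.conjTranspose_apply] using this.symm
      have hzz : M i j * (starRingEnd ℂ) (M i j) = (r : ℂ) * r := by
        rw [Complex.mul_conj']
        rw [hr]
        ring
      have hmc : M i j * c = -r := by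
        rw [hc]
        field_simp
        linear_combination -hzz
      have hcc : (starRingEnd ℂ) c * M j i = -r := by
        rw [hc, hji]
        simp only [map_neg, map_div₀, Complex.conj_conj, Complex.conj_ofReal]
        field_simp
        linear_combination -hzz
      have hc2 : (starRingEnd ℂ) c * c = 1 := by
        rw [hc]
        simp only [map_neg, map_div₀, Complex.conj_conj, Complex.conj_ofReal]
        field_simp
        linear_combination hzz
      rw [hmc, hcc, hc2] at key
      have hre := (Complex.le_def.mp key).1
      simp only [Complex.add_re, Complex.neg_re, Complex.ofReal_re, Complex.one_re,
        Complex.zero_re, one_mul] at hre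
      -- hre : 0 ≤ (M i i).re + -r + -r + (M j j).re
      have h2 : 2 * r ≤ (M i i).re + (M j j).re := by linarith
      have hsum : (M i i).re + (M j j).re ≤ M.trace.re := by
        rw [htr]
        have : ({i, j} : Finset (Fin n)) ⊆ Finset.univ := Finset.subset_univ _
        calc (M i i).re + (M j j).re = ∑ k ∈ ({i, j} : Finset (Fin n)), (M k k).re := by
              rw [Finset.sum_pair hij]
          _ ≤ ∑ k, (M k k).re := Finset.sum_le_sum_of_subset_of_nonneg this
              (fun k _ _ => hdre k)
      linarith


attribute [local instance] Matrix.normedAddCommGroup Matrix.normedSpace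

lemma psd_norm_le {M : Matrix (Fin n) (Fin n) ℂ} (hM : M.PosSemidef) :
    ‖M‖ ≤ M.trace.re :=
  (Matrix.norm_le_iff (trace_re_nonneg hM)).mpr fun i j => entry_norm_le hM i j

lemma psd_smul {M : Matrix (Fin n) (Fin n) ℂ} (hM : M.PosSemidef) {c : ℝ} (hc : 0 ≤ c) :
    ((c : ℂ) • M).PosSemidef := by
  refine .of_dotProduct_mulVec_nonneg ?_ ?_
  · unfold Matrix.IsHermitian
    rw [conjTranspose_smul, hM.1]
    norm_num
  · intro x
    rw [smul_mulVec, dotProduct_smul]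
    exact smul_nonneg (by exact_mod_cast Complex.zero_le_real.mpr hc) (hM.dotProduct_mulVec_nonneg x)

lemma herm_quad_real {H : Matrix (Fin n) (Fin n) ℂ} (hH : H.IsHermitian) (x : Fin n → ℂ) :
    (starRingEnd ℂ) (star x ⬝ᵥ H *ᵥ x) = star x ⬝ᵥ H *ᵥ x := by
  have h1 : star (star x ⬝ᵥ H *ᵥ x) = star (H *ᵥ x) ⬝ᵥ x := by
    rw [star_dotProduct, star_star]
  rw [Complex.star_def] at h1
  rw [h1, star_mulVec, hH, dotProduct_mulVec]

/-- `c • 1 + H` is PSD when `H` is Hermitian and `c = ∑ ‖H i j‖`. -/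
lemma shift_psd {H : Matrix (Fin n) (Fin n) ℂ} (hH : H.IsHermitian) :
    (((∑ i, ∑ j, ‖H i j‖ : ℝ) : ℂ) • 1 + H).PosSemidef := by
  set c : ℝ := ∑ i, ∑ j, ‖H i j‖ with hc
  refine .of_dotProduct_mulVec_nonneg ?_ ?_
  · unfold Matrix.IsHermitian
    rw [conjTranspose_add, conjTranspose_smul, hH]
    norm_num
  · intro x
    rw [add_mulVec, dotProduct_add, smul_mulVec, one_mulVec, dotProduct_smul]
    set q : ℂ := star x ⬝ᵥ H *ᵥ x with hq
    set s : ℝ := ∑ k, ‖x k‖ ^ 2 with hs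
    have hsx : star x ⬝ᵥ x = (s : ℂ) := by
      rw [hs, dotProduct]
      push_cast
      refine Finset.sum_congr rfl fun k _ => ?_
      rw [Pi.star_apply, Complex.star_def, Complex.conj_mul']
    have hqre : (starRingEnd ℂ) q = q := herm_quad_real hH x
    have hqim : q.im = 0 := by
      have := congrArg Complex.im hqre
      simp only [Complex.conj_im] at this
      linarith
    have hqnorm : ‖q‖ ≤ c * s := by
      rw [hq, dotProduct]
      calc ‖∑ k, star x k * (H *ᵥ x) k‖ ≤ ∑ k, ‖star x k * (H *ᵥ x) k‖ :=
            norm_sum_le _ _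
        _ ≤ ∑ k, ∑ l, ‖x k‖ * (‖H k l‖ * ‖x l‖) := by
            refine Finset.sum_le_sum fun k _ => ?_
            rw [norm_mul, Pi.star_apply, norm_star, mulVec, dotProduct]
            rw [← Finset.mul_sum]
            refine mul_le_mul_of_nonneg_left ?_ (norm_nonneg _)
            calc ‖∑ l, H k l * x l‖ ≤ ∑ l, ‖H k l * x l‖ := norm_sum_le _ _
              _ = ∑ l, ‖H k l‖ * ‖x l‖ := by simp [norm_mul]
        _ ≤ ∑ k, ∑ l, ‖H k l‖ * s := by
            refine Finset.sum_le_sum fun k _ => Finset.sum_le_sum fun l _ => ?_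
            rw [← mul_assoc, mul_comm (‖x k‖), mul_assoc]
            refine mul_le_mul_of_nonneg_left ?_ (norm_nonneg _)
            have hks : ∀ m, ‖x m‖ ^ 2 ≤ s := fun m =>
              Finset.single_le_sum (fun i _ => sq_nonneg ‖x i‖) (Finset.mem_univ m)
            nlinarith [sq_nonneg (‖x k‖ - ‖x l‖), hks k, hks l]
        _ = c * s := by rw [hc, Finset.sum_mul]; exact Finset.sum_congr rfl fun k _ => by rw [Finset.sum_mul]
    rw [hsx]
    rw [smul_eq_mul, Complex.le_def]
    constructor
    · simp only [Complex.add_re, Complex.mul_re, Complex.ofReal_re, Complex.ofReal_im,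
        Complex.zero_re, mul_zero, sub_zero]
      have : |q.re| ≤ ‖q‖ := Complex.abs_re_le_norm q
      have habs : |q.re| ≤ c * s := le_trans this hqnorm
      have := abs_le.mp habs
      linarith
    · simp [hqim, Complex.ofReal_im]



section PTP
variable {Φ : Matrix (Fin n) (Fin n) ℂ →ₗ[ℂ] Matrix (Fin n) (Fin n) ℂ}
  (hpos : ∀ ρ, ρ.PosSemidef → (Φ ρ).PosSemidef)
  (htr : ∀ ρ, (Φ ρ).trace = ρ.trace)

include hpos in
lemma pow_pos : ∀ (k : ℕ) ρ, ρ.PosSemidef → ((Φ ^ k) ρ).PosSemidef := by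
  intro k
  induction k with
  | zero => intro ρ h; simpa using h
  | succ k ih =>
    intro ρ h
    rw [pow_succ, Module.End.mul_apply]
    exact ih _ (hpos _ h)

include htr in
lemma pow_tr : ∀ (k : ℕ) ρ, ((Φ ^ k) ρ).trace = ρ.trace := by
  intro k
  induction k with
  | zero => intro ρ; simp
  | succ k ih =>
    intro ρ
    rw [pow_succ, Module.End.mul_apply, ih, htr]

include hpos htr in
lemma orbit_bound (M : Matrix (Fin n) (Fin n) ℂ) :
    ∃ C : ℝ, 0 ≤ C ∧ ∀ k : ℕ, ‖(Φ ^ k) M‖ ≤ C := by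
  have herm : ∀ H : Matrix (Fin n) (Fin n) ℂ, H.IsHermitian →
      ∃ C : ℝ, 0 ≤ C ∧ ∀ k : ℕ, ‖(Φ ^ k) H‖ ≤ C := by
    intro H hH
    set c : ℝ := ∑ i, ∑ j, ‖H i j‖ with hc
    have hc0 : 0 ≤ c :=
      Finset.sum_nonneg fun i _ => Finset.sum_nonneg fun j _ => norm_nonneg _
    have hP : (((c : ℝ) : ℂ) • 1 + H).PosSemidef := shift_psd hH
    have hQ : (((c : ℝ) : ℂ) • (1 : Matrix (Fin n) (Fin n) ℂ)).PosSemidef :=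
      psd_smul Matrix.PosSemidef.one hc0
    refine ⟨(((c : ℝ) : ℂ) • (1 : Matrix (Fin n) (Fin n) ℂ) + H).trace.re
      + (((c : ℝ) : ℂ) • (1 : Matrix (Fin n) (Fin n) ℂ)).trace.re,
      add_nonneg (trace_re_nonneg hP) (trace_re_nonneg hQ), fun k => ?_⟩
    have h1 : (Φ ^ k) H = (Φ ^ k) (((c : ℝ) : ℂ) • 1 + H)
        - (Φ ^ k) (((c : ℝ) : ℂ) • (1 : Matrix (Fin n) (Fin n) ℂ)) := by
      rw [← map_sub]
      congr 1
      abel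
    rw [h1]
    refine le_trans (norm_sub_le _ _) (add_le_add ?_ ?_)
    · refine le_trans (psd_norm_le (pow_pos hpos k _ hP)) ?_
      rw [pow_tr htr]
    · refine le_trans (psd_norm_le (pow_pos hpos k _ hQ)) ?_
      rw [pow_tr htr]
  obtain ⟨C₁, hC₁0, hC₁⟩ := herm ((2⁻¹ : ℂ) • (M + Mᴴ)) (by
    unfold Matrix.IsHermitian
    rw [conjTranspose_smul, conjTranspose_add, conjTranspose_conjTranspose]
    rw [show (star (2⁻¹ : ℂ)) = (2⁻¹ : ℂ) by norm_num [Complex.star_def]]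
    rw [add_comm Mᴴ M])
  obtain ⟨C₂, hC₂0, hC₂⟩ := herm (((2 * Complex.I)⁻¹ : ℂ) • (M - Mᴴ)) (by
    unfold Matrix.IsHermitian
    rw [conjTranspose_smul, conjTranspose_sub, conjTranspose_conjTranspose]
    rw [show (star ((2 * Complex.I)⁻¹ : ℂ)) = -((2 * Complex.I)⁻¹ : ℂ) by
      simp [Complex.star_def, Complex.ext_iff]]
    rw [neg_smul, ← smul_neg, neg_sub])
  refine ⟨C₁ + C₂, add_nonneg hC₁0 hC₂0, fun k => ?_⟩
  have hdecomp : M = (2⁻¹ : ℂ) • (M + Mᴴ)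
      + Complex.I • (((2 * Complex.I)⁻¹ : ℂ) • (M - Mᴴ)) := by
    rw [smul_smul]
    have : Complex.I * (2 * Complex.I)⁻¹ = (2⁻¹ : ℂ) := by
      field_simp
    rw [this, ← smul_add]
    rw [show M + Mᴴ + (M - Mᴴ) = (2 : ℂ) • M by rw [two_smul]; abel]
    rw [smul_smul]
    norm_num
  calc ‖(Φ ^ k) M‖
      = ‖(Φ ^ k) ((2⁻¹ : ℂ) • (M + Mᴴ))
        + Complex.I • (Φ ^ k) (((2 * Complex.I)⁻¹ : ℂ) • (M - Mᴴ))‖ := by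
        rw [← _root_.map_smul (Φ ^ k), ← map_add, ← hdecomp]
    _ ≤ ‖(Φ ^ k) ((2⁻¹ : ℂ) • (M + Mᴴ))‖
        + ‖Complex.I • (Φ ^ k) (((2 * Complex.I)⁻¹ : ℂ) • (M - Mᴴ))‖ := norm_add_le _ _
    _ ≤ C₁ + C₂ := by
        refine add_le_add (hC₁ k) ?_
        rw [norm_smul, Complex.norm_I, one_mul]
        exact hC₂ k

include hpos htr in
lemma cesaro_to_zero (y : Matrix (Fin n) (Fin n) ℂ) :
    Filter.Tendsto (fun N : ℕ => (N : ℂ)⁻¹ • ((Φ ^ N) y - y)) Filter.atTop (nhds 0) := by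
  obtain ⟨C, hC0, hC⟩ := orbit_bound hpos htr y
  refine squeeze_zero_norm (a := fun N : ℕ => (C + ‖y‖) / N) (fun N => ?_)
    (tendsto_const_div_atTop_nhds_zero_nat _)
  · rw [norm_smul]
    have h1 : ‖((N : ℕ) : ℂ)⁻¹‖ = ((N : ℝ))⁻¹ := by
      rw [norm_inv, Complex.norm_natCast]
    rw [h1]
    show (N : ℝ)⁻¹ * ‖(Φ ^ N) y - y‖ ≤ (C + ‖y‖) / (N : ℝ)
    rw [div_eq_mul_inv, mul_comm]
    refine mul_le_mul_of_nonneg_right ?_ (inv_nonneg.mpr (Nat.cast_nonneg N))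
    exact le_trans (norm_sub_le _ _) (add_le_add (hC N) le_rfl)

lemma pow_fixed {x : Matrix (Fin n) (Fin n) ℂ} (hx : Φ x = x) (k : ℕ) : (Φ ^ k) x = x := by
  induction k with
  | zero => simp
  | succ k ih => rw [pow_succ, Module.End.mul_apply, hx, ih]

lemma sum_apply_eq {ρ x y : Matrix (Fin n) (Fin n) ℂ} (hx : Φ x = x)
    (hρ : ρ = x + (Φ - LinearMap.id : Mat n →ₗ[ℂ] Mat n) y) (N : ℕ) :
    ∑ k ∈ Finset.range N, (Φ ^ k) ρ = N • x + ((Φ ^ N) y - y) := by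
  have h1 : ∀ k : ℕ, (Φ ^ k) ρ = x + ((Φ ^ (k + 1)) y - (Φ ^ k) y) := by
    intro k
    rw [hρ, map_add, pow_fixed hx, LinearMap.sub_apply, LinearMap.id_apply, map_sub,
      pow_succ, Module.End.mul_apply]
  calc ∑ k ∈ Finset.range N, (Φ ^ k) ρ
      = ∑ k ∈ Finset.range N, (x + ((Φ ^ (k + 1)) y - (Φ ^ k) y)) :=
        Finset.sum_congr rfl fun k _ => h1 k
    _ = N • x + ∑ k ∈ Finset.range N, ((Φ ^ (k + 1)) y - (Φ ^ k) y) := by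
        rw [Finset.sum_add_distrib, Finset.sum_const, Finset.card_range]
    _ = N • x + ((Φ ^ N) y - y) := by
        rw [Finset.sum_range_sub (fun k => (Φ ^ k) y)]
        simp

include hpos htr in
lemma cesaro_tendsto {ρ x y : Matrix (Fin n) (Fin n) ℂ} (hx : Φ x = x)
    (hρ : ρ = x + (Φ - LinearMap.id : Mat n →ₗ[ℂ] Mat n) y) :
    Filter.Tendsto (fun N : ℕ => (N : ℂ)⁻¹ • ∑ k ∈ Finset.range N, (Φ ^ k) ρ)
      Filter.atTop (nhds x) := by
  have hev : ∀ᶠ N : ℕ in Filter.atTop,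
      x + (N : ℂ)⁻¹ • ((Φ ^ N) y - y) = (N : ℂ)⁻¹ • ∑ k ∈ Finset.range N, (Φ ^ k) ρ := by
    filter_upwards [Filter.eventually_ge_atTop 1] with N hN
    rw [sum_apply_eq hx hρ, smul_add]
    congr 1
    rw [← Nat.cast_smul_eq_nsmul ℂ N x, smul_smul, inv_mul_cancel₀ (by exact_mod_cast Nat.one_le_iff_ne_zero.mp hN : (N : ℂ) ≠ 0)]
    simp
  have h2 : Filter.Tendsto (fun N : ℕ => x + (N : ℂ)⁻¹ • ((Φ ^ N) y - y))
      Filter.atTop (nhds x) := by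
    have := (tendsto_const_nhds (x := x) (f := Filter.atTop (α := ℕ))).add
      (cesaro_to_zero hpos htr y)
    simpa using this
  exact Filter.Tendsto.congr' hev h2

include hpos htr in
lemma decomp (ρ : Matrix (Fin n) (Fin n) ℂ) :
    ∃ x y : Matrix (Fin n) (Fin n) ℂ, Φ x = x ∧ ρ = x + (Φ - LinearMap.id : Mat n →ₗ[ℂ] Mat n) y := by
  set T : Mat n →ₗ[ℂ] Mat n := Φ - LinearMap.id with hT
  have hdisj : LinearMap.ker T ⊓ LinearMap.range T = ⊥ := by
    rw [Submodule.eq_bot_iff]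
    intro z hz
    obtain ⟨hzk, hzr⟩ := Submodule.mem_inf.mp hz
    obtain ⟨y, hy⟩ := hzr
    have hzfix : Φ z = z := by
      have h := LinearMap.mem_ker.mp hzk
      rw [hT, LinearMap.sub_apply, LinearMap.id_apply, sub_eq_zero] at h
      exact h
    have key : ∀ N : ℕ, N • z = (Φ ^ N) y - y := by
      intro N
      have hz0T : z = 0 + (Φ - LinearMap.id : Mat n →ₗ[ℂ] Mat n) y := by
        rw [zero_add, ← hT, hy]
      have h1 := sum_apply_eq (Φ := Φ) (x := (0 : Mat n)) (map_zero Φ) hz0T N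
      have h2 : ∑ k ∈ Finset.range N, (Φ ^ k) z = N • z := by
        rw [Finset.sum_congr rfl fun k _ => pow_fixed hzfix k, Finset.sum_const,
          Finset.card_range]
      rw [h2, smul_zero, zero_add] at h1
      exact h1
    obtain ⟨C, hC0, hC⟩ := orbit_bound hpos htr y
    by_contra hz0
    have hznorm : 0 < ‖z‖ := norm_pos_iff.mpr hz0
    obtain ⟨N, hN⟩ := exists_nat_gt ((C + ‖y‖) / ‖z‖)
    have hNz : (N : ℝ) * ‖z‖ ≤ C + ‖y‖ := by
      have h3 : ‖(N • z : Matrix (Fin n) (Fin n) ℂ)‖ = (N : ℝ) * ‖z‖ := by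
        rw [← Nat.cast_smul_eq_nsmul ℂ N z, norm_smul, Complex.norm_natCast]
      rw [← h3, key N]
      exact le_trans (norm_sub_le _ _) (add_le_add (hC N) le_rfl)
    have := (div_lt_iff₀ hznorm).mp hN
    linarith
  have hrank := LinearMap.finrank_range_add_finrank_ker T
  have hsupinf := Submodule.finrank_sup_add_finrank_inf_eq (LinearMap.ker T) (LinearMap.range T)
  rw [hdisj] at hsupinf
  simp only [finrank_bot, add_zero] at hsupinf
  have hsup : LinearMap.ker T ⊔ LinearMap.range T = ⊤ := by
    apply Submodule.eq_top_of_finrank_eq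
    omega
  have hρmem : ρ ∈ LinearMap.ker T ⊔ LinearMap.range T := by
    rw [hsup]; trivial
  obtain ⟨x, hxk, w, hwr, hxw⟩ := Submodule.mem_sup.mp hρmem
  obtain ⟨y, hy⟩ := hwr
  refine ⟨x, y, ?_, ?_⟩
  · have h := LinearMap.mem_ker.mp hxk
    rw [hT, LinearMap.sub_apply, LinearMap.id_apply, sub_eq_zero] at h
    exact h
  · rw [← hxw, ← hy]

lemma psd_of_tendsto {f : ℕ → Mat n} {x : Mat n} (hf : ∀ N, (f N).PosSemidef)
    (hx : Filter.Tendsto f Filter.atTop (nhds x)) : x.PosSemidef := by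
  refine .of_dotProduct_mulVec_nonneg ?_ ?_
  · show xᴴ = x
    ext i j
    rw [conjTranspose_apply]
    have hcont1 : Continuous fun M : Mat n => M i j :=
      (continuous_apply j).comp (continuous_apply i)
    have h1 : Filter.Tendsto (fun N => (f N) i j) Filter.atTop (nhds (x i j)) :=
      (hcont1.tendsto x).comp hx
    have hcont2 : Continuous fun M : Mat n => star (M j i) :=
      continuous_star.comp ((continuous_apply i).comp (continuous_apply j))
    have h2 : Filter.Tendsto (fun N => star ((f N) j i)) Filter.atTop (nhds (star (x j i))) :=
      (hcont2.tendsto x).comp hx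
    have heq : (fun N => star ((f N) j i)) = fun N => (f N) i j :=
      funext fun N => ((hf N).1.apply i j)
    rw [heq] at h2
    exact tendsto_nhds_unique h2 h1
  · intro v
    set L : Mat n →ₗ[ℂ] ℂ :=
      { toFun := fun M => star v ⬝ᵥ M *ᵥ v
        map_add' := fun a b => by simp only [add_mulVec, dotProduct_add]
        map_smul' := fun c a => by
          simp only [smul_mulVec, dotProduct_smul, RingHom.id_apply] } with hL
    have hLc : Continuous L := LinearMap.continuous_of_finiteDimensional L
    have h3 : Filter.Tendsto (fun N => L (f N)) Filter.atTop (nhds (L x)) :=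
      (hLc.tendsto x).comp hx
    have hre : 0 ≤ (L x).re := by
      refine ge_of_tendsto' ((Complex.continuous_re.tendsto _).comp h3) fun N => ?_
      exact (Complex.le_def.mp ((hf N).dotProduct_mulVec_nonneg v)).1
    have him : (L x).im = 0 := by
      have h4 : Filter.Tendsto (fun N => (L (f N)).im) Filter.atTop (nhds ((L x).im)) :=
        (Complex.continuous_im.tendsto _).comp h3
      have heq : (fun N => (L (f N)).im) = fun _ => (0 : ℝ) := by
        funext N
        have h5 := (Complex.le_def.mp ((hf N).dotProduct_mulVec_nonneg v)).2
        show (star v ⬝ᵥ f N *ᵥ v).im = 0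
        simpa using h5.symm
      rw [heq] at h4
      exact (tendsto_nhds_unique h4 tendsto_const_nhds)
    exact Complex.le_def.mpr ⟨hre, him.symm⟩

end PTP
end Stmt7Aux

open Stmt7Aux in
/-- If a positive trace-preserving map on n×n matrices has `1` as a simple
eigenvalue, the corresponding eigenvector normalizes to an invariant state
`ρinv`, and Cesàro averages of the iterates on any state converge to `ρinv`. -/
theorem stmt7 {n : ℕ}
    (Φ : Matrix (Fin n) (Fin n) ℂ →ₗ[ℂ] Matrix (Fin n) (Fin n) ℂ)
    (hpos : ∀ ρ, ρ.PosSemidef → (Φ ρ).PosSemidef)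
    (htr : ∀ ρ, (Φ ρ).trace = ρ.trace)
    (hsimple : Module.finrank ℂ (LinearMap.ker (Φ - LinearMap.id)) = 1) :
    ∃ ρinv : Matrix (Fin n) (Fin n) ℂ, ρinv.PosSemidef ∧ ρinv.trace = 1 ∧
      Φ ρinv = ρinv ∧
      ∀ ρ : Matrix (Fin n) (Fin n) ℂ, ρ.PosSemidef → ρ.trace = 1 →
        Filter.Tendsto (fun N : ℕ => (N : ℂ)⁻¹ • ∑ k ∈ Finset.range N, (Φ ^ k) ρ)
          Filter.atTop (nhds ρinv) := by
  classical
  have hn : n ≠ 0 := by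
    rintro rfl
    haveI : Subsingleton (Matrix (Fin 0) (Fin 0) ℂ) :=
      ⟨fun A B => by ext i j; exact i.elim0⟩
    haveI : Subsingleton ↥(LinearMap.ker (Φ - LinearMap.id)) :=
      ⟨fun a b => Subtype.ext (Subsingleton.elim _ _)⟩
    rw [Module.finrank_zero_of_subsingleton] at hsimple
    omega
  set ρ₀ : Matrix (Fin n) (Fin n) ℂ := (((n : ℝ)⁻¹ : ℝ) : ℂ) • (1 : Matrix (Fin n) (Fin n) ℂ)
    with hρ₀
  have hρ₀psd : ρ₀.PosSemidef :=
    psd_smul Matrix.PosSemidef.one (inv_nonneg.mpr (Nat.cast_nonneg n))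
  have hρ₀tr : ρ₀.trace = 1 := by
    rw [hρ₀, trace_smul, trace_one, Fintype.card_fin, smul_eq_mul]
    push_cast
    field_simp
  have htr0 : ∀ y, ((Φ - LinearMap.id : Mat n →ₗ[ℂ] Mat n) y).trace = 0 := fun y => by
    rw [LinearMap.sub_apply, LinearMap.id_apply, trace_sub, htr, sub_self]
  obtain ⟨x₀, y₀, hx₀fix, hρ₀d⟩ := decomp hpos htr ρ₀
  have hx₀lim := cesaro_tendsto hpos htr hx₀fix hρ₀d
  have hAN_psd : ∀ N : ℕ,
      ((N : ℂ)⁻¹ • ∑ k ∈ Finset.range N, (Φ ^ k) ρ₀).PosSemidef := by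
    intro N
    have hsum : (∑ k ∈ Finset.range N, (Φ ^ k) ρ₀).PosSemidef := by
      induction N with
      | zero => simpa using Matrix.PosSemidef.zero
      | succ N ih =>
        rw [Finset.sum_range_succ]
        exact ih.add (pow_pos hpos N ρ₀ hρ₀psd)
    have hcast : ((N : ℂ))⁻¹ = (((N : ℝ)⁻¹ : ℝ) : ℂ) := by push_cast; rfl
    rw [hcast]
    exact psd_smul hsum (inv_nonneg.mpr (Nat.cast_nonneg N))
  have hx₀psd : x₀.PosSemidef := psd_of_tendsto hAN_psd hx₀lim
  have hx₀tr : x₀.trace = 1 := by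
    have h := congrArg Matrix.trace hρ₀d
    rw [trace_add, htr0, add_zero, hρ₀tr] at h
    exact h.symm
  have hx₀ne : x₀ ≠ 0 := by
    intro h
    rw [h, trace_zero] at hx₀tr
    exact one_ne_zero hx₀tr.symm
  have hker : ∀ {w : Matrix (Fin n) (Fin n) ℂ}, Φ w = w →
      w ∈ LinearMap.ker (Φ - LinearMap.id : Mat n →ₗ[ℂ] Mat n) := by
    intro w hw
    rw [LinearMap.mem_ker, LinearMap.sub_apply, LinearMap.id_apply, hw, sub_self]
  refine ⟨x₀, hx₀psd, hx₀tr, hx₀fix, ?_⟩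
  intro ρ hρpsd hρtr
  obtain ⟨x, y, hxfix, hρd⟩ := decomp hpos htr ρ
  have hxlim := cesaro_tendsto hpos htr hxfix hρd
  have hxtr : x.trace = 1 := by
    have h := congrArg Matrix.trace hρd
    rw [trace_add, htr0, add_zero, hρtr] at h
    exact h.symm
  have hspan : Submodule.span ℂ {x₀} = LinearMap.ker (Φ - LinearMap.id : Mat n →ₗ[ℂ] Mat n) := by
    apply Submodule.eq_of_le_of_finrank_le
    · rw [Submodule.span_le, Set.singleton_subset_iff]
      exact hker hx₀fix
    · rw [hsimple, finrank_span_singleton hx₀ne]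
  have hx_mem : x ∈ Submodule.span ℂ ({x₀} : Set (Matrix (Fin n) (Fin n) ℂ)) := by
    rw [hspan]
    exact hker hxfix
  obtain ⟨c, hc⟩ := Submodule.mem_span_singleton.mp hx_mem
  have hc1 : c = 1 := by
    have h := congrArg Matrix.trace hc
    rw [trace_smul, hx₀tr, hxtr, smul_eq_mul, mul_one] at h
    exact h
  rw [hc1, one_smul] at hc
  rw [hc]
  exact hxlim
end

section
/- An irreducible positive trace-preserving map Φ on n×n complex matrices has at most one invariant state, and if an invariant state exists then it is faithful (positive definite). In finite dimension, an invariant state always exists, hence Φ has exactly one invariant state, which is positive definite. -/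
open Matrix
open scoped ComplexOrder

namespace Stmt8Aux

variable {n : ℕ} {A : Matrix (Fin n) (Fin n) ℂ}

private lemma diag_congr (U V : Matrix (Fin n) (Fin n) ℂ) {d e : Fin n → ℂ}
    (h : ∀ i, d i = e i) : U * diagonal d * V = U * diagonal e * V := by
  rw [show d = e from funext h]

lemma cfc_def (hA : A.IsHermitian) (f : ℝ → ℝ) :
    hA.cfc f = (hA.eigenvectorUnitary : Matrix (Fin n) (Fin n) ℂ) *
      diagonal (RCLike.ofReal ∘ f ∘ hA.eigenvalues) *
      star (hA.eigenvectorUnitary : Matrix (Fin n) (Fin n) ℂ) := rfl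

lemma cfc_mul (hA : A.IsHermitian) (f g : ℝ → ℝ) :
    hA.cfc f * hA.cfc g = hA.cfc (fun x => f x * g x) := by
  have key : ∀ {a b c d e f : Matrix (Fin n) (Fin n) ℂ},
      (a*b*c)*(d*e*f) = a*(b*(c*d)*e)*f := by intros; simp only [mul_assoc]
  rw [cfc_def, cfc_def, cfc_def, key]
  simp only [SetLike.coe_mem, Unitary.star_mul_self_of_mem, mul_one, diagonal_mul_diagonal]
  exact diag_congr _ _ fun i => by simp

lemma cfc_sub (hA : A.IsHermitian) (f g : ℝ → ℝ) :
    hA.cfc f - hA.cfc g = hA.cfc (fun x => f x - g x) := by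
  rw [cfc_def, cfc_def, cfc_def,
    ← sub_mul, ← mul_sub, diagonal_sub]
  exact diag_congr _ _ fun i => by simp

lemma cfc_smul (hA : A.IsHermitian) (c : ℝ) (f : ℝ → ℝ) :
    (c : ℂ) • hA.cfc f = hA.cfc (fun x => c * f x) := by
  rw [cfc_def, cfc_def, ← smul_mul_assoc, ← mul_smul_comm,
    ← diagonal_smul]
  exact diag_congr _ _ fun i => by simp

lemma cfc_id (hA : A.IsHermitian) : hA.cfc (fun x => x) = A := by
  rw [Matrix.IsHermitian.cfc]
  exact hA.spectral_theorem.symm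

lemma cfc_one (hA : A.IsHermitian) : hA.cfc (fun _ => 1) = 1 := by
  rw [cfc_def]
  have : diagonal ((RCLike.ofReal ∘ (fun _ => (1:ℝ)) ∘ hA.eigenvalues) : Fin n → ℂ) = 1 := by
    ext i j
    by_cases h : i = j <;> simp [diagonal_apply, Matrix.one_apply, h]
  rw [this, mul_one]
  exact Unitary.mul_star_self_of_mem (SetLike.coe_mem _)

lemma cfc_zero (hA : A.IsHermitian) : hA.cfc (fun _ => 0) = 0 := by
  rw [cfc_def]
  have : diagonal ((RCLike.ofReal ∘ (fun _ => (0:ℝ)) ∘ hA.eigenvalues) : Fin n → ℂ) = 0 := by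
    ext i j; by_cases h : i = j <;> simp [diagonal_apply, h]
  rw [this, mul_zero, zero_mul]

lemma cfc_congr_eig (hA : A.IsHermitian) {f g : ℝ → ℝ}
    (h : ∀ i, f (hA.eigenvalues i) = g (hA.eigenvalues i)) : hA.cfc f = hA.cfc g := by
  rw [Matrix.IsHermitian.cfc, Matrix.IsHermitian.cfc]
  exact diag_congr _ _ fun i => by simp [h i]

lemma cfc_eig_eq_zero (hA : A.IsHermitian) {f : ℝ → ℝ} (h : hA.cfc f = 0) :
    ∀ i, f (hA.eigenvalues i) = 0 := by
  intro i
  rw [cfc_def] at h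
  set eU := (hA.eigenvectorUnitary : Matrix (Fin n) (Fin n) ℂ) with heU
  have h3 : diagonal ((RCLike.ofReal ∘ f ∘ hA.eigenvalues) : Fin n → ℂ) = 0 := by
    calc diagonal ((RCLike.ofReal ∘ f ∘ hA.eigenvalues) : Fin n → ℂ)
        = (star eU * eU) * diagonal (RCLike.ofReal ∘ f ∘ hA.eigenvalues) * (star eU * eU) := by
          rw [Unitary.star_mul_self_of_mem (SetLike.coe_mem _), one_mul, mul_one]
      _ = star eU * (eU * diagonal (RCLike.ofReal ∘ f ∘ hA.eigenvalues) * star eU) * eU := by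
          simp only [mul_assoc]
      _ = 0 := by rw [h, mul_zero, zero_mul]
  have h4 := congrArg (fun M => M i i) h3
  simpa using h4

lemma cfc_isHermitian (hA : A.IsHermitian) (f : ℝ → ℝ) : (hA.cfc f).IsHermitian := by
  rw [cfc_def, Matrix.IsHermitian, ← star_eq_conjTranspose, Matrix.star_mul, Matrix.star_mul,
    star_star, mul_assoc]
  have : star (diagonal ((RCLike.ofReal ∘ f ∘ hA.eigenvalues) : Fin n → ℂ))
      = diagonal ((RCLike.ofReal ∘ f ∘ hA.eigenvalues) : Fin n → ℂ) := by
    rw [star_eq_conjTranspose, diagonal_conjTranspose]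
    exact congrArg diagonal (funext fun i => by simp [Pi.star_def, Complex.conj_ofReal])
  rw [this, ← mul_assoc]

lemma cfc_posSemidef (hA : A.IsHermitian) {f : ℝ → ℝ}
    (h : ∀ i, 0 ≤ f (hA.eigenvalues i)) : (hA.cfc f).PosSemidef := by
  rw [cfc_def, star_eq_conjTranspose]
  refine (posSemidef_diagonal_iff.mpr fun i => ?_).mul_mul_conjTranspose_same _
  simp only [Function.comp_apply]
  rw [RCLike.nonneg_iff]
  constructor <;> simp [h i]

lemma cfc_trace (hA : A.IsHermitian) (f : ℝ → ℝ) :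
    (hA.cfc f).trace = ∑ i, (f (hA.eigenvalues i) : ℂ) := by
  rw [cfc_def, trace_mul_cycle,
    Unitary.star_mul_self_of_mem (SetLike.coe_mem _), one_mul, trace_diagonal]
  simp

end Stmt8Aux

namespace Stmt8Aux

open Matrix
open scoped ComplexOrder

variable {n : ℕ} {A : Matrix (Fin n) (Fin n) ℂ}

noncomputable def posM (hA : A.IsHermitian) : Matrix (Fin n) (Fin n) ℂ :=
  hA.cfc (fun x => max x 0)

noncomputable def negM (hA : A.IsHermitian) : Matrix (Fin n) (Fin n) ℂ :=
  hA.cfc (fun x => max (-x) 0)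

noncomputable def projM (hA : A.IsHermitian) : Matrix (Fin n) (Fin n) ℂ :=
  hA.cfc (fun x => if 0 < x then 1 else 0)

lemma posM_sub_negM (hA : A.IsHermitian) : posM hA - negM hA = A := by
  rw [posM, negM, cfc_sub]
  rw [show (fun x : ℝ => max x 0 - max (-x) 0) = fun x : ℝ => x from
    funext fun x => max_zero_sub_max_neg_zero_eq_self x]
  exact cfc_id hA

lemma posM_posSemidef (hA : A.IsHermitian) : (posM hA).PosSemidef :=
  cfc_posSemidef hA fun i => le_max_right _ _

lemma negM_posSemidef (hA : A.IsHermitian) : (negM hA).PosSemidef :=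
  cfc_posSemidef hA fun i => le_max_right _ _

lemma projM_isHermitian (hA : A.IsHermitian) : (projM hA).IsHermitian :=
  cfc_isHermitian hA _

lemma projM_idem (hA : A.IsHermitian) : projM hA * projM hA = projM hA := by
  rw [projM, cfc_mul]
  exact cfc_congr_eig hA fun i => by split_ifs <;> norm_num

lemma projM_mul_posM (hA : A.IsHermitian) : projM hA * posM hA = posM hA := by
  rw [projM, posM, cfc_mul]
  refine cfc_congr_eig hA fun i => ?_
  rcases lt_or_ge 0 (hA.eigenvalues i) with h | h
  · rw [if_pos h]; ring
  · rw [if_neg (not_lt.mpr h), max_eq_right h]; ring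

lemma projM_conj_eq (hA : A.IsHermitian) : projM hA * A * projM hA = posM hA := by
  have key : projM hA * (posM hA - negM hA) * projM hA = posM hA := by
    rw [projM, posM, negM, cfc_sub, cfc_mul, cfc_mul]
    refine cfc_congr_eig hA fun i => ?_
    rcases lt_or_ge 0 (hA.eigenvalues i) with h | h
    · rw [if_pos h, max_eq_left h.le, max_eq_right (by linarith : -hA.eigenvalues i ≤ 0)]; ring
    · rw [if_neg (not_lt.mpr h), max_eq_right h]; ring
  rw [posM_sub_negM] at key
  exact key

lemma trace_eq_sum_eig (hA : A.IsHermitian) :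
    A.trace = ((∑ i, hA.eigenvalues i : ℝ) : ℂ) := by
  conv_lhs => rw [← cfc_id hA]
  rw [cfc_trace]
  push_cast
  rfl

lemma psd_trace_zero {τ : Matrix (Fin n) (Fin n) ℂ} (hτ : τ.PosSemidef) (h : τ.trace = 0) :
    τ = 0 := by
  rw [trace_eq_sum_eig hτ.1, Complex.ofReal_eq_zero] at h
  have hz : ∀ i ∈ Finset.univ, hτ.1.eigenvalues i = 0 :=
    (Finset.sum_eq_zero_iff_of_nonneg fun i _ => hτ.eigenvalues_nonneg i).mp h
  calc τ = hτ.1.cfc (fun x => x) := (cfc_id hτ.1).symm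
    _ = hτ.1.cfc (fun _ => 0) := cfc_congr_eig hτ.1 fun i => hz i (Finset.mem_univ i)
    _ = 0 := cfc_zero hτ.1

lemma psd_and_neg_psd {X : Matrix (Fin n) (Fin n) ℂ} (h1 : X.PosSemidef)
    (h2 : (-X).PosSemidef) : X = 0 := by
  apply psd_trace_zero h1
  have a1 : (0:ℂ) ≤ X.trace := by
    rw [trace_eq_sum_eig h1.1]
    simp only [← Complex.ofReal_zero, Complex.real_le_real]
    exact Finset.sum_nonneg fun i _ => h1.eigenvalues_nonneg i
  have a2 : (0:ℂ) ≤ (-X).trace := by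
    rw [trace_eq_sum_eig h2.1]
    simp only [← Complex.ofReal_zero, Complex.real_le_real]
    exact Finset.sum_nonneg fun i _ => h2.eigenvalues_nonneg i
  rw [trace_neg, neg_nonneg] at a2
  exact le_antisymm a2 a1

lemma supp0 {Y Q : Matrix (Fin n) (Fin n) ℂ} (hY : Y.PosSemidef) (hQH : Qᴴ = Q)
    (h : Q * Y * Q = 0) : Y * Q = 0 ∧ Q * Y = 0 := by
  obtain ⟨B, rfl⟩ : ∃ B : Matrix (Fin n) (Fin n) ℂ, Y = Bᴴ * B := by
    open scoped MatrixOrder in exact CStarAlgebra.nonneg_iff_eq_star_mul_self.mp hY.nonneg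
  have h1 : (B * Q)ᴴ * (B * Q) = 0 := by
    rw [conjTranspose_mul, hQH]
    simp only [mul_assoc]
    simpa only [mul_assoc] using h
  have h2 : B * Q = 0 := conjTranspose_mul_self_eq_zero.mp h1
  have h3 : Bᴴ * B * Q = 0 := by rw [mul_assoc, h2, mul_zero]
  refine ⟨h3, ?_⟩
  have h4 := congrArg conjTranspose h3
  rw [conjTranspose_mul, conjTranspose_mul, conjTranspose_conjTranspose, hQH,
    conjTranspose_zero] at h4
  rw [← mul_assoc]
  simpa only [mul_assoc] using h4

lemma eq_conj_of_corner_zero {P Y : Matrix (Fin n) (Fin n) ℂ}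
    (h1 : Y * (1 - P) = 0) (h2 : (1 - P) * Y = 0) : Y = P * Y * P := by
  rw [mul_sub, mul_one, sub_eq_zero] at h1
  rw [sub_mul, one_mul, sub_eq_zero] at h2
  calc Y = P * Y := h2
    _ = P * (Y * P) := by rw [← h1]
    _ = P * Y * P := by rw [mul_assoc]

lemma supp_shrink (hA : A.IsHermitian) {Y : Matrix (Fin n) (Fin n) ℂ} (hY : Y.PosSemidef)
    (hYA : (Y - A).PosSemidef) (htrY : Y.trace = (posM hA).trace) :
    Y = projM hA * Y * projM hA := by
  set P := projM hA with hP
  have hPH : Pᴴ = P := projM_isHermitian hA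
  have hPP : P * P = P := projM_idem hA
  set Q := (1 : Matrix (Fin n) (Fin n) ℂ) - P with hQ
  have hQH : Qᴴ = Q := by rw [hQ, conjTranspose_sub, conjTranspose_one, hPH]
  -- trace identities
  have h2 : (P * Y * P).trace = (P * Y).trace := by
    rw [trace_mul_cycle, hPP]
  have e1 : Q * Y * Q = Y - P * Y - Y * P + P * Y * P := by
    rw [hQ]; noncomm_ring
  have etr : (Q * Y * Q).trace = Y.trace - (P * Y * P).trace := by
    rw [e1, trace_add, trace_sub, trace_sub, h2, trace_mul_comm Y P]
    ring
  -- P (Y - A) P psd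
  have hPYA : (P * Y * P - posM hA).PosSemidef := by
    have := hYA.mul_mul_conjTranspose_same P
    rw [hPH] at this
    rwa [mul_sub, sub_mul, projM_conj_eq hA] at this
  have htr2 : (posM hA).trace ≤ (P * Y * P).trace := by
    have h0 : (0:ℂ) ≤ (P * Y * P - posM hA).trace := by
      rw [trace_eq_sum_eig hPYA.1]
      simp only [← Complex.ofReal_zero, Complex.real_le_real]
      exact Finset.sum_nonneg fun i _ => hPYA.eigenvalues_nonneg i
    rw [trace_sub, sub_nonneg] at h0
    exact h0
  have hQYQpsd : (Q * Y * Q).PosSemidef := by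
    have := hY.mul_mul_conjTranspose_same Q
    rwa [hQH] at this
  have htrQ0 : (Q * Y * Q).trace = 0 := by
    have hle : (Q * Y * Q).trace ≤ 0 := by
      rw [etr, htrY]
      exact sub_nonpos.mpr htr2
    have hge : (0:ℂ) ≤ (Q * Y * Q).trace := by
      rw [trace_eq_sum_eig hQYQpsd.1]
      simp only [← Complex.ofReal_zero, Complex.real_le_real]
      exact Finset.sum_nonneg fun i _ => hQYQpsd.eigenvalues_nonneg i
    exact le_antisymm hle hge
  have hQYQ : Q * Y * Q = 0 := psd_trace_zero hQYQpsd htrQ0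
  obtain ⟨hy1, hy2⟩ := supp0 hY hQH hQYQ
  exact eq_conj_of_corner_zero hy1 hy2

end Stmt8Aux

namespace Stmt8Aux

open Matrix
open scoped ComplexOrder

variable {n : ℕ} {A : Matrix (Fin n) (Fin n) ℂ}

lemma psd_le_trace {τ : Matrix (Fin n) (Fin n) ℂ} (hτ : τ.PosSemidef) :
    (((∑ i, hτ.1.eigenvalues i : ℝ) : ℂ) • 1 - τ).PosSemidef := by
  set T : ℝ := ∑ i, hτ.1.eigenvalues i with hT
  have h1 : ((T : ℂ) • (1 : Matrix (Fin n) (Fin n) ℂ) - τ) = hτ.1.cfc (fun x => T * 1 - x) := by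
    calc (T : ℂ) • (1 : Matrix (Fin n) (Fin n) ℂ) - τ
        = hτ.1.cfc (fun x => T * 1) - hτ.1.cfc (fun x => x) := by
          rw [cfc_id, ← cfc_smul, cfc_one]
      _ = hτ.1.cfc (fun x => T * 1 - x) := cfc_sub _ _ _
  rw [h1]
  refine cfc_posSemidef hτ.1 fun i => ?_
  rw [mul_one, sub_nonneg, hT]
  exact Finset.single_le_sum (fun j _ => hτ.eigenvalues_nonneg j) (Finset.mem_univ i)

lemma dom (hA : A.IsHermitian) {τ : Matrix (Fin n) (Fin n) ℂ} (hτ : τ.PosSemidef)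
    (hsupp : projM hA * τ * projM hA = τ) :
    ∃ c : ℝ, ((c : ℂ) • posM hA - τ).PosSemidef := by
  by_cases hpos : ∃ i, 0 < hA.eigenvalues i
  · set T : ℝ := ∑ i, hτ.1.eigenvalues i with hT
    have hT0 : 0 ≤ T := Finset.sum_nonneg fun i _ => hτ.eigenvalues_nonneg i
    set s : Finset (Fin n) := Finset.univ.filter (fun i => 0 < hA.eigenvalues i) with hs
    have hsne : s.Nonempty := by
      obtain ⟨i, hi⟩ := hpos
      exact ⟨i, by simp [hs, hi]⟩
    set lam : ℝ := s.inf' hsne hA.eigenvalues with hlamdef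
    have hlam : 0 < lam :=
      (Finset.lt_inf'_iff hsne).mpr fun i hi => (Finset.mem_filter.mp hi).2
    refine ⟨T / lam, ?_⟩
    have part1 : (((T / lam : ℝ) : ℂ) • posM hA - (T : ℂ) • projM hA).PosSemidef := by
      have e : ((T / lam : ℝ) : ℂ) • posM hA - (T : ℂ) • projM hA
          = hA.cfc (fun x => T / lam * max x 0 - T * (if 0 < x then 1 else 0)) := by
        rw [posM, projM, cfc_smul, cfc_smul, cfc_sub]
      rw [e]
      refine cfc_posSemidef hA fun i => ?_
      rcases lt_or_ge 0 (hA.eigenvalues i) with h | h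
      · rw [if_pos h, mul_one, sub_nonneg, max_eq_left h.le]
        have hle : lam ≤ hA.eigenvalues i :=
          Finset.inf'_le _ (by simp [hs, h])
        calc T = T / lam * lam := by field_simp
          _ ≤ T / lam * hA.eigenvalues i :=
              mul_le_mul_of_nonneg_left hle (div_nonneg hT0 hlam.le)
      · rw [if_neg (not_lt.mpr h), mul_zero, max_eq_right h, mul_zero, sub_zero]
    have part2 : ((T : ℂ) • projM hA - τ).PosSemidef := by
      have hPH : (projM hA)ᴴ = projM hA := projM_isHermitian hA
      have h0 := (psd_le_trace hτ).mul_mul_conjTranspose_same (projM hA)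
      rw [hPH] at h0
      have e : projM hA * ((T : ℂ) • 1 - τ) * projM hA = (T : ℂ) • projM hA - τ := by
        rw [mul_sub, sub_mul, hsupp, mul_smul_comm, smul_mul_assoc, mul_one, projM_idem hA]
      rwa [← hT, e] at h0
    have := part1.add part2
    rwa [sub_add_sub_cancel] at this
  · push_neg at hpos
    have hP0 : projM hA = 0 := by
      rw [projM]
      calc hA.cfc (fun x => if 0 < x then 1 else 0) = hA.cfc (fun _ => 0) :=
            cfc_congr_eig hA fun i => by rw [if_neg (not_lt.mpr (hpos i))]
        _ = 0 := cfc_zero hA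
    have hτ0 : τ = 0 := by rw [← hsupp, hP0, zero_mul, zero_mul]
    exact ⟨0, by simp [hτ0, PosSemidef.zero]⟩

end Stmt8Aux

namespace Stmt8Aux

open Matrix
open scoped ComplexOrder

variable {n : ℕ} {A : Matrix (Fin n) (Fin n) ℂ}

lemma herm_parts (X : Matrix (Fin n) (Fin n) ℂ) :
    ∃ H1 H2 : Matrix (Fin n) (Fin n) ℂ, H1.IsHermitian ∧ H2.IsHermitian ∧
      X = H1 + Complex.I • H2 ∧ Xᴴ = H1 - Complex.I • H2 := by
  have hI : Complex.I • ((Complex.I * 2⁻¹) • (Xᴴ - X)) = ((-2⁻¹ : ℂ)) • (Xᴴ - X) := by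
    rw [smul_smul, show Complex.I * (Complex.I * 2⁻¹) = (-2⁻¹ : ℂ) by
      rw [← mul_assoc, Complex.I_mul_I]; ring]
  refine ⟨(2⁻¹ : ℂ) • (X + Xᴴ), (Complex.I * 2⁻¹) • (Xᴴ - X), ?_, ?_, ?_, ?_⟩
  · rw [Matrix.IsHermitian, conjTranspose_smul, conjTranspose_add, conjTranspose_conjTranspose,
      show star (2⁻¹ : ℂ) = 2⁻¹ by simp, add_comm]
  · rw [Matrix.IsHermitian, conjTranspose_smul, conjTranspose_sub, conjTranspose_conjTranspose,
      show star (Complex.I * 2⁻¹) = -(Complex.I * 2⁻¹) by simp [Complex.conj_I],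
      neg_smul, ← smul_neg, neg_sub]
  · rw [hI]; module
  · rw [hI]; module

lemma corner_psd {Φ : Matrix (Fin n) (Fin n) ℂ →ₗ[ℂ] Matrix (Fin n) (Fin n) ℂ}
    (hpos : ∀ ρ, ρ.PosSemidef → (Φ ρ).PosSemidef) (hA : A.IsHermitian)
    (hfixP : Φ (posM hA) = projM hA * Φ (posM hA) * projM hA)
    {τ : Matrix (Fin n) (Fin n) ℂ} (hτ : τ.PosSemidef) :
    Φ (projM hA * τ * projM hA) = projM hA * Φ (projM hA * τ * projM hA) * projM hA := by
  set P := projM hA with hPdef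
  have hPH : Pᴴ = P := projM_isHermitian hA
  have hPP : P * P = P := projM_idem hA
  have hQH : ((1 : Matrix (Fin n) (Fin n) ℂ) - P)ᴴ = 1 - P := by
    rw [conjTranspose_sub, conjTranspose_one, hPH]
  set τ' := P * τ * P with hτ'def
  have hτ' : τ'.PosSemidef := by
    have := hτ.mul_mul_conjTranspose_same P; rwa [hPH] at this
  have hsupp : P * τ' * P = τ' := by
    rw [hτ'def, show P * (P * τ * P) * P = (P * P) * τ * (P * P) by simp only [mul_assoc], hPP]
  obtain ⟨c, hc⟩ := dom hA hτ' hsupp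
  have hQP : ((1 : Matrix (Fin n) (Fin n) ℂ) - P) * P = 0 := by
    rw [sub_mul, one_mul, hPP, sub_self]
  have hΦpos0 : (1 - P) * Φ (posM hA) * (1 - P) = 0 := by
    have e0 : (1 - P) * (P * Φ (posM hA) * P) = 0 := by
      calc (1 - P) * (P * Φ (posM hA) * P)
          = ((1 - P) * P) * (Φ (posM hA) * P) := by simp only [mul_assoc]
        _ = 0 := by rw [hQP, zero_mul]
    rw [hfixP, e0, zero_mul]
  have hd := hpos _ hc
  rw [map_sub, _root_.map_smul] at hd
  have hQ1 : ((1 - P) * ((c : ℂ) • Φ (posM hA) - Φ τ') * (1 - P))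
      = -((1 - P) * Φ τ' * (1 - P)) := by
    have hz : (1 - P) * ((c : ℂ) • Φ (posM hA)) * (1 - P) = 0 := by
      rw [mul_smul_comm, smul_mul_assoc, hΦpos0, smul_zero]
    calc (1 - P) * ((c : ℂ) • Φ (posM hA) - Φ τ') * (1 - P)
        = (1 - P) * ((c : ℂ) • Φ (posM hA)) * (1 - P) - (1 - P) * Φ τ' * (1 - P) := by
          simp only [mul_sub, sub_mul]; abel
      _ = -((1 - P) * Φ τ' * (1 - P)) := by rw [hz, zero_sub]
  have hQpsd : ((1 - P) * ((c : ℂ) • Φ (posM hA) - Φ τ') * (1 - P)).PosSemidef := by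
    have := hd.mul_mul_conjTranspose_same (1 - P); rwa [hQH] at this
  have hΦτQ : ((1 - P) * Φ τ' * (1 - P)).PosSemidef := by
    have := (hpos _ hτ').mul_mul_conjTranspose_same (1 - P); rwa [hQH] at this
  have h0 : (1 - P) * Φ τ' * (1 - P) = 0 :=
    psd_and_neg_psd hΦτQ (by rw [← hQ1]; exact hQpsd)
  obtain ⟨hy1, hy2⟩ := supp0 (hpos _ hτ') hQH h0
  exact eq_conj_of_corner_zero hy1 hy2

lemma corner_all {Φ : Matrix (Fin n) (Fin n) ℂ →ₗ[ℂ] Matrix (Fin n) (Fin n) ℂ}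
    (hpos : ∀ ρ, ρ.PosSemidef → (Φ ρ).PosSemidef) (hA : A.IsHermitian)
    (hfixP : Φ (posM hA) = projM hA * Φ (posM hA) * projM hA) :
    ∀ σ, Φ (projM hA * σ * projM hA) = projM hA * Φ (projM hA * σ * projM hA) * projM hA := by
  intro σ
  set P := projM hA with hPdef
  have hPP : P * P = P := projM_idem hA
  have collapse : ∀ X : Matrix (Fin n) (Fin n) ℂ, P * (P * X * P) * P = P * X * P := fun X => by
    rw [show P * (P * X * P) * P = (P * P) * X * (P * P) by simp only [mul_assoc], hPP]
  obtain ⟨H1, H2, h1, h2, hX, -⟩ := herm_parts σ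
  have hd : σ = posM h1 - negM h1 + Complex.I • (posM h2 - negM h2) := by
    rw [posM_sub_negM h1, posM_sub_negM h2]; exact hX
  have c1 := corner_psd hpos hA hfixP (posM_posSemidef h1)
  have c2 := corner_psd hpos hA hfixP (negM_posSemidef h1)
  have c3 := corner_psd hpos hA hfixP (posM_posSemidef h2)
  have c4 := corner_psd hpos hA hfixP (negM_posSemidef h2)
  have e : P * σ * P = P * posM h1 * P - P * negM h1 * P
      + Complex.I • (P * posM h2 * P - P * negM h2 * P) := by
    rw [hd]
    simp only [mul_add, add_mul, mul_sub, sub_mul, mul_smul_comm, smul_mul_assoc]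
  rw [e]
  simp only [map_add, map_sub, _root_.map_smul]
  rw [c1, c2, c3, c4]
  rw [← hPdef]
  simp only [mul_add, add_mul, mul_sub, sub_mul, mul_smul_comm, smul_mul_assoc, collapse]

lemma key {Φ : Matrix (Fin n) (Fin n) ℂ →ₗ[ℂ] Matrix (Fin n) (Fin n) ℂ}
    (hpos : ∀ ρ, ρ.PosSemidef → (Φ ρ).PosSemidef)
    (htr : ∀ ρ, (Φ ρ).trace = ρ.trace)
    (hirr : ∀ P : Matrix (Fin n) (Fin n) ℂ, P.IsHermitian → P * P = P →
        (∀ ρ, Φ (P * ρ * P) = P * Φ (P * ρ * P) * P) → P = 0 ∨ P = 1)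
    (hA : A.IsHermitian) (hfix : Φ A = A) (hne : posM hA ≠ 0) :
    ∀ i, 0 < hA.eigenvalues i := by
  have hY : (Φ (posM hA)).PosSemidef := hpos _ (posM_posSemidef hA)
  have hYA : (Φ (posM hA) - A).PosSemidef := by
    have e : posM hA - A = negM hA := by
      have h := posM_sub_negM hA
      calc posM hA - A = posM hA - (posM hA - negM hA) := by rw [h]
        _ = negM hA := sub_sub_cancel _ _
    have e2 : Φ (posM hA) - A = Φ (negM hA) := by rw [← e, map_sub, hfix]
    rw [e2]; exact hpos _ (negM_posSemidef hA)
  have hshr := supp_shrink hA hY hYA (htr _)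
  have hcorner := corner_all hpos hA hshr
  rcases hirr _ (projM_isHermitian hA) (projM_idem hA) hcorner with h0 | h1
  · exact absurd (by rw [← projM_mul_posM hA, h0, zero_mul]) hne
  · intro i
    have hz : projM hA - 1 = 0 := by rw [h1, sub_self]
    rw [projM, ← cfc_one hA, cfc_sub] at hz
    have h2 := cfc_eig_eq_zero hA hz i
    by_contra hcon
    rw [if_neg hcon] at h2; norm_num at h2

lemma posDef_of_eig_pos {τ : Matrix (Fin n) (Fin n) ℂ} (hτ : τ.PosSemidef)
    (h : ∀ i, 0 < hτ.1.eigenvalues i) : τ.PosDef := by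
  have hdet : τ.det ≠ 0 := by
    rw [hτ.1.det_eq_prod_eigenvalues]
    exact Finset.prod_ne_zero_iff.mpr fun i _ => Complex.ofReal_ne_zero.mpr (h i).ne'
  refine PosDef.of_dotProduct_mulVec_pos hτ.1 fun x hx => ?_
  have hinj : Function.Injective (τ.mulVec) :=
    mulVec_injective_iff_isUnit.mpr ((isUnit_iff_isUnit_det τ).mpr (Ne.isUnit hdet))
  have hxne : star x ⬝ᵥ τ *ᵥ x ≠ 0 := by
    intro h0
    have hz := (hτ.dotProduct_mulVec_zero_iff x).mp h0
    exact hx (hinj (by rw [hz, mulVec_zero]))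
  exact lt_of_le_of_ne (hτ.dotProduct_mulVec_nonneg x) (Ne.symm hxne)

end Stmt8Aux

namespace Stmt8Aux

open Matrix
open scoped ComplexOrder

variable {n : ℕ} {A : Matrix (Fin n) (Fin n) ℂ}

lemma herm_fixed {Φ : Matrix (Fin n) (Fin n) ℂ →ₗ[ℂ] Matrix (Fin n) (Fin n) ℂ}
    (hpos : ∀ ρ, ρ.PosSemidef → (Φ ρ).PosSemidef) :
    ∀ K : Matrix (Fin n) (Fin n) ℂ, K.IsHermitian → (Φ K).IsHermitian := by
  intro K hK
  have e : Φ K = Φ (posM hK) - Φ (negM hK) := by rw [← map_sub, posM_sub_negM]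
  rw [e]
  exact ((hpos _ (posM_posSemidef hK)).1).sub ((hpos _ (negM_posSemidef hK)).1)

lemma herm_comm {Φ : Matrix (Fin n) (Fin n) ℂ →ₗ[ℂ] Matrix (Fin n) (Fin n) ℂ}
    (hpos : ∀ ρ, ρ.PosSemidef → (Φ ρ).PosSemidef) :
    ∀ X : Matrix (Fin n) (Fin n) ℂ, Φ Xᴴ = (Φ X)ᴴ := by
  intro X
  obtain ⟨H1, H2, h1, h2, hX, hXc⟩ := herm_parts X
  have e1 : (Φ H1).IsHermitian := herm_fixed hpos H1 h1
  have e2 : (Φ H2).IsHermitian := herm_fixed hpos H2 h2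
  rw [hXc, hX, map_sub, map_add, _root_.map_smul,
    conjTranspose_add, conjTranspose_smul, e1.eq, e2.eq, Complex.star_def, Complex.conj_I,
    neg_smul, ← sub_eq_add_neg]

lemma exists_fixed (hn : 0 < n) (Φ : Matrix (Fin n) (Fin n) ℂ →ₗ[ℂ] Matrix (Fin n) (Fin n) ℂ)
    (htr : ∀ ρ, (Φ ρ).trace = ρ.trace) :
    ∃ ρ : Matrix (Fin n) (Fin n) ℂ, ρ ≠ 0 ∧ Φ ρ = ρ := by
  set g : Matrix (Fin n) (Fin n) ℂ →ₗ[ℂ] Matrix (Fin n) (Fin n) ℂ := Φ - LinearMap.id with hg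
  have hnot : ¬ Function.Surjective g := by
    intro hs
    obtain ⟨y, hy⟩ := hs 1
    have h2 : (g y).trace = (Φ y).trace - y.trace := by
      rw [hg]; simp [LinearMap.sub_apply, trace_sub]
    rw [htr y, sub_self, hy, trace_one] at h2
    simp only [Fintype.card_fin, Nat.cast_eq_zero] at h2
    omega
  have hninj : ¬ Function.Injective g := fun hi =>
    hnot (LinearMap.injective_iff_surjective.mp hi)
  rw [Function.not_injective_iff] at hninj
  obtain ⟨a, b, hab, hne⟩ := hninj
  refine ⟨a - b, sub_ne_zero.mpr hne, ?_⟩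
  have : g (a - b) = 0 := by rw [map_sub, hab, sub_self]
  rw [hg, LinearMap.sub_apply, LinearMap.id_apply, sub_eq_zero] at this
  exact this

lemma posM_eq_self {τ : Matrix (Fin n) (Fin n) ℂ} (hτ : τ.PosSemidef) : posM hτ.1 = τ := by
  rw [posM]
  calc hτ.1.cfc (fun x => max x 0) = hτ.1.cfc (fun x => x) :=
        cfc_congr_eig _ fun i => max_eq_left (hτ.eigenvalues_nonneg i)
    _ = τ := cfc_id _

lemma exists_state (hn : 0 < n) {Φ : Matrix (Fin n) (Fin n) ℂ →ₗ[ℂ] Matrix (Fin n) (Fin n) ℂ}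
    (hpos : ∀ ρ, ρ.PosSemidef → (Φ ρ).PosSemidef)
    (htr : ∀ ρ, (Φ ρ).trace = ρ.trace)
    (hirr : ∀ P : Matrix (Fin n) (Fin n) ℂ, P.IsHermitian → P * P = P →
        (∀ ρ, Φ (P * ρ * P) = P * Φ (P * ρ * P) * P) → P = 0 ∨ P = 1)
    {H : Matrix (Fin n) (Fin n) ℂ} (hH : H.IsHermitian) (hfix : Φ H = H)
    (hposne : posM hH ≠ 0) :
    ∃ ρ, ρ.PosSemidef ∧ ρ.trace = 1 ∧ Φ ρ = ρ := by
  have heig := key hpos htr hirr hH hfix hposne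
  have hnonempty : Nonempty (Fin n) := Fin.pos_iff_nonempty.mp hn
  set T : ℝ := ∑ i, hH.eigenvalues i with hT
  have hT0 : 0 < T := Finset.sum_pos (fun i _ => heig i) Finset.univ_nonempty
  refine ⟨((T⁻¹ : ℝ) : ℂ) • H, ?_, ?_, ?_⟩
  · have e : ((T⁻¹ : ℝ) : ℂ) • H = hH.cfc (fun x => T⁻¹ * x) := by
      calc ((T⁻¹ : ℝ) : ℂ) • H = ((T⁻¹ : ℝ) : ℂ) • hH.cfc (fun x => x) := by rw [cfc_id]
        _ = _ := cfc_smul _ _ _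
    rw [e]
    exact cfc_posSemidef hH fun i => mul_nonneg (inv_nonneg.mpr hT0.le) (heig i).le
  · rw [trace_smul, trace_eq_sum_eig hH, ← hT, smul_eq_mul, ← Complex.ofReal_mul,
      inv_mul_cancel₀ hT0.ne', Complex.ofReal_one]
  · rw [_root_.map_smul, hfix]

end Stmt8Aux

open Matrix
open scoped ComplexOrder

/-- An irreducible positive trace-preserving map on n×n complex matrices
(n ≥ 1) has exactly one invariant state, and it is faithful (positive
definite). -/
theorem stmt8 {n : ℕ} (hn : 0 < n)
    (Φ : Matrix (Fin n) (Fin n) ℂ →ₗ[ℂ] Matrix (Fin n) (Fin n) ℂ)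
    (hpos : ∀ ρ, ρ.PosSemidef → (Φ ρ).PosSemidef)
    (htr : ∀ ρ, (Φ ρ).trace = ρ.trace)
    (hirr : ∀ P : Matrix (Fin n) (Fin n) ℂ, P.IsHermitian → P * P = P →
        (∀ ρ, Φ (P * ρ * P) = P * Φ (P * ρ * P) * P) → P = 0 ∨ P = 1) :
    ∃ ρ : Matrix (Fin n) (Fin n) ℂ, (ρ.PosDef ∧ ρ.trace = 1 ∧ Φ ρ = ρ) ∧
      ∀ σ : Matrix (Fin n) (Fin n) ℂ,
        σ.PosSemidef → σ.trace = 1 → Φ σ = σ → σ = ρ := by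
  classical
  have hnonempty : Nonempty (Fin n) := Fin.pos_iff_nonempty.mp hn
  obtain ⟨ρ0, hρ0ne, hρ0fix⟩ := Stmt8Aux.exists_fixed hn Φ htr
  -- a nonzero Hermitian fixed point
  obtain ⟨H, hH, hHfix, hHne⟩ : ∃ H : Matrix (Fin n) (Fin n) ℂ,
      H.IsHermitian ∧ Φ H = H ∧ H ≠ 0 := by
    obtain ⟨H1, H2, h1, h2, hX, hXc⟩ := Stmt8Aux.herm_parts ρ0
    have hfixc : Φ ρ0ᴴ = ρ0ᴴ := by rw [Stmt8Aux.herm_comm hpos, hρ0fix]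
    have e1 : H1 = (2⁻¹ : ℂ) • (ρ0 + ρ0ᴴ) := by rw [hXc, hX]; module
    have e2 : H2 = (-(Complex.I) * 2⁻¹) • (ρ0 - ρ0ᴴ) := by
      rw [hXc, hX,
        show (H1 + Complex.I • H2) - (H1 - Complex.I • H2) = (2 * Complex.I) • H2 by module,
        smul_smul,
        show (-(Complex.I) * 2⁻¹) * (2 * Complex.I) = -(Complex.I * Complex.I) from by ring,
        Complex.I_mul_I, neg_neg, one_smul]
    have hH1fix : Φ H1 = H1 := by rw [e1, _root_.map_smul, map_add, hρ0fix, hfixc]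
    have hH2fix : Φ H2 = H2 := by rw [e2, _root_.map_smul, map_sub, hρ0fix, hfixc]
    by_cases hz : H1 = 0
    · exact ⟨H2, h2, hH2fix, fun h => hρ0ne (by rw [hX, hz, h, smul_zero, add_zero])⟩
    · exact ⟨H1, h1, hH1fix, hz⟩
  -- existence of an invariant state
  obtain ⟨ρ1, hρ1psd, hρ1tr, hρ1fix⟩ : ∃ ρ, ρ.PosSemidef ∧ ρ.trace = 1 ∧ Φ ρ = ρ := by
    by_cases hp : Stmt8Aux.posM hH = 0
    · -- all eigenvalues ≤ 0, so -H is PSD, nonzero, fixed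
      have heig : ∀ i, hH.eigenvalues i ≤ 0 := by
        intro i
        have h0 := Stmt8Aux.cfc_eig_eq_zero hH (by rw [← Stmt8Aux.posM]; exact hp) i
        calc hH.eigenvalues i ≤ max (hH.eigenvalues i) 0 := le_max_left _ _
          _ = 0 := h0
      have hHneg : (-H).PosSemidef := by
        have e : -H = hH.cfc (fun x => 0 - x) := by
          calc -H = Stmt8Aux.posM hH - H := by rw [hp, zero_sub]
            _ = hH.cfc (fun x => max x 0) - hH.cfc (fun x => x) := by
                rw [Stmt8Aux.cfc_id]; rfl
            _ = hH.cfc (fun x => max x 0 - x) := Stmt8Aux.cfc_sub _ _ _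
            _ = hH.cfc (fun x => 0 - x) := Stmt8Aux.cfc_congr_eig hH fun i => by
                rw [max_eq_right (heig i)]
        rw [e]
        exact Stmt8Aux.cfc_posSemidef hH fun i => by simpa using heig i
      have hposH' : Stmt8Aux.posM hHneg.1 = -H := Stmt8Aux.posM_eq_self hHneg
      have hne' : Stmt8Aux.posM hHneg.1 ≠ 0 := by
        rw [hposH']; simpa [neg_eq_zero] using hHne
      exact Stmt8Aux.exists_state hn hpos htr hirr hHneg.1 (by rw [map_neg, hHfix]) hne'
    · exact Stmt8Aux.exists_state hn hpos htr hirr hH hHfix hp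
  -- uniqueness
  have huniq : ∀ σ τ : Matrix (Fin n) (Fin n) ℂ, σ.PosSemidef → σ.trace = 1 → Φ σ = σ →
      τ.PosSemidef → τ.trace = 1 → Φ τ = τ → σ = τ := by
    intro σ τ hσ hσtr hσfix hτ hτtr hτfix
    have hδH : (σ - τ).IsHermitian := hσ.1.sub hτ.1
    have hδfix : Φ (σ - τ) = σ - τ := by rw [map_sub, hσfix, hτfix]
    have hδtr : (σ - τ).trace = 0 := by rw [trace_sub, hσtr, hτtr, sub_self]
    by_cases hp : Stmt8Aux.posM hδH = 0
    · have heig : ∀ i, hδH.eigenvalues i ≤ 0 := by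
        intro i
        have h0 := Stmt8Aux.cfc_eig_eq_zero hδH (by rw [← Stmt8Aux.posM]; exact hp) i
        calc hδH.eigenvalues i ≤ max (hδH.eigenvalues i) 0 := le_max_left _ _
          _ = 0 := h0
      have hsum : ∑ i, hδH.eigenvalues i = 0 := by
        have h1 := Stmt8Aux.trace_eq_sum_eig hδH
        rw [hδtr] at h1
        exact (Complex.ofReal_eq_zero.mp h1.symm)
      have hall : ∀ i ∈ Finset.univ, hδH.eigenvalues i = 0 :=
        (Finset.sum_eq_zero_iff_of_nonpos fun i _ => heig i).mp hsum
      have hz : σ - τ = 0 := by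
        calc σ - τ = hδH.cfc (fun x => x) := (Stmt8Aux.cfc_id hδH).symm
          _ = hδH.cfc (fun _ => 0) :=
              Stmt8Aux.cfc_congr_eig hδH fun i => hall i (Finset.mem_univ i)
          _ = 0 := Stmt8Aux.cfc_zero hδH
      exact sub_eq_zero.mp hz
    · exfalso
      have heig := Stmt8Aux.key hpos htr hirr hδH hδfix hp
      have hTpos : 0 < ∑ i, hδH.eigenvalues i :=
        Finset.sum_pos (fun i _ => heig i) Finset.univ_nonempty
      rw [Stmt8Aux.trace_eq_sum_eig hδH] at hδtr
      exact hTpos.ne' (Complex.ofReal_eq_zero.mp hδtr)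
  -- ρ1 is positive definite
  have hρ1ne : ρ1 ≠ 0 := by
    intro h0; rw [h0, trace_zero] at hρ1tr; exact one_ne_zero hρ1tr.symm
  have hρ1pd : ρ1.PosDef := by
    have hpne : Stmt8Aux.posM hρ1psd.1 ≠ 0 := by
      rw [Stmt8Aux.posM_eq_self hρ1psd]; exact hρ1ne
    have heig := Stmt8Aux.key hpos htr hirr hρ1psd.1 hρ1fix hpne
    exact Stmt8Aux.posDef_of_eig_pos hρ1psd heig
  exact ⟨ρ1, ⟨hρ1pd, hρ1tr, hρ1fix⟩,
    fun σ h1 h2 h3 => huniq σ ρ1 h1 h2 h3 hρ1psd hρ1tr hρ1fix⟩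
end

section
/- Let Φ be a completely positive trace-preserving map on n×n complex matrices such that for all states ρ, σ one has Φ^m(ρ) − Φ^m(σ) → 0 as m → ∞ (the Orey property). Then Φ is aperiodic: there is no resolution of the identity (P₀,…,P_{d−1}) with d ≥ 2 consisting of nonzero mutually orthogonal projections summing to I such that Φ*(P_k) = P_{k−1 mod d} for all k. -/
open Matrix
open scoped ComplexOrder

private lemma trace_proj_pos {n : ℕ} {P : Matrix (Fin n) (Fin n) ℂ}
    (hne : P ≠ 0) (hherm : P.IsHermitian) (hidem : P * P = P) :
    ∃ r : ℝ, 0 < r ∧ P.trace = (r : ℂ) := by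
  have hPP : P.trace = (Pᴴ * P).trace := by rw [hherm.eq, hidem]
  have htr : (Pᴴ * P).trace = ((∑ j, ∑ i, Complex.normSq (P i j) : ℝ) : ℂ) := by
    simp only [Matrix.trace, Matrix.diag, Matrix.mul_apply, Matrix.conjTranspose_apply]
    push_cast
    refine Finset.sum_congr rfl fun j _ => Finset.sum_congr rfl fun i _ => ?_
    rw [Complex.normSq_eq_conj_mul_self]
    rfl
  refine ⟨∑ j, ∑ i, Complex.normSq (P i j), ?_, by rw [hPP, htr]⟩
  obtain ⟨i, j, hij⟩ : ∃ i j, P i j ≠ 0 := by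
    by_contra h
    push_neg at h
    exact hne (by ext i j; simp [h])
  refine Finset.sum_pos' (fun j _ => Finset.sum_nonneg fun i _ => Complex.normSq_nonneg _) ?_
  exact ⟨j, Finset.mem_univ _, Finset.sum_pos' (fun i _ => Complex.normSq_nonneg _)
    ⟨i, Finset.mem_univ _, Complex.normSq_pos.mpr hij⟩⟩

private lemma psd_smul {n : ℕ} {P : Matrix (Fin n) (Fin n) ℂ} {r : ℝ}
    (hr : 0 ≤ r) (hP : P.PosSemidef) : ((r : ℂ) • P).PosSemidef := by
  constructor
  · unfold Matrix.IsHermitian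
    rw [Matrix.conjTranspose_smul, hP.1.eq]
    congr 1
    simp
  · intro x
    have := hP.2 x
    convert mul_nonneg (show (0 : ℂ) ≤ (r : ℂ) by exact_mod_cast hr) this using 1
    rw [Finsupp.mul_sum]
    refine Finsupp.sum_congr fun i _ => ?_
    rw [Finsupp.mul_sum]
    refine Finsupp.sum_congr fun j _ => ?_
    rw [Matrix.smul_apply, smul_eq_mul]
    ring

/-- A CP-TP map with the Orey property (differences of iterates on any two
states tend to zero) is aperiodic: there is no cyclic resolution of the
identity of length `d ≥ 2` for the adjoint map. -/
theorem stmt9 {n : ℕ} {K : Type*} [Fintype K]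
    (A : K → Matrix (Fin n) (Fin n) ℂ)
    (Φ Ψ : Matrix (Fin n) (Fin n) ℂ →ₗ[ℂ] Matrix (Fin n) (Fin n) ℂ)
    (hΦ : ∀ ρ, Φ ρ = ∑ κ, A κ * ρ * (A κ)ᴴ)
    (htr : ∀ ρ, (Φ ρ).trace = ρ.trace)
    (hadj : ∀ ρ X : Matrix (Fin n) (Fin n) ℂ, (Φ ρ * X).trace = (ρ * Ψ X).trace)
    (horey : ∀ ρ σ : Matrix (Fin n) (Fin n) ℂ,
      ρ.PosSemidef → ρ.trace = 1 → σ.PosSemidef → σ.trace = 1 →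
      Filter.Tendsto (fun m : ℕ => (Φ ^ m) ρ - (Φ ^ m) σ) Filter.atTop (nhds 0)) :
    ¬ ∃ (d : ℕ) (hd : 2 ≤ d) (P : Fin d → Matrix (Fin n) (Fin n) ℂ),
        (∀ k, P k ≠ 0 ∧ (P k).IsHermitian ∧ P k * P k = P k) ∧
        (∀ k l, k ≠ l → P k * P l = 0) ∧
        (∑ k, P k = 1) ∧
        (∀ k : Fin d, Ψ (P k) = P (k - ⟨1, by omega⟩)) := by
  rintro ⟨d, hd, P, hproj, horth, hsum, hcyc⟩
  haveI : NeZero d := ⟨by omega⟩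
  -- adjoint iterates
  have hiter : ∀ (m : ℕ) (ρ' X : Matrix (Fin n) (Fin n) ℂ),
      ((Φ ^ m) ρ' * X).trace = (ρ' * (Ψ ^ m) X).trace := by
    intro m
    induction m with
    | zero => intro ρ' X; simp
    | succ m ih =>
      intro ρ' X
      rw [pow_succ' Φ, pow_succ Ψ]
      calc ((Φ * (Φ ^ m)) ρ' * X).trace = (Φ ((Φ ^ m) ρ') * X).trace := rfl
        _ = ((Φ ^ m) ρ' * Ψ X).trace := hadj _ _
        _ = (ρ' * (Ψ ^ m) (Ψ X)).trace := ih _ _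
        _ = (ρ' * ((Ψ ^ m) * Ψ) X).trace := rfl
  -- cyclic action of Ψ iterates
  have hone : (⟨1, by omega⟩ : Fin d) = 1 := by
    apply Fin.ext
    simp [Fin.val_one', Nat.mod_eq_of_lt (by omega : 1 < d)]
  open Fin.CommRing in
  have hPiter : ∀ (m : ℕ) (k : Fin d), (Ψ ^ m) (P k) = P (k - (m : Fin d)) := by
    intro m
    induction m with
    | zero => intro k; simp
    | succ m ih =>
      intro k
      rw [pow_succ Ψ]
      have : (Ψ ^ m) (Ψ (P k)) = (Ψ ^ m) (P (k - 1)) := by rw [hcyc k, hone]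
      calc ((Ψ ^ m) * Ψ) (P k) = (Ψ ^ m) (Ψ (P k)) := rfl
        _ = (Ψ ^ m) (P (k - 1)) := this
        _ = P (k - 1 - (m : Fin d)) := ih _
        _ = P (k - ((m + 1 : ℕ) : Fin d)) := by
            congr 1
            push_cast
            ring
  -- set up the two states
  obtain ⟨r0, hr0, ht0⟩ := trace_proj_pos (hproj 0).1 (hproj 0).2.1 (hproj 0).2.2
  obtain ⟨r1, hr1, ht1⟩ := trace_proj_pos (hproj 1).1 (hproj 1).2.1 (hproj 1).2.2
  set ρ : Matrix (Fin n) (Fin n) ℂ := ((r0⁻¹ : ℝ) : ℂ) • P 0 with hρ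
  set σ : Matrix (Fin n) (Fin n) ℂ := ((r1⁻¹ : ℝ) : ℂ) • P 1 with hσ
  have hP0psd : (P 0).PosSemidef := by
    have := Matrix.posSemidef_conjTranspose_mul_self (P 0)
    rwa [(hproj 0).2.1.eq, (hproj 0).2.2] at this
  have hP1psd : (P 1).PosSemidef := by
    have := Matrix.posSemidef_conjTranspose_mul_self (P 1)
    rwa [(hproj 1).2.1.eq, (hproj 1).2.2] at this
  have hρpsd : ρ.PosSemidef := psd_smul (by positivity) hP0psd
  have hσpsd : σ.PosSemidef := psd_smul (by positivity) hP1psd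
  have hρtr : ρ.trace = 1 := by
    rw [hρ, Matrix.trace_smul, ht0, smul_eq_mul, ← Complex.ofReal_mul,
      inv_mul_cancel₀ hr0.ne', Complex.ofReal_one]
  have hσtr : σ.trace = 1 := by
    rw [hσ, Matrix.trace_smul, ht1, smul_eq_mul, ← Complex.ofReal_mul,
      inv_mul_cancel₀ hr1.ne', Complex.ofReal_one]
  -- the continuous linear functional X ↦ tr (X * P 0)
  set L : Matrix (Fin n) (Fin n) ℂ →ₗ[ℂ] ℂ :=
    (Matrix.traceLinearMap (Fin n) ℂ ℂ).comp (LinearMap.mulRight ℂ (P 0)) with hL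
  have hLcont : Continuous L := L.continuous_of_finiteDimensional
  have h1 := horey ρ σ hρpsd hρtr hσpsd hσtr
  have h2 : Filter.Tendsto (fun m : ℕ => L ((Φ ^ m) ρ - (Φ ^ m) σ))
      Filter.atTop (nhds 0) := by
    have := (hLcont.tendsto 0).comp h1
    simpa only [map_zero, Function.comp_def] using this
  have h3 : Filter.Tendsto (fun j : ℕ => L ((Φ ^ (d * j)) ρ - (Φ ^ (d * j)) σ))
      Filter.atTop (nhds 0) := by
    apply h2.comp
    exact Filter.tendsto_atTop_atTop.mpr fun b => ⟨b, fun a ha => le_trans ha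
      (Nat.le_mul_of_pos_left a (by omega))⟩
  have hval : ∀ j : ℕ, L ((Φ ^ (d * j)) ρ - (Φ ^ (d * j)) σ) = 1 := by
    intro j
    open Fin.CommRing in
    have hcast : ((d * j : ℕ) : Fin d) = 0 := by
      push_cast
      rw [Fin.natCast_self, zero_mul]
    have hΨ : (Ψ ^ (d * j)) (P 0) = P 0 := by rw [hPiter, hcast, sub_zero]
    have e1 : ((Φ ^ (d * j)) ρ * P 0).trace = 1 := by
      rw [hiter, hΨ, hρ, Matrix.smul_mul, Matrix.trace_smul, (hproj 0).2.2, ht0,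
        smul_eq_mul, ← Complex.ofReal_mul, inv_mul_cancel₀ hr0.ne', Complex.ofReal_one]
    have e2 : ((Φ ^ (d * j)) σ * P 0).trace = 0 := by
      rw [hiter, hΨ, hσ, Matrix.smul_mul, Matrix.trace_smul,
        horth 1 0 (by simp [Fin.ext_iff, Nat.mod_eq_of_lt (by omega : 1 < d)]),
        Matrix.trace_zero, smul_zero]
    have : L ((Φ ^ (d * j)) ρ - (Φ ^ (d * j)) σ)
        = ((Φ ^ (d * j)) ρ * P 0).trace - ((Φ ^ (d * j)) σ * P 0).trace := by
      simp [hL, Matrix.sub_mul, Matrix.trace_sub, LinearMap.mulRight_apply]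
    rw [this, e1, e2, sub_zero]
  rw [show (fun j : ℕ => L ((Φ ^ (d * j)) ρ - (Φ ^ (d * j)) σ)) = fun _ => (1 : ℂ)
    from funext hval] at h3
  exact zero_ne_one (tendsto_nhds_unique h3 tendsto_const_nhds)
end

section
/- Let 𝔐 be an open quantum random walk on ⊕_{i∈V} 𝔥_i. A closed subspace 𝒱 ⊆ ⊕_i 𝔥_i is an enclosure for 𝔐 (i.e. supp ρ ⊆ 𝒱 implies supp 𝔐(ρ) ⊆ 𝒱 for all positive trace-class ρ) if and only if 𝒱 is stable under every operator L_π ⊗ |j⟩⟨i| for all i, j ∈ V and all paths π from i to j, where L_π is the composition of transition operators along π. -/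
set_option linter.unusedSectionVars false
set_option maxHeartbeats 1000000

open Matrix
open scoped ComplexOrder

/-- The `(i,j)` block of an operator on `⊕_i 𝔥_i`. -/
def oqrwBlock {V : Type*} {m : V → ℕ}
    (ρ : Matrix (Σ i : V, Fin (m i)) (Σ i : V, Fin (m i)) ℂ) (i j : V) :
    Matrix (Fin (m i)) (Fin (m j)) ℂ :=
  fun a b => ρ ⟨i, a⟩ ⟨j, b⟩

/-- The open quantum random walk with transition operators `L i j`. -/
noncomputable def oqrwMap {V : Type*} [Fintype V] [DecidableEq V] {m : V → ℕ}
    (L : ∀ i j : V, Matrix (Fin (m i)) (Fin (m j)) ℂ)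
    (ρ : Matrix (Σ i : V, Fin (m i)) (Σ i : V, Fin (m i)) ℂ) :
    Matrix (Σ i : V, Fin (m i)) (Σ i : V, Fin (m i)) ℂ :=
  Matrix.blockDiagonal' (fun i => ∑ j, L i j * oqrwBlock ρ j j * (L i j)ᴴ)

/-- The component of `x ∈ ⊕_i 𝔥_i` at site `i`. -/
def siteProj {V : Type*} {m : V → ℕ} (i : V)
    (x : (Σ i : V, Fin (m i)) → ℂ) : Fin (m i) → ℂ :=
  fun a => x ⟨i, a⟩

/-- The embedding of `𝔥_j` into `⊕_i 𝔥_i`. -/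
def siteEmb {V : Type*} [DecidableEq V] {m : V → ℕ} (j : V)
    (y : Fin (m j) → ℂ) : (Σ i : V, Fin (m i)) → ℂ :=
  fun s => if h : s.1 = j then y (h ▸ s.2) else 0

/-- The operator `L_π` along the path `c 0, c 1, …, c ℓ`. -/
noncomputable def pathOp {V : Type*} {m : V → ℕ}
    (L : ∀ i j : V, Matrix (Fin (m i)) (Fin (m j)) ℂ) (c : ℕ → V) :
    (ℓ : ℕ) → Matrix (Fin (m (c ℓ))) (Fin (m (c 0))) ℂ
  | 0 => 1
  | ℓ + 1 => L (c (ℓ + 1)) (c ℓ) * pathOp L c ℓ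

section AuxOqrw

variable {V : Type*} [Fintype V] [DecidableEq V] {m : V → ℕ}

lemma siteProj_siteEmb (j : V) (y : Fin (m j) → ℂ) :
    siteProj j (siteEmb j y) = y := by
  funext a
  simp [siteProj, siteEmb]

lemma siteProj_siteEmb_ne {i j : V} (h : i ≠ j) (y : Fin (m j) → ℂ) :
    siteProj i (siteEmb j y) = 0 := by
  funext a
  simp [siteProj, siteEmb, h]

lemma siteEmb_add (j : V) (y z : Fin (m j) → ℂ) :
    siteEmb j (y + z) = siteEmb j y + siteEmb j z := by
  funext s
  by_cases h : s.1 = j <;> simp [siteEmb, h]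

lemma siteEmb_sum {ι : Type*} (s : Finset ι) (j : V) (f : ι → Fin (m j) → ℂ) :
    siteEmb j (∑ k ∈ s, f k) = ∑ k ∈ s, siteEmb j (f k) := by
  classical
  induction s using Finset.induction with
  | empty => funext t; by_cases h : t.1 = j <;> simp [siteEmb, h]
  | insert _ _ h ih => rw [Finset.sum_insert h, Finset.sum_insert h, siteEmb_add, ih]

lemma blockDiag_mulVec (M : ∀ i, Matrix (Fin (m i)) (Fin (m i)) ℂ)
    (v : (Σ i : V, Fin (m i)) → ℂ) (i : V) (a : Fin (m i)) :
    ((blockDiagonal' M) *ᵥ v) ⟨i, a⟩ = ((M i) *ᵥ (siteProj i v)) a := by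
  rw [mulVec, dotProduct, ← Finset.univ_sigma_univ, Finset.sum_sigma]
  rw [Finset.sum_eq_single i]
  · simp [mulVec, dotProduct, siteProj]
  · intro j _ hj
    apply Finset.sum_eq_zero
    intro b _
    rw [blockDiagonal'_apply_ne _ _ _ (Ne.symm hj), zero_mul]
  · simp

lemma sum_mulVec'_s11 {p q : Type*} [Fintype q] {ι : Type*} (s : Finset ι)
    (A : ι → Matrix p q ℂ) (v : q → ℂ) :
    (∑ k ∈ s, A k) *ᵥ v = ∑ k ∈ s, (A k) *ᵥ v := by
  classical
  induction s using Finset.induction with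
  | empty => simp
  | insert _ _ h ih => rw [Finset.sum_insert h, Finset.sum_insert h, add_mulVec, ih]

lemma range_self_mul_conjTranspose' {p q : Type*} [Fintype p] [Fintype q]
    (A : Matrix p q ℂ) :
    LinearMap.range (A * Aᴴ).mulVecLin = LinearMap.range A.mulVecLin := by
  apply Submodule.eq_of_le_of_finrank_eq
  · rintro _ ⟨v, rfl⟩
    exact ⟨Aᴴ *ᵥ v, by simp [mulVecLin_apply, mulVec_mulVec]⟩
  · exact (rank_self_mul_conjTranspose A : _)

lemma sum_siteEmb_apply (g : ∀ i : V, Fin (m i) → ℂ) (i : V) (a : Fin (m i)) :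
    (∑ k, siteEmb k (g k)) ⟨i, a⟩ = g i a := by
  rw [Finset.sum_apply]
  rw [Finset.sum_eq_single i]
  · simp [siteEmb]
  · intro k _ hk
    simp [siteEmb, Ne.symm hk]
  · simp

/-- Key decomposition: the OQRW applied to a vector, written as a sum of site embeddings. -/
lemma oqrwMap_mulVec_eq (L : ∀ i j : V, Matrix (Fin (m i)) (Fin (m j)) ℂ)
    (ρ : Matrix (Σ i : V, Fin (m i)) (Σ i : V, Fin (m i)) ℂ)
    (v : (Σ i : V, Fin (m i)) → ℂ) :
    (oqrwMap L ρ) *ᵥ v =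
      ∑ i, siteEmb i ((∑ j, L i j * oqrwBlock ρ j j * (L i j)ᴴ) *ᵥ (siteProj i v)) := by
  funext s
  rcases s with ⟨i, a⟩
  rw [sum_siteEmb_apply, oqrwMap, blockDiag_mulVec]

lemma block_mulVec_emb (ρ : Matrix (Σ i : V, Fin (m i)) (Σ i : V, Fin (m i)) ℂ)
    (j : V) (w : Fin (m j) → ℂ) :
    siteProj j (ρ *ᵥ siteEmb j w) = (oqrwBlock ρ j j) *ᵥ w := by
  funext a
  show (ρ *ᵥ siteEmb j w) ⟨j, a⟩ = _
  rw [mulVec, dotProduct, ← Finset.univ_sigma_univ, Finset.sum_sigma]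
  rw [Finset.sum_eq_single j]
  · simp [mulVec, dotProduct, oqrwBlock, siteEmb]
  · intro j' _ hj'
    apply Finset.sum_eq_zero
    intro b _
    simp [siteEmb, hj']
  · simp

end AuxOqrw

/-- A subspace `𝒱 ⊆ ⊕_i 𝔥_i` is an enclosure for the OQRW iff it is stable
under every operator `L_π ⊗ |j⟩⟨i|` for every path `π` from `i` to `j`. -/
theorem stmt11 {V : Type*} [Fintype V] [DecidableEq V] {m : V → ℕ}
    (L : ∀ i j : V, Matrix (Fin (m i)) (Fin (m j)) ℂ)
    (hstoch : ∀ j, ∑ i, (L i j)ᴴ * L i j = 1)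
    (𝒱 : Submodule ℂ ((Σ i : V, Fin (m i)) → ℂ)) :
    (∀ ρ : Matrix (Σ i : V, Fin (m i)) (Σ i : V, Fin (m i)) ℂ, ρ.PosSemidef →
        LinearMap.range (Matrix.toLin' ρ) ≤ 𝒱 →
        LinearMap.range (Matrix.toLin' (oqrwMap L ρ)) ≤ 𝒱) ↔
    (∀ (c : ℕ → V) (ℓ : ℕ), 1 ≤ ℓ → ∀ x ∈ 𝒱,
        siteEmb (c ℓ) ((pathOp L c ℓ).mulVec (siteProj (c 0) x)) ∈ 𝒱) := by
  constructor
  · -- enclosure → path stability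
    intro hencl
    -- key one-step lemma
    have key : ∀ (i j : V), ∀ x ∈ 𝒱, siteEmb i ((L i j) *ᵥ (siteProj j x)) ∈ 𝒱 := by
      intro i j x hx
      set ρ : Matrix (Σ i : V, Fin (m i)) (Σ i : V, Fin (m i)) ℂ :=
        vecMulVec x (star x) with hρ
      have hPSD : ρ.PosSemidef := by
        rw [hρ, vecMulVec_eq Unit, ← conjTranspose_replicateCol]
        exact posSemidef_self_mul_conjTranspose _
      have hrange : LinearMap.range (Matrix.toLin' ρ) ≤ 𝒱 := by
        rintro _ ⟨v, rfl⟩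
        rw [Matrix.toLin'_apply]
        have : ρ *ᵥ v = ((star x) ⬝ᵥ v) • x := by
          funext s
          simp only [hρ, mulVec, dotProduct, vecMulVec_apply, Pi.smul_apply,
            Pi.star_apply, smul_eq_mul, Finset.sum_mul]
          apply Finset.sum_congr rfl
          intro t _
          ring
        rw [this]
        exact 𝒱.smul_mem _ hx
      have hr2 := hencl ρ hPSD hrange
      -- the matrix B whose columns are the vectors L i j' (siteProj j' x)
      set y : ∀ j' : V, Fin (m i) → ℂ := fun j' => (L i j') *ᵥ (siteProj j' x) with hy
      set B : Matrix (Fin (m i)) V ℂ := Matrix.of (fun p j' => y j' p) with hB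
      have key2 : ∀ j', L i j' * oqrwBlock ρ j' j' * (L i j')ᴴ
          = vecMulVec (y j') (star (y j')) := by
        intro j'
        have h0 : oqrwBlock ρ j' j'
            = vecMulVec (siteProj j' x) (star (siteProj j' x)) := by
          funext a b
          simp [oqrwBlock, hρ, vecMulVec_apply, siteProj]
        have hrow : Matrix.replicateRow Unit (star ((L i j') *ᵥ (siteProj j' x)))
            = Matrix.replicateRow Unit (star (siteProj j' x)) * (L i j')ᴴ := by
          rw [← conjTranspose_replicateCol, ← conjTranspose_replicateCol, replicateCol_mulVec, conjTranspose_mul]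
        rw [h0, vecMulVec_eq Unit, vecMulVec_eq Unit, hy]
        rw [Matrix.mul_assoc, Matrix.mul_assoc, ← Matrix.mul_assoc (L i j'),
          ← replicateCol_mulVec, ← hrow]
      have hMB : (∑ j', L i j' * oqrwBlock ρ j' j' * (L i j')ᴴ) = B * Bᴴ := by
        funext p q
        simp only [key2]
        rw [Matrix.sum_apply, mul_apply]
        apply Finset.sum_congr rfl
        intro j' _
        simp [vecMulVec_apply, hB]
      have hyj : y j ∈ LinearMap.range (∑ j', L i j' * oqrwBlock ρ j' j' * (L i j')ᴴ).mulVecLin := by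
        rw [hMB, range_self_mul_conjTranspose']
        refine ⟨Pi.single j 1, ?_⟩
        funext p
        simp [mulVecLin_apply, mulVec, dotProduct, Pi.single_apply, hB]
      obtain ⟨v, hv⟩ := hyj
      rw [mulVecLin_apply] at hv
      have hemb : siteEmb i (y j) = (oqrwMap L ρ) *ᵥ (siteEmb i v) := by
        funext s
        rcases s with ⟨i', a⟩
        rw [oqrwMap, blockDiag_mulVec]
        by_cases h : i' = i
        · subst h
          rw [siteProj_siteEmb, hv]
          simp [siteEmb]
        · rw [siteProj_siteEmb_ne h, mulVec_zero]
          simp [siteEmb, h]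
      have : siteEmb i (y j) ∈ 𝒱 := by
        rw [hemb]
        exact hr2 ⟨siteEmb i v, Matrix.toLin'_apply _ _⟩
      exact this
    -- induct along the path
    intro c ℓ hℓ x hx
    induction ℓ, hℓ using Nat.le_induction with
    | base =>
      have h := key (c 1) (c 0) x hx
      have h' : siteEmb (c 1)
          ((L (c 1) (c 0) * (1 : Matrix (Fin (m (c 0))) (Fin (m (c 0))) ℂ)) *ᵥ
            siteProj (c 0) x) ∈ 𝒱 := by
        rwa [Matrix.mul_one]
      exact h'
    | succ ℓ h1 ih =>
      have := key (c (ℓ + 1)) (c ℓ) _ ih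
      rw [siteProj_siteEmb] at this
      rw [mulVec_mulVec] at this
      exact this
  · -- path stability → enclosure
    intro hpath ρ hρ hrange
    rintro _ ⟨v, rfl⟩
    rw [Matrix.toLin'_apply, oqrwMap_mulVec_eq]
    apply Submodule.sum_mem
    intro i _
    rw [sum_mulVec'_s11, siteEmb_sum]
    apply Submodule.sum_mem
    intro j _
    -- the term for a fixed j
    set w : Fin (m j) → ℂ := (L i j)ᴴ *ᵥ (siteProj i v) with hw
    have hx : ρ *ᵥ (siteEmb j w) ∈ 𝒱 :=
      hrange ⟨siteEmb j w, Matrix.toLin'_apply _ _⟩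
    set c : ℕ → V := fun n => match n with | 0 => j | _ + 1 => i with hc
    have hp := hpath c 1 le_rfl _ hx
    have hp' : siteEmb i
        ((L i j * (1 : Matrix (Fin (m j)) (Fin (m j)) ℂ)) *ᵥ
          siteProj j (ρ *ᵥ (siteEmb j w))) ∈ 𝒱 := hp
    rw [Matrix.mul_one] at hp'
    have h2 : siteProj j (ρ *ᵥ (siteEmb j w)) = (oqrwBlock ρ j j) *ᵥ w :=
      block_mulVec_emb ρ j w
    rw [h2] at hp'
    have h3 : (L i j * oqrwBlock ρ j j * (L i j)ᴴ) *ᵥ (siteProj i v)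
        = (L i j) *ᵥ ((oqrwBlock ρ j j) *ᵥ w) := by
      rw [hw, mulVec_mulVec, mulVec_mulVec]
    rw [h3]
    exact hp'
end

section
/- The support of an invariant state of a positive trace-preserving map Φ on trace-class operators is an enclosure: if Φ(ρ₀) = ρ₀ for a state ρ₀, and ρ is any state with supp ρ ⊆ supp ρ₀, then supp Φ(ρ) ⊆ supp ρ₀. -/
open Matrix
open scoped ComplexOrder

/-- Factorization of linear maps through a kernel inclusion. -/
lemma aux_factor {K V W : Type*} [Field K] [AddCommGroup V] [Module K V]
    [AddCommGroup W] [Module K W] (f g : V →ₗ[K] W)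
    (h : LinearMap.ker g ≤ LinearMap.ker f) : ∃ h' : W →ₗ[K] W, f = h' ∘ₗ g := by
  let h₀ : LinearMap.range g →ₗ[K] W :=
    ((LinearMap.ker g).liftQ f h) ∘ₗ (g.quotKerEquivRange.symm : LinearMap.range g →ₗ[K] _)
  obtain ⟨h', hh'⟩ := LinearMap.exists_extend h₀
  refine ⟨h', ?_⟩
  ext x
  have : h' (g x) = h₀ ⟨g x, LinearMap.mem_range_self g x⟩ := by
    have := congrArg (fun φ => φ ⟨g x, LinearMap.mem_range_self g x⟩) hh'
    simpa using this
  simp only [LinearMap.comp_apply, this, h₀, LinearMap.coe_comp, Function.comp_apply,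
    LinearEquiv.coe_coe]
  rw [LinearMap.quotKerEquivRange_symm_apply_image]
  simp

/-- For hermitian matrices, pointwise kernel inclusion gives range inclusion. -/
lemma aux_range {m : ℕ} {A B : Matrix (Fin m) (Fin m) ℂ}
    (hA : A.IsHermitian) (hB : B.IsHermitian)
    (h : ∀ x, B *ᵥ x = 0 → A *ᵥ x = 0) :
    LinearMap.range (Matrix.toLin' A) ≤ LinearMap.range (Matrix.toLin' B) := by
  have hker : LinearMap.ker (Matrix.toLin' B) ≤ LinearMap.ker (Matrix.toLin' A) := by
    intro x hx
    simp only [LinearMap.mem_ker, Matrix.toLin'_apply] at *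
    exact h x hx
  obtain ⟨h', hh'⟩ := aux_factor _ _ hker
  have hAB : A = LinearMap.toMatrix' h' * B := by
    have : Matrix.toLin' A = Matrix.toLin' (LinearMap.toMatrix' h' * B) := by
      rw [Matrix.toLin'_mul, Matrix.toLin'_toMatrix']; exact hh'
    exact Matrix.toLin'.injective this
  have hAB2 : A = B * (LinearMap.toMatrix' h')ᴴ := by
    calc A = Aᴴ := hA.symm
    _ = (LinearMap.toMatrix' h' * B)ᴴ := by rw [← hAB]
    _ = Bᴴ * (LinearMap.toMatrix' h')ᴴ := by rw [Matrix.conjTranspose_mul]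
    _ = B * (LinearMap.toMatrix' h')ᴴ := by rw [hB.eq]
  rw [hAB2, Matrix.toLin'_mul]
  exact LinearMap.range_comp_le_range _ _

/-- A positive semidefinite matrix is bounded by a multiple of the identity
(as a quadratic form). -/
lemma aux_bound {m : ℕ} {M : Matrix (Fin m) (Fin m) ℂ} (hM : M.PosSemidef) :
    ∃ r : ℝ, 0 ≤ r ∧ ∀ y : Fin m → ℂ, star y ⬝ᵥ M *ᵥ y ≤ (r : ℂ) * (star y ⬝ᵥ y) := by
  have hH := hM.1
  set U : Matrix (Fin m) (Fin m) ℂ := (hH.eigenvectorUnitary : Matrix (Fin m) (Fin m) ℂ) with hUdef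
  have hU : U * star U = 1 := Matrix.mem_unitaryGroup_iff.mp hH.eigenvectorUnitary.2
  set d : Fin m → ℝ := hH.eigenvalues with hddef
  have hd : ∀ i, 0 ≤ d i := hM.eigenvalues_nonneg
  refine ⟨∑ i, d i, Finset.sum_nonneg fun i _ => hd i, fun y => ?_⟩
  have hzy : star (star U *ᵥ y) = star y ᵥ* U := by
    rw [Matrix.star_mulVec, Matrix.star_eq_conjTranspose, Matrix.conjTranspose_conjTranspose]
  have hMy : M *ᵥ y = U *ᵥ (Matrix.diagonal (Complex.ofReal ∘ d) *ᵥ (star U *ᵥ y)) := by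
    conv_lhs => rw [hH.spectral_theorem]
    simp only [Matrix.mulVec_mulVec, Matrix.mul_assoc, hUdef, hddef]
    simp only [Unitary.conjStarAlgAut_apply, Unitary.coe_star, Matrix.mul_assoc]
    rfl
  have key : star y ⬝ᵥ M *ᵥ y
      = star (star U *ᵥ y) ⬝ᵥ (Matrix.diagonal (Complex.ofReal ∘ d) *ᵥ (star U *ᵥ y)) := by
    rw [hMy, Matrix.dotProduct_mulVec, hzy]
  have hzz : star (star U *ᵥ y) ⬝ᵥ (star U *ᵥ y) = star y ⬝ᵥ y := by
    rw [hzy, ← Matrix.dotProduct_mulVec, Matrix.mulVec_mulVec, hU, Matrix.one_mulVec]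
  rw [key, ← hzz]
  set z : Fin m → ℂ := star U *ᵥ y
  have lhs_eq : star z ⬝ᵥ (Matrix.diagonal (Complex.ofReal ∘ d) *ᵥ z)
      = ((∑ i, d i * Complex.normSq (z i) : ℝ) : ℂ) := by
    simp only [dotProduct, Matrix.mulVec_diagonal, Pi.star_apply, Function.comp_apply,
      RCLike.star_def]
    push_cast
    refine Finset.sum_congr rfl fun i _ => ?_
    rw [Complex.normSq_eq_conj_mul_self]
    ring
  have rhs_eq : star z ⬝ᵥ z = ((∑ i, Complex.normSq (z i) : ℝ) : ℂ) := by
    simp only [dotProduct, Pi.star_apply, RCLike.star_def]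
    push_cast
    refine Finset.sum_congr rfl fun i _ => ?_
    rw [Complex.normSq_eq_conj_mul_self]
  rw [lhs_eq, rhs_eq, ← Complex.ofReal_mul, Complex.real_le_real]
  calc ∑ i, d i * Complex.normSq (z i)
      ≤ ∑ i, d i * (∑ j, Complex.normSq (z j)) := by
        refine Finset.sum_le_sum fun i _ => ?_
        exact mul_le_mul_of_nonneg_left
          (Finset.single_le_sum (fun j _ => Complex.normSq_nonneg (z j)) (Finset.mem_univ i))
          (hd i)
    _ = (∑ i, d i) * ∑ j, Complex.normSq (z j) := by rw [← Finset.sum_mul]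

/-- Domination by a diagonal matrix supported on the nonzero diagonal entries. -/
lemma aux_diag {m : ℕ} {A : Matrix (Fin m) (Fin m) ℂ} {d : Fin m → ℝ}
    (hA : A.PosSemidef) (hd : ∀ i, 0 ≤ d i)
    (hcol : ∀ i, d i = 0 → ∀ j, A j i = 0) :
    ∃ c : ℝ, 0 ≤ c ∧
      ((c : ℂ) • Matrix.diagonal (Complex.ofReal ∘ d) - A).PosSemidef := by
  obtain ⟨r, hr, hbd⟩ := aux_bound hA
  set D : Matrix (Fin m) (Fin m) ℂ := Matrix.diagonal (Complex.ofReal ∘ d) with hD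
  have hDherm : D.IsHermitian := by
    refine Matrix.isHermitian_diagonal_of_self_adjoint _ ?_
    funext i
    simp [Function.comp, Complex.star_def]
  by_cases hS : ∃ i₀, d i₀ ≠ 0
  case neg =>
    push_neg at hS
    have hA0 : A = 0 := by
      ext j i
      exact hcol i (hS i) j
    refine ⟨1, zero_le_one, ?_⟩
    have hD0 : D = 0 := by
      ext i j
      simp only [hD, Matrix.diagonal_apply, Function.comp_apply]
      split
      · next h => subst h; simp [hS i]
      · rfl
    rw [hA0, hD0]
    simpa using Matrix.PosSemidef.zero
  case pos =>
    obtain ⟨i₀, hi₀⟩ := hS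
    set S : Finset (Fin m) := Finset.univ.filter (fun i => d i ≠ 0) with hSdef
    have hSne : S.Nonempty := ⟨i₀, by simp [hSdef, hi₀]⟩
    set lam : ℝ := S.inf' hSne d with hlam
    have hlam_pos : 0 < lam := by
      rw [hlam, Finset.lt_inf'_iff]
      intro i hi
      simp only [hSdef, Finset.mem_filter] at hi
      exact lt_of_le_of_ne (hd i) (Ne.symm hi.2)
    have hlam_le : ∀ i, d i ≠ 0 → lam ≤ d i := fun i hi =>
      Finset.inf'_le d (by simp [hSdef, hi])
    refine ⟨r / lam, div_nonneg hr hlam_pos.le, ?_⟩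
    set c : ℝ := r / lam with hc
    have hclam : c * lam = r := div_mul_cancel₀ r hlam_pos.ne'
    have hc0 : 0 ≤ c := div_nonneg hr hlam_pos.le
    refine Matrix.PosSemidef.of_dotProduct_mulVec_nonneg ?_ ?_
    · have h1 : ((c:ℂ) • D)ᴴ = (c:ℂ) • D := by
        rw [Matrix.conjTranspose_smul, hDherm.eq, Complex.star_def, Complex.conj_ofReal]
      exact Matrix.IsHermitian.sub h1 hA.1
    intro x
    rw [Matrix.sub_mulVec, dotProduct_sub, Matrix.smul_mulVec,
      dotProduct_smul, sub_nonneg]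
    -- reduce to star x ⬝ᵥ A *ᵥ x ≤ c • star x ⬝ᵥ D x
    set x₁ : Fin m → ℂ := fun i => if d i ≠ 0 then x i else 0 with hx₁
    have hAx : A *ᵥ x = A *ᵥ x₁ := by
      ext i
      simp only [Matrix.mulVec, dotProduct]
      refine Finset.sum_congr rfl fun j _ => ?_
      by_cases hj : d j = 0
      · simp [hx₁, hj, hcol j hj i]
      · simp [hx₁, hj]
    have hrow : ∀ i j, d i = 0 → A i j = 0 := by
      intro i j hi
      have := hcol i hi j
      rw [← hA.1.eq]
      simp [Matrix.conjTranspose_apply, this]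
    have hdot : star x ⬝ᵥ (A *ᵥ x₁) = star x₁ ⬝ᵥ (A *ᵥ x₁) := by
      simp only [dotProduct, Pi.star_apply]
      refine Finset.sum_congr rfl fun i _ => ?_
      by_cases hi : d i = 0
      · have : (A *ᵥ x₁) i = 0 := by
          simp only [Matrix.mulVec, dotProduct]
          exact Finset.sum_eq_zero fun j _ => by simp [hrow i j hi]
        simp [this]
      · simp [hx₁, hi]
    have step1 : star x ⬝ᵥ A *ᵥ x ≤ (r : ℂ) * (star x₁ ⬝ᵥ x₁) := by
      rw [hAx, hdot]; exact hbd x₁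
    have step2 : (r : ℂ) * (star x₁ ⬝ᵥ x₁) ≤ (c : ℂ) * (star x ⬝ᵥ D *ᵥ x) := by
      simp only [dotProduct, Pi.star_apply, Finset.mul_sum, hD,
        Matrix.mulVec_diagonal, Function.comp_apply]
      refine Finset.sum_le_sum fun i _ => ?_
      by_cases hi : d i = 0
      · simp [hx₁, hi]
      · have hterm : star (x₁ i) * x₁ i = ((Complex.normSq (x i) : ℝ) : ℂ) := by
          simp only [hx₁, hi, if_true, ite_not, if_neg hi, RCLike.star_def]
          rw [Complex.normSq_eq_conj_mul_self]
        have hterm2 : star (x i) * ((d i : ℂ) * x i)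
            = ((d i * Complex.normSq (x i) : ℝ) : ℂ) := by
          simp only [RCLike.star_def]
          push_cast
          rw [Complex.normSq_eq_conj_mul_self]
          ring
        rw [hterm, hterm2, ← Complex.ofReal_mul, ← Complex.ofReal_mul, Complex.real_le_real]
        have : r ≤ c * d i := by
          calc r = c * lam := hclam.symm
            _ ≤ c * d i := mul_le_mul_of_nonneg_left (hlam_le i hi) hc0
        calc r * Complex.normSq (x i) ≤ (c * d i) * Complex.normSq (x i) :=
              mul_le_mul_of_nonneg_right this (Complex.normSq_nonneg _)
          _ = c * (d i * Complex.normSq (x i)) := by ring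
    calc star x ⬝ᵥ A *ᵥ x ≤ (r : ℂ) * (star x₁ ⬝ᵥ x₁) := step1
      _ ≤ (c : ℂ) * (star x ⬝ᵥ D *ᵥ x) := step2
      _ = (c : ℂ) • (star x ⬝ᵥ D *ᵥ x) := rfl

/-- Domination lemma: if `ker B ⊆ ker A` pointwise for positive semidefinite
matrices, then `A ≤ c • B` for some `c ≥ 0`. -/
lemma aux_dom {m : ℕ} {A B : Matrix (Fin m) (Fin m) ℂ}
    (hA : A.PosSemidef) (hB : B.PosSemidef)
    (h : ∀ x, B *ᵥ x = 0 → A *ᵥ x = 0) :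
    ∃ c : ℝ, 0 ≤ c ∧ ((c : ℂ) • B - A).PosSemidef := by
  have hH := hB.1
  set U : Matrix (Fin m) (Fin m) ℂ := (hH.eigenvectorUnitary : Matrix (Fin m) (Fin m) ℂ)
    with hUdef
  have hU1 : U * star U = 1 := Matrix.mem_unitaryGroup_iff.mp hH.eigenvectorUnitary.2
  have hU2 : star U * U = 1 := Matrix.mem_unitaryGroup_iff'.mp hH.eigenvectorUnitary.2
  set d : Fin m → ℝ := hH.eigenvalues with hddef
  have hd : ∀ i, 0 ≤ d i := hB.eigenvalues_nonneg
  set D : Matrix (Fin m) (Fin m) ℂ := Matrix.diagonal (Complex.ofReal ∘ d) with hDdef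
  have hspec : B = U * D * star U := hH.spectral_theorem
  have hA' : (star U * A * U).PosSemidef := by
    have := hA.conjTranspose_mul_mul_same (B := U)
    rwa [Matrix.star_eq_conjTranspose]
  have hcol : ∀ i, d i = 0 → ∀ j, (star U * A * U) j i = 0 := by
    intro i hi j
    have hBU : B *ᵥ (U *ᵥ Pi.single i 1) = 0 := by
      have hUU : U * D * star U * U = U * D := by
        rw [Matrix.mul_assoc, hU2, Matrix.mul_one]
      rw [hspec, Matrix.mulVec_mulVec, hUU, ← Matrix.mulVec_mulVec]
      have : D *ᵥ Pi.single i 1 = 0 := by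
        ext k
        simp [hDdef, Matrix.mulVec_diagonal, Pi.single_apply]
        intro hk
        subst hk
        simp [hi]
      rw [this, Matrix.mulVec_zero]
    have hAU : A *ᵥ (U *ᵥ Pi.single i 1) = 0 := h _ hBU
    have : (star U * A * U) *ᵥ Pi.single i 1 = 0 := by
      rw [← Matrix.mulVec_mulVec, ← Matrix.mulVec_mulVec, hAU, Matrix.mulVec_zero]
    have hcolj := congrFun this j
    simpa [Matrix.mulVec_single] using hcolj
  obtain ⟨c, hc0, hPSD⟩ := aux_diag hA' hd hcol
  refine ⟨c, hc0, ?_⟩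
  have hconj := hPSD.mul_mul_conjTranspose_same U
  have heq : U * ((c : ℂ) • D - star U * A * U) * Uᴴ = (c : ℂ) • B - A := by
    rw [Matrix.star_eq_conjTranspose] at hspec hU1 hU2 ⊢
    rw [Matrix.mul_sub, Matrix.sub_mul, Matrix.mul_smul, Matrix.smul_mul, hspec]
    congr 1
    calc U * (Uᴴ * A * U) * Uᴴ = (U * Uᴴ) * A * (U * Uᴴ) := by
          simp only [Matrix.mul_assoc]
      _ = A := by rw [hU1, Matrix.one_mul, Matrix.mul_one]
  rwa [heq] at hconj

/-- Range inclusion implies pointwise kernel inclusion for PSD matrices. -/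
lemma aux_ker {m : ℕ} {A B : Matrix (Fin m) (Fin m) ℂ}
    (hA : A.PosSemidef) (hB : B.PosSemidef)
    (hsupp : LinearMap.range (Matrix.toLin' A) ≤ LinearMap.range (Matrix.toLin' B)) :
    ∀ x, B *ᵥ x = 0 → A *ᵥ x = 0 := by
  intro x hx
  have hmem : A *ᵥ x ∈ LinearMap.range (Matrix.toLin' B) := by
    apply hsupp
    exact ⟨x, by rw [Matrix.toLin'_apply]⟩
  obtain ⟨y, hy⟩ := hmem
  rw [Matrix.toLin'_apply] at hy
  have hzero : star x ⬝ᵥ A *ᵥ x = 0 := by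
    rw [← hy, Matrix.dotProduct_mulVec]
    have : star x ᵥ* B = 0 := by
      have h1 : star (B *ᵥ x) = star x ᵥ* B := by
        rw [Matrix.star_mulVec, hB.1.eq]
      rw [← h1, hx, star_zero]
    rw [this, zero_dotProduct]
  exact (hA.dotProduct_mulVec_zero_iff x).mp hzero

/-- The support of an invariant state of a positive trace-preserving map is an
enclosure: if `Φ ρ₀ = ρ₀` and `supp ρ ⊆ supp ρ₀` for a state `ρ`, then
`supp (Φ ρ) ⊆ supp ρ₀`. -/
theorem stmt12 {n : ℕ}
    (Φ : Matrix (Fin n) (Fin n) ℂ →ₗ[ℂ] Matrix (Fin n) (Fin n) ℂ)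
    (hpos : ∀ ρ, ρ.PosSemidef → (Φ ρ).PosSemidef)
    (htr : ∀ ρ, (Φ ρ).trace = ρ.trace)
    (ρ₀ ρ : Matrix (Fin n) (Fin n) ℂ)
    (h0 : ρ₀.PosSemidef) (h0t : ρ₀.trace = 1) (hinv : Φ ρ₀ = ρ₀)
    (hρ : ρ.PosSemidef) (hρt : ρ.trace = 1)
    (hsupp : LinearMap.range (Matrix.toLin' ρ) ≤ LinearMap.range (Matrix.toLin' ρ₀)) :
    LinearMap.range (Matrix.toLin' (Φ ρ)) ≤ LinearMap.range (Matrix.toLin' ρ₀) := by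
  have h1 : ∀ x, ρ₀ *ᵥ x = 0 → ρ *ᵥ x = 0 := aux_ker hρ h0 hsupp
  obtain ⟨c, hc0, hPSD⟩ := aux_dom hρ h0 h1
  have hΦeq : Φ ((c : ℂ) • ρ₀ - ρ) = (c : ℂ) • ρ₀ - Φ ρ := by
    rw [map_sub, _root_.map_smul, hinv]
  have hPSD2 : ((c : ℂ) • ρ₀ - Φ ρ).PosSemidef := by
    rw [← hΦeq]; exact hpos _ hPSD
  have hΦρ : (Φ ρ).PosSemidef := hpos ρ hρ
  have h2 : ∀ x, ρ₀ *ᵥ x = 0 → (Φ ρ) *ᵥ x = 0 := by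
    intro x hx
    have hle : star x ⬝ᵥ (Φ ρ) *ᵥ x ≤ 0 := by
      have := hPSD2.dotProduct_mulVec_nonneg x
      rw [Matrix.sub_mulVec, dotProduct_sub, Matrix.smul_mulVec,
        dotProduct_smul, hx, dotProduct_zero, smul_zero, zero_sub] at this
      exact neg_nonneg.mp this
    have hge : 0 ≤ star x ⬝ᵥ (Φ ρ) *ᵥ x := hΦρ.dotProduct_mulVec_nonneg x
    exact ((hΦρ.dotProduct_mulVec_zero_iff x).mp (le_antisymm hle hge))
  exact aux_range hΦρ.1 h0.1 h2
end

section
/- Let Φ be a positive trace-preserving map on n×n complex matrices, and let 𝒱 be an enclosure (subspace such that supp ρ ⊆ 𝒱 implies supp Φ(ρ) ⊆ 𝒱), with orthogonal complement decomposition determined by projections P_𝒱 and P_𝒲 = I − P_𝒱. Then for every positive semidefinite ρ, P_𝒲 Φ(P_𝒱 ρ P_𝒲 + P_𝒲 ρ P_𝒱) P_𝒲 = 0. -/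
open Matrix
open scoped ComplexOrder


lemma aux_real (a b : ℝ) (h : ∀ ε : ℝ, 0 < ε → 0 ≤ a + ε * b) : 0 ≤ a := by
  by_contra h'
  push_neg at h'
  rcases le_or_gt b 0 with hb | hb
  · nlinarith [h 1 one_pos]
  · have hε : 0 < -a / (2 * b) := div_pos (by linarith) (by linarith)
    have h2 := h _ hε
    have h3 : -a / (2 * b) * b = -a / 2 := by field_simp
    nlinarith

lemma quad_zero {n : ℕ} (X : Matrix (Fin n) (Fin n) ℂ)
    (h : ∀ v : Fin n → ℂ, star v ⬝ᵥ (X *ᵥ v) = 0) : X = 0 := by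
  have hz : Matrix.toEuclideanLin X = 0 := by
    rw [← inner_map_self_eq_zero]
    intro x
    rw [← inner_conj_symm]
    have : (inner ℂ x (Matrix.toEuclideanLin X x) : ℂ) = 0 := by
      rw [EuclideanSpace.inner_eq_star_dotProduct, dotProduct_comm]
      exact h _
    rw [this, map_zero]
  simpa using (map_eq_zero_iff _ (Matrix.toEuclideanLin (𝕜 := ℂ)).injective).mp hz


/-- If `𝒱` (range of the orthogonal projection `P`) is an enclosure for a
positive trace-preserving map `Φ`, then for every positive semidefinite `ρ`,
the `𝒲𝒲`-corner of `Φ` applied to the off-diagonal part of `ρ` vanishes: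
`P_𝒲 Φ(P_𝒱 ρ P_𝒲 + P_𝒲 ρ P_𝒱) P_𝒲 = 0`, where `P_𝒲 = 1 - P`. -/
theorem stmt13 {n : ℕ}
    (Φ : Matrix (Fin n) (Fin n) ℂ →ₗ[ℂ] Matrix (Fin n) (Fin n) ℂ)
    (hpos : ∀ ρ, ρ.PosSemidef → (Φ ρ).PosSemidef)
    (htr : ∀ ρ, (Φ ρ).trace = ρ.trace)
    (P : Matrix (Fin n) (Fin n) ℂ) (hP : P.IsHermitian) (hP2 : P * P = P)
    (hencl : ∀ ρ, ρ.PosSemidef → P * ρ * P = ρ → P * Φ ρ * P = Φ ρ) :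
    ∀ ρ : Matrix (Fin n) (Fin n) ℂ, ρ.PosSemidef →
      (1 - P) * Φ (P * ρ * (1 - P) + (1 - P) * ρ * P) * (1 - P) = 0 := by
  intro ρ hρ
  set Q : Matrix (Fin n) (Fin n) ℂ := 1 - P with hQdef
  have hQH : Qᴴ = Q := by
    simp [hQdef, conjTranspose_sub, hP.eq]
  have hQP : Q * P = 0 := by simp [hQdef, sub_mul, hP2]
  have hPQ : P * Q = 0 := by simp [hQdef, mul_sub, hP2]
  have hcorner : Q * Φ (P * ρ * P) * Q = 0 := by
    have hpsd : (P * ρ * P).PosSemidef := by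
      have := hρ.mul_mul_conjTranspose_same P
      rwa [hP.eq] at this
    have heq : P * (P * ρ * P) * P = P * ρ * P := by
      simp only [← mul_assoc, hP2]
      rw [mul_assoc, hP2]
    rw [← hencl _ hpsd heq]
    simp only [← mul_assoc]
    rw [hQP]
    simp
  set X : Matrix (Fin n) (Fin n) ℂ := Q * Φ (P * ρ * Q + Q * ρ * P) * Q with hXdef
  set B0 : Matrix (Fin n) (Fin n) ℂ := Q * Φ (Q * ρ * Q) * Q with hBdef
  -- key PSD family
  have key : ∀ (σ t : ℝ), 0 < t → σ * σ = 1 →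
      (((σ : ℝ) : ℂ) • X + ((t ^ 2 : ℝ) : ℂ) • B0).PosSemidef := by
    intro σ t ht hσ
    set a : ℂ := ((t⁻¹ : ℝ) : ℂ) with hadef
    set c : ℂ := ((σ * t : ℝ) : ℂ) with hcdef
    set A : Matrix (Fin n) (Fin n) ℂ := a • P + c • Q with hAdef
    have hsa : star a = a := by rw [hadef, RCLike.star_def, Complex.conj_ofReal]
    have hsc : star c = c := by rw [hcdef, RCLike.star_def, Complex.conj_ofReal]
    have hAH : Aᴴ = A := by
      rw [hAdef, conjTranspose_add, conjTranspose_smul, conjTranspose_smul,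
        hsa, hsc, hP.eq, hQH]
    have hac : a * c = ((σ : ℝ) : ℂ) := by
      rw [hadef, hcdef, ← Complex.ofReal_mul]
      congr 1
      field_simp
    have hcc : c * c = ((t ^ 2 : ℝ) : ℂ) := by
      rw [hcdef, ← Complex.ofReal_mul]
      congr 1
      nlinarith [hσ]
    have hexp : A * ρ * A = (a * a) • (P * ρ * P) + ((a * c) • (P * ρ * Q)
        + (c * a) • (Q * ρ * P)) + (c * c) • (Q * ρ * Q) := by
      simp only [hAdef, add_mul, mul_add, smul_mul_assoc, mul_smul_comm]
      module
    have hpsd : (Q * Φ (A * ρ * A) * Q).PosSemidef := by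
      have h1 : (A * ρ * Aᴴ).PosSemidef := hρ.mul_mul_conjTranspose_same A
      rw [hAH] at h1
      have h2 := (hpos _ h1).mul_mul_conjTranspose_same Q
      rwa [hQH] at h2
    have hrw : Q * Φ (A * ρ * A) * Q
        = ((σ : ℝ) : ℂ) • X + ((t ^ 2 : ℝ) : ℂ) • B0 := by
      rw [hexp]
      simp only [map_add, _root_.map_smul, mul_add, add_mul, mul_smul_comm, smul_mul_assoc,
        hcorner, smul_zero, zero_add, hac, hcc, mul_comm c a]
      rw [hXdef, hBdef]
      simp only [map_add, mul_add, add_mul, smul_add]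
    rwa [hrw] at hpsd
  -- pointwise quadratic form vanishes
  have hquad : ∀ v : Fin n → ℂ, star v ⬝ᵥ (X *ᵥ v) = 0 := by
    intro v
    set z : ℂ := star v ⬝ᵥ (X *ᵥ v) with hzdef
    set w : ℂ := star v ⬝ᵥ (B0 *ᵥ v) with hwdef
    have hform : ∀ (σ t : ℝ), 0 < t → σ * σ = 1 →
        (0 : ℂ) ≤ ((σ : ℝ) : ℂ) * z + ((t ^ 2 : ℝ) : ℂ) * w := by
      intro σ t ht hσ
      have := (key σ t ht hσ).dotProduct_mulVec_nonneg v
      rwa [add_mulVec, smul_mulVec, smul_mulVec, dotProduct_add,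
        dotProduct_smul, dotProduct_smul, smul_eq_mul, smul_eq_mul] at this
    have h1 : ∀ ε : ℝ, 0 < ε → 0 ≤ z.re + ε * w.re := by
      intro ε hε
      have := hform 1 (Real.sqrt ε) (Real.sqrt_pos.mpr hε) (by norm_num)
      rw [Real.sq_sqrt hε.le] at this
      have hre := (Complex.le_def.mp this).1
      simpa using hre
    have h2 : ∀ ε : ℝ, 0 < ε → 0 ≤ -z.re + ε * w.re := by
      intro ε hε
      have := hform (-1) (Real.sqrt ε) (Real.sqrt_pos.mpr hε) (by norm_num)
      rw [Real.sq_sqrt hε.le] at this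
      have hre := (Complex.le_def.mp this).1
      simpa using hre
    have hre0 : z.re = 0 :=
      le_antisymm (by simpa using neg_nonneg.mp (aux_real _ _ h2)) (aux_real _ _ h1)
    have him1 := (Complex.le_def.mp (hform 1 1 one_pos (by norm_num))).2
    have him2 := (Complex.le_def.mp (hform (-1) 1 one_pos (by norm_num))).2
    simp at him1 him2
    have him0 : z.im = 0 := by linarith
    rw [hzdef] at hre0 him0
    exact Complex.ext hre0 him0
  exact quad_zero X hquad
end

section
/- Let Φ be a positive trace-preserving map on n×n complex matrices with invariant state η, and let 𝒱 be an enclosure with orthogonal projection P_𝒱 and 𝒲 = 𝒱^⊥ with projection P_𝒲. Then η_𝒲 := P_𝒲 η P_𝒲 satisfies Φ(η_𝒲) = η_𝒲; in particular, the support of η intersected with 𝒱^⊥ is also an enclosure. -/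
open Matrix
open scoped ComplexOrder

namespace Stmt15Aux

variable {n : ℕ}

/-- A complex matrix with identically vanishing quadratic form is zero. -/
lemma quad_eq_zero {A : Matrix (Fin n) (Fin n) ℂ}
    (h : ∀ x : Fin n → ℂ, star x ⬝ᵥ A *ᵥ x = 0) : A = 0 := by
  have hT : Matrix.toEuclideanLin A = 0 := by
    rw [← inner_map_self_eq_zero]
    intro x
    have hx := congrArg star (h ((WithLp.equiv 2 (Fin n → ℂ)) x))
    rw [star_zero] at hx
    rw [EuclideanSpace.inner_eq_star_dotProduct]
    rw [ofLp_toLpLin, Matrix.toLin'_apply]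
    rw [star_dotProduct, star_star] at hx
    simpa [dotProduct_comm] using hx
  have := congrArg (Matrix.toEuclideanLin (𝕜 := ℂ) (m := Fin n) (n := Fin n)).symm hT
  simpa using this

lemma ext_mulVec {A B : Matrix (Fin n) (Fin n) ℂ}
    (h : ∀ x, A *ᵥ x = B *ᵥ x) : A = B := by
  apply Matrix.toLin'.injective
  exact LinearMap.ext fun x => by simpa [Matrix.toLin'_apply] using h x

/-- A PSD matrix with zero trace is zero. -/
lemma psd_trace_eq_zero {A : Matrix (Fin n) (Fin n) ℂ}
    (hA : A.PosSemidef) (h : A.trace = 0) : A = 0 := by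
  exact hA.trace_eq_zero_iff.mp h

open scoped MatrixOrder in
/-- If `P A P = 0` with `A` PSD and `P` Hermitian then `A P = 0` and `P A = 0`. -/
lemma psd_conj_eq_zero {A Q : Matrix (Fin n) (Fin n) ℂ}
    (hA : A.PosSemidef) (hQ : Q.IsHermitian) (h : Q * A * Q = 0) :
    A * Q = 0 ∧ Q * A = 0 := by
  have hs := CFC.sqrt_mul_sqrt_self A hA.nonneg
  have hsh : (CFC.sqrt A).IsHermitian := (CFC.sqrt_nonneg A).posSemidef.1
  have key : (CFC.sqrt A * Q)ᴴ * (CFC.sqrt A * Q) = 0 := by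
    rw [Matrix.conjTranspose_mul, hsh.eq, hQ.eq]
    calc Q * CFC.sqrt A * (CFC.sqrt A * Q) = Q * (CFC.sqrt A * CFC.sqrt A) * Q := by
          noncomm_ring
      _ = 0 := by rw [hs, h]
  have hsq : CFC.sqrt A * Q = 0 := Matrix.conjTranspose_mul_self_eq_zero.mp key
  have h1 : A * Q = 0 := by
    calc A * Q = CFC.sqrt A * (CFC.sqrt A * Q) := by rw [← Matrix.mul_assoc, hs]
      _ = 0 := by rw [hsq, Matrix.mul_zero]
  refine ⟨h1, ?_⟩
  have : (A * Q)ᴴ = 0 := by rw [h1]; simp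
  rwa [Matrix.conjTranspose_mul, hQ.eq, hA.1.eq] at this

lemma conj_quad (U D : Matrix (Fin n) (Fin n) ℂ) (x : Fin n → ℂ) :
    star x ⬝ᵥ (U * D * Uᴴ) *ᵥ x = star (Uᴴ *ᵥ x) ⬝ᵥ D *ᵥ (Uᴴ *ᵥ x) := by
  rw [Matrix.star_mulVec, Matrix.conjTranspose_conjTranspose, ← Matrix.dotProduct_mulVec,
    Matrix.mulVec_mulVec, Matrix.mulVec_mulVec]

/-- quadratic form bounded by trace times norm. -/
lemma quad_le_trace {ρ : Matrix (Fin n) (Fin n) ℂ} (hρ : ρ.PosSemidef) (y : Fin n → ℂ) :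
    star y ⬝ᵥ ρ *ᵥ y ≤ ρ.trace * (star y ⬝ᵥ y) := by
  have h1 := hρ.1
  set V : Matrix (Fin n) (Fin n) ℂ := (h1.eigenvectorUnitary : Matrix (Fin n) (Fin n) ℂ)
  have hV1 : Vᴴ * V = 1 := by
    simpa [Matrix.star_eq_conjTranspose] using (Unitary.mem_iff.mp h1.eigenvectorUnitary.2).1
  have hV2 : V * Vᴴ = 1 := by
    simpa [Matrix.star_eq_conjTranspose] using (Unitary.mem_iff.mp h1.eigenvectorUnitary.2).2
  have spec : ρ = V * Matrix.diagonal (RCLike.ofReal ∘ h1.eigenvalues) * Vᴴ := by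
    simpa [Matrix.star_eq_conjTranspose] using h1.spectral_theorem
  set f : Fin n → ℂ := RCLike.ofReal ∘ h1.eigenvalues with hf
  set z := Vᴴ *ᵥ y with hz
  have hfnn : ∀ i, (0:ℂ) ≤ f i := fun i =>
    Complex.zero_le_real.mpr (hρ.eigenvalues_nonneg i)
  have hann : ∀ i, (0:ℂ) ≤ star (z i) * z i := fun i => star_mul_self_nonneg (z i)
  have hLHS : star y ⬝ᵥ ρ *ᵥ y = ∑ i, f i * (star (z i) * z i) := by
    conv_lhs => rw [spec]
    rw [conj_quad]
    simp only [dotProduct, Matrix.mulVec_diagonal, Pi.star_apply, ← hz]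
    exact Finset.sum_congr rfl fun i _ => by ring
  have htrace : ρ.trace = ∑ i, f i := by
    conv_lhs => rw [spec]
    rw [Matrix.trace_mul_comm, ← Matrix.mul_assoc, hV1, Matrix.one_mul, Matrix.trace_diagonal]
  have hRHS : star y ⬝ᵥ y = ∑ i, star (z i) * z i := by
    have : star y ⬝ᵥ (V * 1 * Vᴴ) *ᵥ y = star z ⬝ᵥ (1 : Matrix (Fin n) (Fin n) ℂ) *ᵥ z :=
      conj_quad V 1 y
    rw [Matrix.mul_one, hV2] at this
    simpa [Matrix.one_mulVec, dotProduct] using this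
  rw [hLHS, htrace, hRHS, Finset.sum_mul]
  apply Finset.sum_le_sum
  intro i _
  exact mul_le_mul_of_nonneg_left
    (Finset.single_le_sum (fun j _ => hann j) (Finset.mem_univ i)) (hfnn i)

/-- nonneg real scalar multiple of PSD is PSD -/
lemma psd_smul_real {A : Matrix (Fin n) (Fin n) ℂ} (hA : A.PosSemidef)
    {c : ℝ} (hc : 0 ≤ c) : ((c:ℂ) • A).PosSemidef := by
  refine Matrix.PosSemidef.of_dotProduct_mulVec_nonneg ?_ ?_
  · have : ((c:ℂ) • A)ᴴ = (c:ℂ) • A := by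
      rw [Matrix.conjTranspose_smul, hA.1.eq]
      simp
    exact this
  · intro x
    rw [Matrix.smul_mulVec, dotProduct_smul]
    exact smul_nonneg (by exact_mod_cast Complex.zero_le_real.mpr hc) (hA.dotProduct_mulVec_nonneg x)

/-- trace of PSD is nonneg -/
lemma psd_trace_nonneg {A : Matrix (Fin n) (Fin n) ℂ} (hA : A.PosSemidef) :
    (0:ℂ) ≤ A.trace := by
  exact hA.trace_nonneg


/-- Key lemma: if `W` is a PSD fixed point of a positive map `Φ`, then the support of `W`
is an enclosure. -/
lemma support_enclosure {n : ℕ}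
    (Φ : Matrix (Fin n) (Fin n) ℂ →ₗ[ℂ] Matrix (Fin n) (Fin n) ℂ)
    (hpos : ∀ ρ, ρ.PosSemidef → (Φ ρ).PosSemidef)
    {W : Matrix (Fin n) (Fin n) ℂ} (hW : W.PosSemidef) (hWinv : Φ W = W)
    (ρ : Matrix (Fin n) (Fin n) ℂ) (hρ : ρ.PosSemidef)
    (hr : LinearMap.range (Matrix.toLin' ρ) ≤ LinearMap.range (Matrix.toLin' W)) :
    LinearMap.range (Matrix.toLin' (Φ ρ)) ≤ LinearMap.range (Matrix.toLin' W) := by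
  classical
  have h1 := hW.1
  set U : Matrix (Fin n) (Fin n) ℂ := (h1.eigenvectorUnitary : Matrix (Fin n) (Fin n) ℂ) with hUdef
  have hU1 : Uᴴ * U = 1 := by
    simpa [Matrix.star_eq_conjTranspose] using (Unitary.mem_iff.mp h1.eigenvectorUnitary.2).1
  have hU2 : U * Uᴴ = 1 := by
    simpa [Matrix.star_eq_conjTranspose] using (Unitary.mem_iff.mp h1.eigenvectorUnitary.2).2
  set d : Fin n → ℝ := h1.eigenvalues with hddef
  have spec : W = U * Matrix.diagonal (fun i => (d i : ℂ)) * Uᴴ := by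
    simpa [Matrix.star_eq_conjTranspose, Function.comp_def] using h1.spectral_theorem
  have hdnn : ∀ i, 0 ≤ d i := fun i => hW.eigenvalues_nonneg i
  have key : ∀ a b : Fin n → ℂ,
      (U * Matrix.diagonal a * Uᴴ) * (U * Matrix.diagonal b * Uᴴ)
        = U * Matrix.diagonal (fun i => a i * b i) * Uᴴ := by
    intro a b
    calc (U * Matrix.diagonal a * Uᴴ) * (U * Matrix.diagonal b * Uᴴ)
        = U * Matrix.diagonal a * (Uᴴ * U) * Matrix.diagonal b * Uᴴ := by noncomm_ring
      _ = U * (Matrix.diagonal a * Matrix.diagonal b) * Uᴴ := by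
          rw [hU1]; noncomm_ring
      _ = U * Matrix.diagonal (fun i => a i * b i) * Uᴴ := by
          rw [Matrix.diagonal_mul_diagonal]
  have diag_congr : ∀ a b : Fin n → ℂ,
      a = b → U * Matrix.diagonal a * Uᴴ = U * Matrix.diagonal b * Uᴴ := by
    intro a b h; rw [h]
  by_cases hd : ∀ i, d i = 0
  · -- degenerate case `W = 0`
    have hW0 : W = 0 := by
      rw [spec]
      have : Matrix.diagonal (fun i => ((d i : ℂ))) = 0 := by
        rw [show (fun i => ((d i : ℂ))) = fun _ => (0:ℂ) from funext fun i => by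
          simp [hd i]]
        simp
      simp [this]
    have hρ0 : ρ = 0 := by
      have hble : LinearMap.range (Matrix.toLin' ρ) ≤ ⊥ := by
        simpa [hW0, LinearMap.range_eq_bot] using hr
      have h0 : Matrix.toLin' ρ = 0 := LinearMap.range_eq_bot.mp (le_bot_iff.mp hble)
      have := congrArg Matrix.toLin'.symm h0
      simpa using this
    rw [hρ0, map_zero]
    simp
  · push_neg at hd
    obtain ⟨i₀, hi₀⟩ := hd
    set s : Finset (Fin n) := Finset.univ.filter (fun i => d i ≠ 0) with hsdef
    have hs : s.Nonempty := ⟨i₀, by simp [hsdef, hi₀]⟩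
    set lam : ℝ := s.inf' hs d with hlamdef
    have hlam : 0 < lam := by
      rw [hlamdef, Finset.lt_inf'_iff]
      intro i hi
      have : d i ≠ 0 := by simpa [hsdef] using hi
      exact lt_of_le_of_ne (hdnn i) (Ne.symm this)
    set E : Fin n → ℂ := fun i => if d i = 0 then 0 else 1 with hEdef
    set g : Fin n → ℂ := fun i => if d i = 0 then 0 else ((d i : ℂ))⁻¹ with hgdef
    set R : Matrix (Fin n) (Fin n) ℂ := U * Matrix.diagonal E * Uᴴ with hRdef
    set S : Matrix (Fin n) (Fin n) ℂ := U * Matrix.diagonal g * Uᴴ with hSdef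
    have hRW : R * W = W := by
      rw [hRdef, spec, key]
      exact diag_congr _ _ (funext fun i => by
        by_cases h : d i = 0 <;> simp [hEdef, h])
    have hWR : W * R = W := by
      rw [hRdef, spec, key]
      exact diag_congr _ _ (funext fun i => by
        by_cases h : d i = 0 <;> simp [hEdef, h])
    have hWS : W * S = R := by
      rw [hRdef, hSdef, spec, key]
      refine diag_congr _ _ (funext fun i => ?_)
      by_cases h : d i = 0
      · simp [hgdef, hEdef, h]
      · have hne : (d i : ℂ) ≠ 0 := by exact_mod_cast h
        simp only [hgdef, hEdef, if_neg h]
        rw [mul_inv_cancel₀ hne]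
    have hRherm : R.IsHermitian := by
      show Rᴴ = R
      rw [hRdef, Matrix.conjTranspose_mul, Matrix.conjTranspose_mul,
        Matrix.conjTranspose_conjTranspose, Matrix.diagonal_conjTranspose,
        ← Matrix.mul_assoc]
      refine diag_congr _ _ (funext fun i => ?_)
      by_cases h : d i = 0 <;> simp [hEdef, h, Pi.star_apply]
    have hR2 : R * R = R := by
      rw [hRdef, key]
      exact diag_congr _ _ (funext fun i => by
        by_cases h : d i = 0 <;> simp [hEdef, h])
    -- W - lam • R is PSD
    have hWlam : (W - (lam:ℂ) • R).PosSemidef := by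
      have heq : W - (lam:ℂ) • R
          = U * Matrix.diagonal (fun i => ((d i - lam * (if d i = 0 then 0 else 1) : ℝ) : ℂ))
            * Uᴴ := by
        rw [spec, hRdef, ← Matrix.smul_mul, ← Matrix.mul_smul, ← Matrix.diagonal_smul,
          ← Matrix.sub_mul, ← Matrix.mul_sub, Matrix.diagonal_sub]
        refine diag_congr _ _ (funext fun i => ?_)
        by_cases h : d i = 0 <;> push_cast <;> simp [hEdef, h]
      rw [heq]
      have hpsd : (Matrix.diagonal
          (fun i => ((d i - lam * (if d i = 0 then 0 else 1) : ℝ) : ℂ))).PosSemidef := by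
        rw [Matrix.posSemidef_diagonal_iff]
        intro i
        rw [Complex.zero_le_real]
        by_cases h : d i = 0
        · simp [h]
        · have hi : i ∈ s := by simp [hsdef, h]
          have := Finset.inf'_le d hi
          simp only [if_neg h, mul_one]
          linarith
      simpa using hpsd.mul_mul_conjTranspose_same U
    -- R fixes ρ
    have hRρ : R * ρ = ρ := by
      apply ext_mulVec
      intro x
      have hx : ρ *ᵥ x ∈ LinearMap.range (Matrix.toLin' W) :=
        hr ⟨x, by rw [Matrix.toLin'_apply]⟩
      obtain ⟨y, hy⟩ := hx
      rw [Matrix.toLin'_apply] at hy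
      rw [← Matrix.mulVec_mulVec, ← hy, Matrix.mulVec_mulVec, hRW]
    have hρR : ρ * R = ρ := by
      have h' : (R * ρ)ᴴ = ρᴴ := by rw [hRρ]
      rwa [Matrix.conjTranspose_mul, hRherm.eq, hρ.1.eq] at h'
    have hRρR : R * ρ * R = ρ := by rw [hRρ, hρR]
    -- trace is a nonnegative real
    set τ : ℝ := ρ.trace.re with hτdef
    have h0 := psd_trace_nonneg hρ
    rw [Complex.le_def] at h0
    have him : ρ.trace.im = 0 := by simpa using h0.2.symm
    have hτ : ρ.trace = (τ:ℂ) := Complex.ext (by simp [hτdef]) (by simp [him])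
    have hτnn : 0 ≤ τ := by simpa [hτdef] using h0.1
    -- (τ+1) • R - ρ is PSD
    have hcρ : (((τ+1:ℝ):ℂ) • R - ρ).PosSemidef := by
      refine Matrix.PosSemidef.of_dotProduct_mulVec_nonneg ?_ ?_
      · show (((τ+1:ℝ):ℂ) • R - ρ)ᴴ = _
        rw [Matrix.conjTranspose_sub, Matrix.conjTranspose_smul, hRherm.eq, hρ.1.eq]
        congr 1
        simp
      · intro x
        have hform : star x ⬝ᵥ (((τ+1:ℝ):ℂ) • R - ρ) *ᵥ x
            = ((τ+1:ℝ):ℂ) * (star x ⬝ᵥ R *ᵥ x) - star x ⬝ᵥ ρ *ᵥ x := by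
          rw [Matrix.sub_mulVec, dotProduct_sub, Matrix.smul_mulVec,
            dotProduct_smul]
          simp [smul_eq_mul]
        rw [hform]
        set y := R *ᵥ x with hy
        have hxRx : star x ⬝ᵥ R *ᵥ x = star y ⬝ᵥ y := by
          have h' : star x ⬝ᵥ (R * R * Rᴴ) *ᵥ x = star (Rᴴ *ᵥ x) ⬝ᵥ R *ᵥ (Rᴴ *ᵥ x) :=
            conj_quad R R x
          rw [hRherm.eq, hR2, hR2, Matrix.mulVec_mulVec, hR2] at h'
          exact h'
        have hxρx : star x ⬝ᵥ ρ *ᵥ x = star y ⬝ᵥ ρ *ᵥ y := by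
          have h' : star x ⬝ᵥ (R * ρ * Rᴴ) *ᵥ x = star (Rᴴ *ᵥ x) ⬝ᵥ ρ *ᵥ (Rᴴ *ᵥ x) :=
            conj_quad R ρ x
          rw [hRherm.eq, hRρR] at h'
          exact h'
        rw [hxRx, hxρx, sub_nonneg]
        have hq : (0:ℂ) ≤ star y ⬝ᵥ y := dotProduct_star_self_nonneg y
        calc star y ⬝ᵥ ρ *ᵥ y ≤ ρ.trace * (star y ⬝ᵥ y) := quad_le_trace hρ y
          _ = (τ:ℂ) * (star y ⬝ᵥ y) := by rw [hτ]
          _ ≤ ((τ+1:ℝ):ℂ) * (star y ⬝ᵥ y) := by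
              apply mul_le_mul_of_nonneg_right _ hq
              rw [Complex.real_le_real]
              linarith
    -- combine : ρ ≤ c₂ • W
    set c₂ : ℝ := (τ+1)/lam with hc₂def
    have hc₂nn : 0 ≤ c₂ := by positivity
    have hlamne : (lam:ℂ) ≠ 0 := Complex.ofReal_ne_zero.mpr hlam.ne'
    have hclam : (c₂:ℂ) * (lam:ℂ) = ((τ+1:ℝ):ℂ) := by
      rw [hc₂def]
      push_cast
      field_simp
    have hsplit : (c₂:ℂ) • W - ρ
        = (c₂:ℂ) • (W - (lam:ℂ) • R) + (((τ+1:ℝ):ℂ) • R - ρ) := by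
      rw [smul_sub, smul_smul, hclam]
      abel
    have hX : ((c₂:ℂ) • W - ρ).PosSemidef := by
      rw [hsplit]
      exact (psd_smul_real hWlam hc₂nn).add hcρ
    have hY : ((c₂:ℂ) • W - Φ ρ).PosSemidef := by
      have h' := hpos _ hX
      rwa [map_sub, _root_.map_smul, hWinv] at h'
    have h1Rherm : (1 - R).IsHermitian := by
      show (1 - R)ᴴ = 1 - R
      rw [Matrix.conjTranspose_sub, Matrix.conjTranspose_one, hRherm.eq]
    have hz1 : (1 - R) * W = 0 := by
      rw [Matrix.sub_mul, Matrix.one_mul, hRW, sub_self]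
    have hZcomp : (1 - R) * ((c₂:ℂ) • W - Φ ρ) * (1 - R)
        = - ((1 - R) * Φ ρ * (1 - R)) := by
      have e1 : (1 - R) * ((c₂:ℂ) • W) = 0 := by
        rw [Matrix.mul_smul, hz1, smul_zero]
      calc (1 - R) * ((c₂:ℂ) • W - Φ ρ) * (1 - R)
          = ((1 - R) * ((c₂:ℂ) • W) - (1 - R) * Φ ρ) * (1 - R) := by rw [mul_sub (1 - R) ((c₂:ℂ) • W) (Φ ρ)]
        _ = (0 - (1 - R) * Φ ρ) * (1 - R) := by rw [e1]
        _ = - ((1 - R) * Φ ρ * (1 - R)) := by rw [zero_sub, neg_mul]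
    have hTpsd : ((1 - R) * Φ ρ * (1 - R)).PosSemidef := by
      have h' := (hpos ρ hρ).mul_mul_conjTranspose_same (1 - R)
      rwa [h1Rherm.eq] at h'
    have hTnpsd : (- ((1 - R) * Φ ρ * (1 - R))).PosSemidef := by
      have h' := hY.mul_mul_conjTranspose_same (1 - R)
      rwa [h1Rherm.eq, hZcomp] at h'
    have hT0 : (1 - R) * Φ ρ * (1 - R) = 0 := by
      apply quad_eq_zero
      intro x
      refine le_antisymm ?_ (hTpsd.dotProduct_mulVec_nonneg x)
      have h' := hTnpsd.dotProduct_mulVec_nonneg x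
      rw [Matrix.neg_mulVec, dotProduct_neg] at h'
      exact neg_nonneg.mp h'
    have hmul := psd_conj_eq_zero (hpos ρ hρ) h1Rherm hT0
    have hRΦρ : R * Φ ρ = Φ ρ := by
      have h' := hmul.2
      rw [Matrix.sub_mul, Matrix.one_mul, sub_eq_zero] at h'
      exact h'.symm
    intro y hy
    obtain ⟨x, hx⟩ := hy
    refine ⟨S *ᵥ (Φ ρ *ᵥ x), ?_⟩
    rw [Matrix.toLin'_apply] at hx ⊢
    rw [Matrix.mulVec_mulVec, hWS, ← hx, Matrix.mulVec_mulVec, hRΦρ]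


lemma real_aux {a b : ℝ} (hb : 0 ≤ b) (h : ∀ r : ℝ, 0 ≤ r * a + r * r * b) : a = 0 := by
  by_contra hne
  have habs : 0 < |a| := abs_pos.mpr hne
  have hkey : ∀ r : ℝ, 0 < r → |a| ≤ r * b := by
    intro r hr
    have h1 := h r
    have h2 := h (-r)
    rw [abs_le]
    constructor <;> nlinarith
  have hb1 : 0 < 2*(b+1) := by linarith
  have hfin := hkey (|a| / (2*(b+1))) (by positivity)
  rw [div_mul_eq_mul_div, le_div_iff₀ hb1] at hfin
  nlinarith [abs_nonneg a]

lemma pencil_zero {n : ℕ} {A B : Matrix (Fin n) (Fin n) ℂ} (hB : B.PosSemidef)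
    (h : ∀ r : ℝ, ((r:ℂ) • A + ((r:ℂ)*(r:ℂ)) • B).PosSemidef) : A = 0 := by
  apply quad_eq_zero
  intro x
  have hβnn := hB.dotProduct_mulVec_nonneg x
  have hβim : (star x ⬝ᵥ B *ᵥ x).im = 0 := by
    have h' := (Complex.le_def.mp hβnn).2; simpa using h'.symm
  have hβre : 0 ≤ (star x ⬝ᵥ B *ᵥ x).re := by
    have h' := (Complex.le_def.mp hβnn).1; simpa using h'
  have hquad : ∀ r : ℝ,
      0 ≤ (r:ℂ) * (star x ⬝ᵥ A *ᵥ x) + ((r:ℂ)*(r:ℂ)) * (star x ⬝ᵥ B *ᵥ x) := by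
    intro r
    have h' := (h r).dotProduct_mulVec_nonneg x
    simpa [Matrix.add_mulVec, Matrix.smul_mulVec, dotProduct_add,
      dotProduct_smul, smul_eq_mul] using h'
  have hαim : (star x ⬝ᵥ A *ᵥ x).im = 0 := by
    have h1 := (Complex.le_def.mp (hquad 1)).2
    have h2 := (Complex.le_def.mp (hquad (-1))).2
    simp only [Complex.ofReal_one, Complex.ofReal_neg, one_mul, neg_mul, mul_neg, neg_neg,
      Complex.add_im, Complex.mul_im, Complex.one_re, Complex.one_im, Complex.neg_im,
      Complex.neg_re, Complex.zero_im] at h1 h2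
    simp only [hβim] at h1 h2
    linarith
  have hquadre : ∀ r : ℝ,
      0 ≤ r * (star x ⬝ᵥ A *ᵥ x).re + r * r * (star x ⬝ᵥ B *ᵥ x).re := by
    intro r
    have h' := (Complex.le_def.mp (hquad r)).1
    simpa [Complex.add_re, Complex.mul_re, Complex.ofReal_re, Complex.ofReal_im, hβim,
      hαim] using h'
  have hαre := real_aux hβre hquadre
  exact Complex.ext (by simpa using hαre) (by simpa using hαim)

lemma invariant_complement {n : ℕ}
    (Φ : Matrix (Fin n) (Fin n) ℂ →ₗ[ℂ] Matrix (Fin n) (Fin n) ℂ)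
    (hpos : ∀ ρ, ρ.PosSemidef → (Φ ρ).PosSemidef)
    (htr : ∀ ρ, (Φ ρ).trace = ρ.trace)
    (η : Matrix (Fin n) (Fin n) ℂ) (hη : η.PosSemidef)
    (hηinv : Φ η = η)
    (P : Matrix (Fin n) (Fin n) ℂ) (hP : P.IsHermitian) (hP2 : P * P = P)
    (hencl : ∀ ρ, ρ.PosSemidef → P * ρ * P = ρ → P * Φ ρ * P = Φ ρ) :
    Φ ((1 - P) * η * (1 - P)) = (1 - P) * η * (1 - P) := by
  set Q : Matrix (Fin n) (Fin n) ℂ := 1 - P with hQdef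
  have hQherm : Qᴴ = Q := by
    rw [hQdef, Matrix.conjTranspose_sub, Matrix.conjTranspose_one, hP.eq]
  have hQP : Q * P = 0 := by rw [hQdef, Matrix.sub_mul, Matrix.one_mul, hP2, sub_self]
  have hPQ : P * Q = 0 := by rw [hQdef, Matrix.mul_sub, Matrix.mul_one, hP2, sub_self]
  have hPQ1 : P + Q = 1 := by rw [hQdef]; abel
  set C : Matrix (Fin n) (Fin n) ℂ := P * η * Q + Q * η * P with hCdef
  have hρV : (P * η * P).PosSemidef := by
    have h' := hη.mul_mul_conjTranspose_same P; rwa [hP.eq] at h'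
  have hρW : (Q * η * Q).PosSemidef := by
    have h' := hη.mul_mul_conjTranspose_same Q; rwa [hQherm] at h'
  have hV : P * Φ (P * η * P) * P = Φ (P * η * P) := by
    apply hencl _ hρV
    calc P * (P * η * P) * P = (P * P) * η * (P * P) := by noncomm_ring
      _ = P * η * P := by rw [hP2]
  have hQΦV : Q * Φ (P * η * P) * Q = 0 := by
    rw [← hV]
    calc Q * (P * Φ (P * η * P) * P) * Q
        = (Q * P) * Φ (P * η * P) * (P * Q) := by noncomm_ring
      _ = 0 := by rw [hQP, hPQ, Matrix.zero_mul, Matrix.mul_zero]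
  have hexp : ∀ c : ℂ, (P + c • Q) * η * (P + c • Q)
      = P * η * P + c • C + (c*c) • (Q * η * Q) := by
    intro c
    rw [hCdef]
    simp only [Matrix.add_mul, Matrix.mul_add, smul_mul_assoc, mul_smul_comm,
      smul_smul, smul_add]
    abel
  set A : Matrix (Fin n) (Fin n) ℂ := Q * Φ C * Q with hAdef
  set B : Matrix (Fin n) (Fin n) ℂ := Q * Φ (Q * η * Q) * Q with hBdef
  have hB : B.PosSemidef := by
    have h' := (hpos _ hρW).mul_mul_conjTranspose_same Q; rwa [hQherm] at h'
  have hform : ∀ c : ℂ, Q * Φ (P * η * P + c • C + (c*c) • (Q * η * Q)) * Q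
      = c • A + (c*c) • B := by
    intro c
    rw [map_add, map_add, _root_.map_smul, _root_.map_smul]
    simp only [Matrix.add_mul, Matrix.mul_add, smul_mul_assoc, mul_smul_comm]
    rw [hQΦV, hAdef, hBdef]
    abel
  have hcomb : ∀ r : ℝ, ((r:ℂ) • A + (((r:ℂ))*((r:ℂ))) • B).PosSemidef := by
    intro r
    have hherm : (P + (r:ℂ) • Q)ᴴ = P + (r:ℂ) • Q := by
      rw [Matrix.conjTranspose_add, hP.eq, Matrix.conjTranspose_smul, hQherm]
      congr 1
      simp [Complex.conj_ofReal]
    have h1 : ((P + (r:ℂ) • Q) * η * (P + (r:ℂ) • Q)).PosSemidef := by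
      have h' := hη.mul_mul_conjTranspose_same (P + (r:ℂ) • Q); rwa [hherm] at h'
    have h2 := (hpos _ h1).mul_mul_conjTranspose_same Q
    rw [hQherm] at h2
    rw [hexp r, hform r] at h2
    exact h2
  have hA0 : A = 0 := pencil_zero hB hcomb
  -- use invariance of η
  have hid : (P + Q) * η * (P + Q) = η := by rw [hPQ1, Matrix.one_mul, Matrix.mul_one]
  have hη4 : η = P * η * P + C + Q * η * Q := by
    conv_lhs => rw [← hid]
    rw [hCdef]
    simp only [Matrix.add_mul, Matrix.mul_add]
    abel
  have e1 : Q * Φ η * Q = Q * η * Q := by rw [hηinv]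
  have e3 : Q * Φ η * Q = B := by
    conv_lhs => rw [hη4]
    rw [map_add, map_add]
    simp only [Matrix.add_mul, Matrix.mul_add]
    rw [hQΦV, ← hAdef, hA0, ← hBdef]
    simp
  have hQB : B = Q * η * Q := e3.symm.trans e1
  -- final step
  set M : Matrix (Fin n) (Fin n) ℂ := Φ (Q * η * Q) with hMdef
  have hMpsd : M.PosSemidef := hpos _ hρW
  have hMid : (P + Q) * M * (P + Q) = M := by rw [hPQ1, Matrix.one_mul, Matrix.mul_one]
  have hM4 : M = P * M * P + P * M * Q + (Q * M * P + Q * M * Q) := by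
    conv_lhs => rw [← hMid]
    simp only [Matrix.add_mul, Matrix.mul_add]
    abel
  have hPMQ0 : (P * M * Q).trace = 0 := by
    rw [Matrix.trace_mul_comm, ← Matrix.mul_assoc, hQP, Matrix.zero_mul, Matrix.trace_zero]
  have hQMP0 : (Q * M * P).trace = 0 := by
    rw [Matrix.trace_mul_comm, ← Matrix.mul_assoc, hPQ, Matrix.zero_mul, Matrix.trace_zero]
  have hQMQtr : (Q * M * Q).trace = M.trace := by
    have : Q * M * Q = Q * η * Q := by rw [hMdef, ← hBdef, hQB]
    rw [this, hMdef, htr]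
  have htr4 := congrArg Matrix.trace hM4
  simp only [Matrix.trace_add] at htr4
  have hPMPtr : (P * M * P).trace = 0 := by
    rw [hPMQ0, hQMP0, hQMQtr] at htr4
    linear_combination -htr4
  have hPMP_psd : (P * M * P).PosSemidef := by
    have h' := hMpsd.mul_mul_conjTranspose_same P; rwa [hP.eq] at h'
  have hPMP0 : P * M * P = 0 := psd_trace_eq_zero hPMP_psd hPMPtr
  have hmp := psd_conj_eq_zero hMpsd hP hPMP0
  have hPMQ : P * M * Q = 0 := by
    rw [Matrix.mul_assoc, ← Matrix.mul_assoc P M Q]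
    rw [hmp.2]
    simp
  have hQMP : Q * M * P = 0 := by
    rw [Matrix.mul_assoc, hmp.1, Matrix.mul_zero]
  have : M = Q * M * Q := by
    conv_lhs => rw [hM4]
    rw [hPMP0, hPMQ, hQMP]
    simp
  show M = Q * η * Q
  rw [this, hMdef, ← hBdef, hQB]


end Stmt15Aux

/-- Let `Φ` be a positive trace-preserving map with invariant state `η`, and
let `𝒱` (range of the orthogonal projection `P`) be an enclosure. Then
`η_𝒲 = (1-P) η (1-P)` is again invariant, and the support of `η_𝒲` (the
support of `η` intersected with `𝒱^⊥`) is also an enclosure. -/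
theorem stmt15 {n : ℕ}
    (Φ : Matrix (Fin n) (Fin n) ℂ →ₗ[ℂ] Matrix (Fin n) (Fin n) ℂ)
    (hpos : ∀ ρ, ρ.PosSemidef → (Φ ρ).PosSemidef)
    (htr : ∀ ρ, (Φ ρ).trace = ρ.trace)
    (η : Matrix (Fin n) (Fin n) ℂ) (hη : η.PosSemidef) (hηt : η.trace = 1)
    (hηinv : Φ η = η)
    (P : Matrix (Fin n) (Fin n) ℂ) (hP : P.IsHermitian) (hP2 : P * P = P)
    (hencl : ∀ ρ, ρ.PosSemidef → P * ρ * P = ρ → P * Φ ρ * P = Φ ρ) :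
    Φ ((1 - P) * η * (1 - P)) = (1 - P) * η * (1 - P) ∧
    (∀ ρ : Matrix (Fin n) (Fin n) ℂ, ρ.PosSemidef →
      LinearMap.range (Matrix.toLin' ρ) ≤
        LinearMap.range (Matrix.toLin' ((1 - P) * η * (1 - P))) →
      LinearMap.range (Matrix.toLin' (Φ ρ)) ≤
        LinearMap.range (Matrix.toLin' ((1 - P) * η * (1 - P)))) := by
  have hinv := Stmt15Aux.invariant_complement Φ hpos htr η hη hηinv P hP hP2 hencl
  refine ⟨hinv, ?_⟩
  intro ρ hρ hr
  have hQherm : (1 - P)ᴴ = 1 - P := by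
    rw [Matrix.conjTranspose_sub, Matrix.conjTranspose_one, hP.eq]
  have hWpsd : ((1 - P) * η * (1 - P)).PosSemidef := by
    have h' := hη.mul_mul_conjTranspose_same (1 - P)
    rwa [hQherm] at h'
  exact Stmt15Aux.support_enclosure Φ hpos hWpsd hinv ρ hρ hr
end
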